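/- arXiv:1809.09316 — 8 statements merged into one kernel-verified Lean document; each statement's English description precedes it below -/
import Mathlib

section
/- Let R be a commutative ring and let s_1,...,s_k be a permutable weak regular sequence in R (i.e., every permutation of it is a weak regular sequence). If I is an ideal of R generated by finitely many monomials in s_2,...,s_k (products of powers of s_2,...,s_k), then for any t in R, t·s_1 ∈ I implies t ∈ I. -/
/-- The `s`-monomial with exponent vector `α`: `∏ j, s j ^ α j`. -/
def sMon {R : Type*} [CommRing R] {k : ℕ} (s : Fin k → R) (α : Fin k → ℕ) : R :=
  ∏ j, s j ^ α j

/-- `s` is a weak regular sequence: each `s i` is a nonzerodivisor modulo the ideal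
generated by the preceding terms. -/
def IsWeakRegSeq {R : Type*} [CommRing R] {k : ℕ} (s : Fin k → R) : Prop :=
  ∀ i : Fin k, ∀ t : R,
    t * s i ∈ Ideal.span (s '' {j | j < i}) → t ∈ Ideal.span (s '' {j | j < i})

/-- `s` is a permutable weak regular sequence: every permutation of it is a weak
regular sequence. -/
def IsPermWeakRegSeq {R : Type*} [CommRing R] {k : ℕ} (s : Fin k → R) : Prop :=
  ∀ σ : Equiv.Perm (Fin k), IsWeakRegSeq (s ∘ σ)

namespace StmtAux

variable {R : Type*} [CommRing R] {k : ℕ}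

/-- elementary exponent vector -/
def eVec {n : ℕ} (i : Fin n) : Fin n → ℕ := fun m => if m = i then 1 else 0

/-- decrement exponent at `j` -/
def decAt {n : ℕ} (j : Fin n) (α : Fin n → ℕ) : Fin n → ℕ :=
  fun m => if m = j then α j - 1 else α m

lemma sMon_eVec (s : Fin k → R) (i : Fin k) : sMon s (eVec i) = s i := by
  unfold sMon eVec
  rw [Fintype.prod_eq_single i (fun m hm => by simp [hm])]
  simp

lemma sMon_decAt (s : Fin k → R) {j : Fin k} {α : Fin k → ℕ} (h : α j ≠ 0) :
    sMon s α = s j * sMon s (decAt j α) := by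
  unfold sMon decAt
  rw [← Finset.mul_prod_erase Finset.univ _ (Finset.mem_univ j),
      ← Finset.mul_prod_erase Finset.univ (fun m => s m ^ (if m = j then α j - 1 else α m))
        (Finset.mem_univ j)]
  simp only [if_true]
  rw [← mul_assoc, ← pow_succ']
  have : α j - 1 + 1 = α j := Nat.succ_pred_eq_of_pos (Nat.pos_of_ne_zero h)
  rw [this]
  congr 1
  apply Finset.prod_congr rfl
  intro m hm
  rw [if_neg (Finset.mem_erase.mp hm).1]

lemma sum_decAt {j : Fin k} {α : Fin k → ℕ} (h : α j ≠ 0) :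
    (∑ m, decAt j α m) + 1 = ∑ m, α m := by
  rw [← Finset.add_sum_erase Finset.univ _ (Finset.mem_univ j),
      ← Finset.add_sum_erase Finset.univ α (Finset.mem_univ j)]
  have h1 : ∑ m ∈ Finset.univ.erase j, decAt j α m = ∑ m ∈ Finset.univ.erase j, α m := by
    apply Finset.sum_congr rfl
    intro m hm
    simp [decAt, (Finset.mem_erase.mp hm).1]
  rw [h1]
  simp only [decAt, if_true]
  omega

lemma sum_union_le {α : Type*} [DecidableEq α] (A B : Finset α) (f : α → ℕ) :
    ∑ x ∈ A ∪ B, f x ≤ ∑ x ∈ A, f x + ∑ x ∈ B, f x := by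
  rw [← Finset.union_sdiff_self_eq_union, Finset.sum_union Finset.sdiff_disjoint.symm]
  exact add_le_add le_rfl (Finset.sum_le_sum_of_subset (Finset.sdiff_subset))

lemma sum_image_le {α β : Type*} [DecidableEq α] [DecidableEq β] (A : Finset α) (f : α → β)
    (g : β → ℕ) : ∑ x ∈ A.image f, g x ≤ ∑ x ∈ A, g (f x) := by
  classical
  induction A using Finset.induction_on with
  | empty => simp
  | insert _ _ h ih =>
    rename_i a A'
    rw [Finset.image_insert, Finset.sum_insert h]
    calc ∑ x ∈ insert (f a) (A'.image f), g x ≤ g (f a) + ∑ x ∈ A'.image f, g x := by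
          rw [Finset.insert_eq]
          exact sum_union_le _ _ _ |>.trans (by simp)
      _ ≤ _ := add_le_add le_rfl ih

lemma span_factor (c : R) (G : Set R) :
    ∀ x ∈ Ideal.span ((c * ·) '' G), ∃ w ∈ Ideal.span G, x = c * w := by
  intro x hx
  induction hx using Submodule.span_induction with
  | mem x h =>
    obtain ⟨g, hg, rfl⟩ := h
    exact ⟨g, Ideal.subset_span hg, rfl⟩
  | zero => exact ⟨0, Submodule.zero_mem _, by ring⟩
  | add x y hx hy ihx ihy =>
    obtain ⟨w, hw, rfl⟩ := ihx
    obtain ⟨v, hv, rfl⟩ := ihy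
    exact ⟨w + v, Submodule.add_mem _ hw hv, by ring⟩
  | smul a x hx ihx =>
    obtain ⟨w, hw, rfl⟩ := ihx
    exact ⟨a * w, Ideal.mul_mem_left _ _ hw, by simp [smul_eq_mul]; ring⟩

lemma mul_mem_span (c : R) {G : Set R} {J : Ideal R} (h : ∀ g ∈ G, c * g ∈ J) {x : R}
    (hx : x ∈ Ideal.span G) : c * x ∈ J := by
  have : Ideal.span G ≤ Submodule.comap (LinearMap.lsmul R R c) J := by
    rw [Ideal.span_le]
    intro g hg
    simpa [LinearMap.lsmul] using h g hg
  simpa [LinearMap.lsmul] using this hx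

/-- Core permutation fact: for a permutable weak regular sequence, `s i` is a
nonzerodivisor modulo the ideal generated by `s '' S` for any `S` not containing `i`. -/
lemma reg_mod_subset (s : Fin (k + 1) → R) (hs : IsPermWeakRegSeq s) (i : Fin (k + 1))
    (S : Finset (Fin (k + 1))) (hiS : i ∉ S) (t : R)
    (ht : t * s i ∈ Ideal.span (s '' ↑S)) : t ∈ Ideal.span (s '' ↑S) := by
  classical
  set r := S.card with hr
  have hrn : r < k + 1 := by
    have : S ⊆ Finset.univ.erase i := fun a ha => Finset.mem_erase.mpr ⟨by rintro rfl; exact hiS ha, Finset.mem_univ a⟩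
    calc r ≤ (Finset.univ.erase i).card := Finset.card_le_card this
      _ < Finset.univ.card := Finset.card_erase_lt_of_mem (Finset.mem_univ i)
      _ = k + 1 := by simp
  set T : Finset (Fin (k+1)) := (insert i S)ᶜ with hT
  set L : List (Fin (k+1)) := S.sort (· ≤ ·) ++ i :: T.sort (· ≤ ·) with hL
  have hlen1 : (S.sort (· ≤ ·)).length = r := Finset.length_sort _
  have hTcard : T.card = k + 1 - (r + 1) := by
    rw [hT, Finset.card_compl, Finset.card_insert_of_notMem hiS]
    simp [r]
  have hLlen : L.length = k + 1 := by
    simp only [hL, List.length_append, List.length_cons, hlen1, Finset.length_sort, hTcard]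
    omega
  have hnodup : L.Nodup := by
    rw [hL, List.nodup_append]
    refine ⟨Finset.sort_nodup _ _, ?_, ?_⟩
    · rw [List.nodup_cons]
      refine ⟨fun h => ?_, Finset.sort_nodup _ _⟩
      have : i ∈ T := (Finset.mem_sort _).mp h
      rw [hT, Finset.mem_compl] at this
      exact this (Finset.mem_insert_self i S)
    · intro a ha b hb hab
      rw [← hab] at hb
      have haS : a ∈ S := (Finset.mem_sort _).mp ha
      rcases List.mem_cons.mp hb with rfl | hb'
      · exact hiS haS
      · have : a ∈ T := (Finset.mem_sort _).mp hb'
        rw [hT, Finset.mem_compl] at this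
        exact this (Finset.mem_insert_of_mem haS)
  have hinj : Function.Injective (fun j : Fin (k+1) => L.get (Fin.cast hLlen.symm j)) := by
    intro a b hab
    have := List.nodup_iff_injective_get.mp hnodup hab
    exact Fin.cast_injective _ this
  let σ : Equiv.Perm (Fin (k+1)) := Equiv.ofBijective _ (Finite.injective_iff_bijective.mp hinj)
  have hσ : ∀ j : Fin (k+1), σ j = L.get (Fin.cast hLlen.symm j) := fun j => rfl
  set ρ : Fin (k+1) := ⟨r, hrn⟩ with hρ
  have hσρ : σ ρ = i := by
    rw [hσ]
    show L.get ⟨r, _⟩ = i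
    rw [List.get_eq_getElem]
    rw [List.getElem_append_right (by rw [hlen1])]
    simp [hlen1]
  have hlt : ∀ j : Fin (k+1), j < ρ → σ j ∈ S := by
    intro j hj
    rw [hσ]
    show L.get ⟨(j : ℕ), _⟩ ∈ S
    rw [List.get_eq_getElem]
    have hjr : (j : ℕ) < (S.sort (· ≤ ·)).length := by rw [hlen1]; exact hj
    rw [List.getElem_append_left hjr]
    exact (Finset.mem_sort _).mp (List.getElem_mem _)
  have hsurj : ∀ a ∈ S, ∃ j : Fin (k+1), j < ρ ∧ σ j = a := by
    intro a ha
    have : a ∈ S.sort (· ≤ ·) := (Finset.mem_sort _).mpr ha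
    obtain ⟨m, hm⟩ := List.mem_iff_get.mp this
    have hmr : (m : ℕ) < r := by rw [← hlen1]; exact m.2
    refine ⟨⟨(m:ℕ), lt_trans hmr hrn⟩, hmr, ?_⟩
    rw [hσ]
    show L.get ⟨(m : ℕ), _⟩ = a
    rw [List.get_eq_getElem, List.getElem_append_left m.2]
    rw [← hm, List.get_eq_getElem]
  have himg : (s ∘ σ) '' {j | j < ρ} = s '' ↑S := by
    ext x
    constructor
    · rintro ⟨j, hj, rfl⟩
      exact ⟨σ j, hlt j hj, rfl⟩
    · rintro ⟨a, ha, rfl⟩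
      obtain ⟨j, hj, rfl⟩ := hsurj a ha
      exact ⟨j, hj, rfl⟩
  have := hs σ ρ t
  rw [himg] at this
  apply this
  rw [Function.comp_apply, hσρ]
  exact ht

/-- Main lemma, by strong induction on the total degree of the generating monomials. -/
lemma key (s : Fin (k+1) → R) (hs : IsPermWeakRegSeq s) :
    ∀ D : ℕ, ∀ i : Fin (k+1), ∀ F : Finset (Fin (k+1) → ℕ),
      (∀ α ∈ F, α i = 0) → (∑ α ∈ F, ∑ m, α m) ≤ D →
      ∀ t : R, t * s i ∈ Ideal.span (sMon s '' ↑F) → t ∈ Ideal.span (sMon s '' ↑F) := by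
  intro D
  induction D using Nat.strong_induction_on with
  | _ D IH =>
  intro i F hFi hD t ht
  classical
  by_cases h2 : ∃ α ∈ F, 2 ≤ ∑ m, α m
  · obtain ⟨α0, hα0F, hα0d⟩ := h2
    have hex : ∃ j, α0 j ≠ 0 := by
      by_contra h
      push_neg at h
      simp only [h, Finset.sum_const_zero] at hα0d
      exact absurd hα0d (by decide)
    obtain ⟨j, hj⟩ := hex
    have hji : j ≠ i := fun h => hj (h ▸ hFi α0 hα0F)
    set A := F.filter (fun α => ¬ α j = 0) with hA
    set B := F.filter (fun α => ¬ ¬ α j = 0) with hB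
    have hAB : A ∪ B = F := Finset.filter_union_filter_not_eq _ F
    have hα0A : α0 ∈ A := Finset.mem_filter.mpr ⟨hα0F, hj⟩
    have hDA2 : 2 ≤ ∑ α ∈ A, ∑ m, α m :=
      le_trans hα0d (Finset.single_le_sum (fun _ _ => Nat.zero_le _) hα0A)
    have hsplit : (∑ α ∈ A, ∑ m, α m) + (∑ α ∈ B, ∑ m, α m) = ∑ α ∈ F, ∑ m, α m :=
      Finset.sum_filter_add_sum_filter_not F _ _
    -- decompose t * s i
    have htAB : t * s i ∈ Ideal.span (sMon s '' ↑A) ⊔ Ideal.span (sMon s '' ↑B) := by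
      rw [← Ideal.span_union, ← Set.image_union, ← Finset.coe_union, hAB]
      exact ht
    obtain ⟨x, hx, y, hy, hxy⟩ := Submodule.mem_sup.mp htAB
    -- factor x = s j * w
    have himA : sMon s '' ↑A = (s j * ·) '' (sMon s '' ↑(A.image (decAt j))) := by
      rw [Finset.coe_image, ← Set.image_comp, ← Set.image_comp]
      exact Set.image_congr fun α hα => sMon_decAt s (Finset.mem_filter.mp hα).2
    rw [himA] at hx
    obtain ⟨w, hw, hxw⟩ := span_factor (s j) _ x hx
    -- w * s j lies in the ideal generated by s i and the B-monomials
    have hsiF : s i ∈ sMon s '' ↑(insert (eVec i) B) :=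
      ⟨eVec i, by simp, sMon_eVec s i⟩
    have hwsj : w * s j ∈ Ideal.span (sMon s '' ↑(insert (eVec i) B)) := by
      have h1 : w * s j = t * s i - y := by linear_combination hxy - hxw
      rw [h1]
      refine Submodule.sub_mem _ (Ideal.mul_mem_left _ t (Ideal.subset_span hsiF)) ?_
      exact Ideal.span_mono (Set.image_mono (by simp [Finset.coe_subset, Finset.subset_insert])) hy
    -- coordinates and measure for the first recursive call
    have hco1 : ∀ β ∈ insert (eVec i) B, β j = 0 := by
      intro β hβ
      rcases Finset.mem_insert.mp hβ with rfl | hβ'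
      · simp [eVec, hji]
      · exact not_not.mp (Finset.mem_filter.mp hβ').2
    have hm1 : (∑ α ∈ insert (eVec i) B, ∑ m, α m) < D := by
      have h1 : (∑ α ∈ insert (eVec i) B, ∑ m, α m) ≤ (∑ m, eVec i m) + ∑ α ∈ B, ∑ m, α m := by
        rw [Finset.insert_eq]
        exact (sum_union_le _ _ _).trans (by simp)
      have h2 : (∑ m, eVec i m) = 1 := by
        simp [eVec, Finset.sum_ite_eq']
      calc (∑ α ∈ insert (eVec i) B, ∑ m, α m) ≤ 1 + ∑ α ∈ B, ∑ m, α m := by rw [h2] at h1; exact h1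
        _ < (∑ α ∈ A, ∑ m, α m) + ∑ α ∈ B, ∑ m, α m := Nat.add_lt_add_right hDA2 _
        _ = ∑ α ∈ F, ∑ m, α m := hsplit
        _ ≤ D := hD
    have hw2 : w ∈ Ideal.span (sMon s '' ↑(insert (eVec i) B)) :=
      IH _ hm1 j (insert (eVec i) B) hco1 le_rfl w hwsj
    -- split w = d * s i + b''
    have hw3 : w ∈ Ideal.span {s i} ⊔ Ideal.span (sMon s '' ↑B) := by
      rw [Finset.coe_insert, Set.image_insert_eq, sMon_eVec, Ideal.span_insert] at hw2
      exact hw2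
    obtain ⟨u, hu, b'', hb'', hub⟩ := Submodule.mem_sup.mp hw3
    obtain ⟨d, hd⟩ := Ideal.mem_span_singleton'.mp hu
    -- second recursive call : d ∈ span of (A.image dec ∪ B) monomials
    have hdsi : d * s i ∈ Ideal.span (sMon s '' ↑(A.image (decAt j) ∪ B)) := by
      have h1 : d * s i = w - b'' := by linear_combination hub + hd
      rw [h1]
      refine Submodule.sub_mem _ ?_ ?_
      · exact Ideal.span_mono (Set.image_mono (by rw [Finset.coe_union]; exact Set.subset_union_left)) hw
      · exact Ideal.span_mono (Set.image_mono (by rw [Finset.coe_union]; exact Set.subset_union_right)) hb''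
    have hco2 : ∀ γ ∈ A.image (decAt j) ∪ B, γ i = 0 := by
      intro γ hγ
      rcases Finset.mem_union.mp hγ with hγ' | hγ'
      · obtain ⟨α, hα, rfl⟩ := Finset.mem_image.mp hγ'
        have : α i = 0 := hFi α (Finset.mem_filter.mp hα).1
        simp [decAt, Ne.symm hji, this]
      · exact hFi γ (Finset.mem_filter.mp hγ').1
    have hm2 : (∑ α ∈ A.image (decAt j) ∪ B, ∑ m, α m) < D := by
      have h1 : (∑ α ∈ A.image (decAt j) ∪ B, ∑ m, α m) ≤
          (∑ α ∈ A.image (decAt j), ∑ m, α m) + ∑ α ∈ B, ∑ m, α m := sum_union_le _ _ _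
      have h2 : (∑ α ∈ A.image (decAt j), ∑ m, α m) ≤ ∑ α ∈ A, ∑ m, decAt j α m :=
        sum_image_le _ _ _
      have h3 : (∑ α ∈ A, ∑ m, decAt j α m) + A.card = ∑ α ∈ A, ∑ m, α m := by
        rw [Finset.card_eq_sum_ones, ← Finset.sum_add_distrib]
        exact Finset.sum_congr rfl fun α hα => sum_decAt (Finset.mem_filter.mp hα).2
      have hcard : 1 ≤ A.card := Finset.card_pos.mpr ⟨α0, hα0A⟩
      calc (∑ α ∈ A.image (decAt j) ∪ B, ∑ m, α m)
          ≤ (∑ α ∈ A, ∑ m, decAt j α m) + ∑ α ∈ B, ∑ m, α m :=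
            le_trans h1 (Nat.add_le_add_right h2 _)
        _ < ((∑ α ∈ A, ∑ m, decAt j α m) + A.card) + ∑ α ∈ B, ∑ m, α m :=
            Nat.add_lt_add_right (Nat.lt_add_of_pos_right hcard) _
        _ = (∑ α ∈ A, ∑ m, α m) + ∑ α ∈ B, ∑ m, α m := by rw [h3]
        _ = ∑ α ∈ F, ∑ m, α m := hsplit
        _ ≤ D := hD
    have hd2 : d ∈ Ideal.span (sMon s '' ↑(A.image (decAt j) ∪ B)) :=
      IH _ hm2 i (A.image (decAt j) ∪ B) hco2 le_rfl d hdsi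
    -- s j * d ∈ span F
    have hdsj : s j * d ∈ Ideal.span (sMon s '' ↑F) := by
      refine mul_mem_span (s j) ?_ hd2
      rintro g ⟨γ, hγ, rfl⟩
      rw [Finset.coe_union, Finset.coe_image] at hγ
      rcases hγ with hγ' | hγ'
      · obtain ⟨α, hα, rfl⟩ := hγ'
        rw [← sMon_decAt s (Finset.mem_filter.mp hα).2]
        exact Ideal.subset_span ⟨α, by rw [← hAB]; exact Finset.mem_union_left _ hα, rfl⟩
      · exact Ideal.mul_mem_left _ _ (Ideal.subset_span
          ⟨γ, by rw [← hAB]; exact Finset.mem_union_right _ hγ', rfl⟩)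
    -- third recursive call
    have hrem : (t - d * s j) * s i ∈ Ideal.span (sMon s '' ↑B) := by
      have h1 : (t - d * s j) * s i = s j * b'' + y := by
        linear_combination -hxy + hxw - s j * hub - s j * hd
      rw [h1]
      exact Submodule.add_mem _ (Ideal.mul_mem_left _ _ hb'') hy
    have hco3 : ∀ β ∈ B, β i = 0 := fun β hβ => hFi β (Finset.mem_filter.mp hβ).1
    have hm3 : (∑ α ∈ B, ∑ m, α m) < D := by
      calc (∑ α ∈ B, ∑ m, α m) < (∑ α ∈ A, ∑ m, α m) + ∑ α ∈ B, ∑ m, α m :=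
            Nat.lt_add_of_pos_left (lt_of_lt_of_le (by norm_num) hDA2)
        _ = ∑ α ∈ F, ∑ m, α m := hsplit
        _ ≤ D := hD
    have ht3 : t - d * s j ∈ Ideal.span (sMon s '' ↑B) := IH _ hm3 i B hco3 le_rfl _ hrem
    have ht4 : t - d * s j ∈ Ideal.span (sMon s '' ↑F) := by
      refine Ideal.span_mono (Set.image_mono ?_) ht3
      rw [← hAB, Finset.coe_union]
      exact Set.subset_union_right
    rw [mul_comm] at hdsj
    have := Submodule.add_mem _ ht4 hdsj
    simpa using this
  · by_cases h0 : ∃ α ∈ F, ∀ m, α m = 0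
    · obtain ⟨α0, hα0F, hz⟩ := h0
      have h1 : sMon s α0 = 1 := by simp [sMon, hz]
      have : (1 : R) ∈ Ideal.span (sMon s '' ↑F) := Ideal.subset_span ⟨α0, hα0F, h1⟩
      exact (Ideal.eq_top_iff_one _).mpr this ▸ Submodule.mem_top
    · push_neg at h2 h0
      have hform : ∀ α ∈ F, ∃ j, j ≠ i ∧ α = eVec j := by
        intro α hα
        obtain ⟨m0, hm0⟩ := h0 α hα
        have hdeg : ∑ m, α m = 1 := by
          have hle : ∑ m, α m < 2 := h2 α hα
          have hge : 1 ≤ ∑ m, α m :=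
            le_trans (Nat.one_le_iff_ne_zero.mpr hm0)
              (Finset.single_le_sum (f := α) (fun _ _ => Nat.zero_le _) (Finset.mem_univ m0))
          exact le_antisymm (Nat.lt_succ_iff.mp hle) hge
        have hm0' : α m0 = 1 ∧ ∀ m, m ≠ m0 → α m = 0 := by
          have h4 : α m0 + ∑ m ∈ Finset.univ.erase m0, α m = 1 := by
            rw [Finset.add_sum_erase _ _ (Finset.mem_univ m0)]; exact hdeg
          have h5 : α m0 = 1 :=
            le_antisymm (Nat.le.intro h4) (Nat.one_le_iff_ne_zero.mpr hm0)
          have h6 : ∑ m ∈ Finset.univ.erase m0, α m = 0 := by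
            rw [h5] at h4
            exact Nat.add_left_cancel (h4.trans (Nat.add_zero 1).symm)
          refine ⟨h5, fun m hm => ?_⟩
          exact (Finset.sum_eq_zero_iff.mp h6) m (Finset.mem_erase.mpr ⟨hm, Finset.mem_univ m⟩)
        have hαe : α = eVec m0 := by
          funext m
          by_cases hmm : m = m0
          · subst hmm; simp [eVec, hm0'.1]
          · simp [eVec, hmm, hm0'.2 m hmm]
        refine ⟨m0, fun h => ?_, hαe⟩
        · exact hm0 (h ▸ hFi α hα)
      set S : Finset (Fin (k+1)) := F.biUnion (fun α => Finset.univ.filter (fun m => ¬ α m = 0))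
        with hS
      have hiS : i ∉ S := by
        intro h
        obtain ⟨α, hα, hα'⟩ := Finset.mem_biUnion.mp h
        exact (Finset.mem_filter.mp hα').2 (hFi α hα)
      have himg : sMon s '' ↑F = s '' ↑S := by
        ext z
        constructor
        · rintro ⟨α, hα, rfl⟩
          obtain ⟨m0, hm0i, rfl⟩ := hform α hα
          refine ⟨m0, ?_, (sMon_eVec s m0).symm ▸ rfl⟩
          refine Finset.mem_coe.mpr (Finset.mem_biUnion.mpr ⟨eVec m0, hα, ?_⟩)
          exact Finset.mem_filter.mpr ⟨Finset.mem_univ _, by simp [eVec]⟩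
        · rintro ⟨m, hm, rfl⟩
          obtain ⟨α, hα, hα'⟩ := Finset.mem_biUnion.mp (Finset.mem_coe.mp hm)
          obtain ⟨m0, hm0i, rfl⟩ := hform α hα
          have : m = m0 := by
            by_contra hc
            exact (Finset.mem_filter.mp hα').2 (by simp [eVec, hc])
          subst this
          exact ⟨eVec m, hα, sMon_eVec s m⟩
      rw [himg] at ht ⊢
      exact reg_mod_subset s hs i S hiS t ht

end StmtAux

/-- If `I` is generated by finitely many monomials in `s 1, …, s k` (i.e. `s`-monomials whose
exponent of `s 0` is zero), then `t * s 0 ∈ I` implies `t ∈ I`. -/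
theorem stmt0 {R : Type*} [CommRing R] {k : ℕ} (s : Fin (k + 1) → R)
    (hs : IsPermWeakRegSeq s) (F : Finset (Fin (k + 1) → ℕ))
    (hF : ∀ α ∈ F, α 0 = 0) (t : R)
    (ht : t * s 0 ∈ Ideal.span (sMon s '' ↑F)) :
    t ∈ Ideal.span (sMon s '' ↑F) := by
  exact StmtAux.key s hs _ 0 F hF le_rfl t ht
end

section
/- Let R be a commutative ring with a fixed permutable weak regular sequence s_1,...,s_k, and let f, f_1, ..., f_m be monomials in s_1,...,s_k. If a·f = a_1·f_1 + ... + a_m·f_m for some a, a_1,...,a_m ∈ R, then a lies in the ideal generated by g_1,...,g_m, where g_i = f_i / gcd(f_i, f) (equivalently lcm(f_i,f)/f), the gcd and lcm being computed via componentwise min and max of exponent vectors. -/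
lemma sMon_eq_mul {R : Type*} [CommRing R] {k : ℕ} (s : Fin k → R) {α γ δ : Fin k → ℕ}
    (h : ∀ l, α l = γ l + δ l) : sMon s α = sMon s γ * sMon s δ := by
  unfold sMon
  rw [← Finset.prod_mul_distrib]
  exact Finset.prod_congr rfl fun l _ => by rw [h l, pow_add]

lemma sMon_single {R : Type*} [CommRing R] {k : ℕ} (s : Fin k → R) (j : Fin k) :
    sMon s (fun l => if l = j then 1 else 0) = s j := by
  unfold sMon
  rw [Finset.prod_eq_single j (fun b _ hb => by simp [hb]) (by simp)]
  simp

lemma optSum {γ : Type*} [Fintype γ] {M : Type*} [AddCommMonoid M] (f : Option γ → M) :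
    ∑ o, f o = f none + ∑ i, f (some i) := by
  rw [univ_option, Finset.sum_insertNone]

-- permutation lemma
lemma span_prefix_reg {R : Type*} [CommRing R] {k : ℕ} {s : Fin k → R}
    (hs : IsPermWeakRegSeq s) (T : Finset (Fin k)) (j : Fin k) (hj : j ∉ T)
    (t : R) (h : t * s j ∈ Ideal.span (s '' ↑T)) : t ∈ Ideal.span (s '' ↑T) := by
  classical
  set r := T.card with hr
  have hcardT' : (insert j T).card = r + 1 := Finset.card_insert_of_notMem hj
  have hrk : r < k := by
    have h1 := Finset.card_le_univ (insert j T)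
    rw [hcardT', Fintype.card_fin] at h1
    omega
  set i₀ : Fin k := ⟨r, hrk⟩ with hi₀
  have hq : Fintype.card {x : Fin k // x ≤ i₀} = r + 1 := by
    rw [Fintype.card_subtype]
    have h2 : (Finset.univ.filter (fun x : Fin k => x ≤ i₀)) = Finset.Iic i₀ := by
      ext x; simp
    rw [h2, Fin.card_Iic]
  have hp : Fintype.card {x : Fin k // x ∈ insert j T} = r + 1 :=
    (Fintype.card_coe (insert j T)).trans hcardT'
  have e : {x : Fin k // x ∈ insert j T} ≃ {x : Fin k // x ≤ i₀} :=
    Fintype.equivOfCardEq (hp.trans hq.symm)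
  set σ₁ := e.extendSubtype with hσ₁
  set σ : Equiv.Perm (Fin k) := (Equiv.swap (σ₁ j) i₀).trans σ₁.symm with hσ
  have hw : σ₁ j ≤ i₀ := e.extendSubtype_mem j (Finset.mem_insert_self j T)
  have hsymm : ∀ y, σ.symm y = Equiv.swap (σ₁ j) i₀ (σ₁ y) := by
    intro y
    simp [hσ, Equiv.symm_trans_apply]
  have key : ∀ y : Fin k, σ.symm y < i₀ ↔ y ∈ T := by
    intro y
    by_cases hyj : y = j
    · subst hyj
      rw [hsymm, Equiv.swap_apply_left]
      simp [hj]
    · by_cases hyT : y ∈ T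
      · have hyT' : y ∈ insert j T := Finset.mem_insert_of_mem hyT
        have h1 : σ₁ y ≤ i₀ := e.extendSubtype_mem y hyT'
        have hne : σ₁ y ≠ σ₁ j := fun hh => hyj (σ₁.injective hh)
        rw [hsymm]
        by_cases h2 : σ₁ y = i₀
        · rw [h2, Equiv.swap_apply_right]
          simp only [hyT, iff_true]
          exact lt_of_le_of_ne hw (fun hh => hne (h2.trans hh.symm))
        · rw [Equiv.swap_apply_of_ne_of_ne hne h2]
          simp only [hyT, iff_true]
          exact lt_of_le_of_ne h1 h2
      · have hyT' : y ∉ insert j T := by simp [hyj, hyT]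
        have h1 : ¬ (σ₁ y ≤ i₀) := e.extendSubtype_not_mem y hyT'
        have hne : σ₁ y ≠ σ₁ j := fun hh => hyj (σ₁.injective hh)
        have h2 : σ₁ y ≠ i₀ := fun hh => h1 (le_of_eq hh)
        rw [hsymm, Equiv.swap_apply_of_ne_of_ne hne h2]
        simp only [hyT, iff_false]
        exact fun hh => h1 (le_of_lt hh)
  have himg : σ '' {p : Fin k | p < i₀} = ↑T := by
    rw [Equiv.image_eq_preimage_symm]
    ext y
    simpa using key y
  have hji : σ i₀ = j := by
    rw [hσ]
    simp [Equiv.swap_apply_right]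
  have h2 := hs σ i₀ t
  rw [Function.comp_apply, hji, Set.image_comp, himg] at h2
  exact h2 h

theorem main_aux {R : Type*} [CommRing R] {k : ℕ} {s : Fin k → R} (hs : IsPermWeakRegSeq s) :
    ∀ (N : ℕ) (ι : Type) [Fintype ι] (α : Fin k → ℕ) (β : ι → Fin k → ℕ)
      (a : R) (c : ι → R),
      (∑ l, α l) + (∑ i, ∑ l, β i l) ≤ N →
      a * sMon s α = ∑ i, c i * sMon s (β i) →
      a ∈ Ideal.span (Set.range fun i => sMon s fun l => β i l - min (β i l) (α l)) := by
  intro N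
  induction N using Nat.strong_induction_on with
  | _ N IH =>
  intro ι _ α β a c hN h
  classical
  by_cases hα0 : ∀ l, α l = 0
  · -- CASE α = 0
    have hmon : sMon s α = 1 :=
      Finset.prod_eq_one fun l _ => by rw [hα0 l, pow_zero]
    have hgoalfun : (fun i => sMon s fun l => β i l - min (β i l) (α l))
        = fun i => sMon s (β i) := by
      funext i; congr 1; funext l; rw [hα0 l]; omega
    rw [hgoalfun]
    rw [hmon, mul_one] at h
    rw [h]
    exact Ideal.sum_mem _ fun i _ => Ideal.mul_mem_left _ _ (Ideal.subset_span ⟨i, rfl⟩)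
  · push_neg at hα0
    obtain ⟨j, hj⟩ := hα0
    have hαj : 1 ≤ α j := Nat.one_le_iff_ne_zero.mpr hj
    set ej : Fin k → ℕ := fun l => if l = j then 1 else 0 with hej
    have hsum_ej : ∑ l, ej l = 1 := by simp [hej]
    have hsMon_ej : sMon s ej = s j := sMon_single s j
    set α' : Fin k → ℕ := fun l => α l - ej l with hα'
    have hαsplit : ∀ l, α l = ej l + α' l := by
      intro l
      by_cases hl : l = j
      · rw [hl]; simp [hej, hα']; omega
      · simp [hej, hα', hl]
    have hsplitMon : sMon s α = s j * sMon s α' := by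
      rw [sMon_eq_mul s hαsplit, hsMon_ej]
    have hαsum : 1 ≤ ∑ l, α l :=
      le_trans hαj (Finset.single_le_sum (fun _ _ => Nat.zero_le _) (Finset.mem_univ j))
    by_cases hA : ∃ i₀, 1 ≤ β i₀ j
    · -- CASE 2
      obtain ⟨i₀, hi₀⟩ := hA
      set β' : ι → Fin k → ℕ := fun i l => β i l - ej l with hβ'
      have hβsplit : ∀ i, 1 ≤ β i j → ∀ l, β i l = ej l + β' i l := by
        intro i hi l
        by_cases hl : l = j
        · rw [hl]; simp [hej, hβ']; omega
        · simp [hej, hβ', hl]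
      have hβeq : ∀ i, β i j = 0 → β' i = β i := by
        intro i hi
        funext l
        by_cases hl : l = j
        · rw [hl]; simp [hβ', hej, hi]
        · simp [hβ', hej, hl]
      set P : ι → Prop := fun i => β i j = 0 with hP
      set wA : R := ∑ i ∈ Finset.univ.filter (fun i => ¬ P i), c i * sMon s (β' i) with hwA
      set u : R := a * sMon s α' - wA with hu
      have hwAmul : ∑ i ∈ Finset.univ.filter (fun i => ¬ P i), c i * sMon s (β i)
          = wA * s j := by
        rw [hwA, Finset.sum_mul]
        refine Finset.sum_congr rfl fun i hi => ?_
        have hpi : ¬ P i := (Finset.mem_filter.mp hi).2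
        have hb : 1 ≤ β i j := by simp only [hP] at hpi; omega
        rw [sMon_eq_mul s (hβsplit i hb), hsMon_ej]; ring
      have hequ : u * sMon s ej = ∑ i : {i : ι // P i}, c i.1 * sMon s (β i.1) := by
        rw [hsMon_ej]
        have hsplit := Finset.sum_filter_add_sum_filter_not Finset.univ P
          (fun i => c i * sMon s (β i))
        have husj : u * s j = ∑ i ∈ Finset.univ.filter P, c i * sMon s (β i) := by
          have hh : a * (s j * sMon s α') = ∑ i, c i * sMon s (β i) := by
            rw [← hsplitMon, h]
          calc u * s j = a * (s j * sMon s α') - wA * s j := by rw [hu]; ring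
            _ = (∑ i ∈ Finset.univ.filter P, c i * sMon s (β i)
                + ∑ i ∈ Finset.univ.filter (fun i => ¬ P i), c i * sMon s (β i))
                - wA * s j := by rw [hh, ← hsplit]
            _ = ∑ i ∈ Finset.univ.filter P, c i * sMon s (β i) := by rw [hwAmul]; ring
        rw [husj]
        exact Finset.sum_subtype _ (fun x => by simp [hP]) _
      have hβi₀sum : 1 ≤ ∑ l, β i₀ l :=
        le_trans hi₀ (Finset.single_le_sum (fun _ _ => Nat.zero_le _) (Finset.mem_univ j))
      have hsplitS : (∑ i ∈ Finset.univ.filter P, ∑ l, β i l)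
          + (∑ i ∈ Finset.univ.filter (fun i => ¬ P i), ∑ l, β i l)
          = ∑ i : ι, ∑ l, β i l :=
        Finset.sum_filter_add_sum_filter_not Finset.univ P _
      have hi₀mem : i₀ ∈ Finset.univ.filter (fun i => ¬ P i) := by
        simp only [Finset.mem_filter, Finset.mem_univ, true_and, hP]
        omega
      have hSA : 1 ≤ ∑ i ∈ Finset.univ.filter (fun i => ¬ P i), ∑ l, β i l :=
        le_trans hβi₀sum
          (Finset.single_le_sum (f := fun i => ∑ l, β i l) (fun _ _ => Nat.zero_le _) hi₀mem)
      have hSBval : ∑ i : {i : ι // P i}, ∑ l, β i.1 l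
          = ∑ i ∈ Finset.univ.filter P, ∑ l, β i l :=
        (Finset.sum_subtype (Finset.univ.filter P) (fun x => by simp)
          (fun i => ∑ l, β i l)).symm
      have hb1 : (∑ l, ej l) + ∑ i : {i : ι // P i}, ∑ l, β i.1 l ≤ N - 1 := by
        rw [hsum_ej, hSBval]; omega
      have h1 := IH (N - 1) (by omega) {i : ι // P i} ej (fun i => β i.1) u
        (fun i => c i.1) hb1 hequ
      have hfun1 : (fun i : {i : ι // P i} => sMon s fun l => β i.1 l - min (β i.1 l) (ej l))
          = fun i => sMon s (β i.1) := by
        funext i; congr 1; funext l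
        by_cases hl : l = j
        · have hpi : β i.1 j = 0 := i.2
          rw [hl, hpi]; simp
        · simp only [hej, if_neg hl]; omega
      rw [hfun1] at h1
      obtain ⟨d, hd⟩ := (Submodule.mem_span_range_iff_exists_fun R).mp h1
      simp only [smul_eq_mul] at hd
      set c'' : ι → R := fun i => if h : P i then d ⟨i, h⟩ else c i with hc''
      have heq2 : a * sMon s α' = ∑ i : ι, c'' i * sMon s (β' i) := by
        rw [← Finset.sum_filter_add_sum_filter_not Finset.univ P
          (fun i => c'' i * sMon s (β' i))]
        have e1 : ∑ i ∈ Finset.univ.filter P, c'' i * sMon s (β' i)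
            = ∑ i : {i : ι // P i}, d i * sMon s (β i.1) := by
          rw [Finset.sum_subtype (p := P) (Finset.univ.filter P) (fun x => by simp)
            (fun i => c'' i * sMon s (β' i))]
          refine Finset.sum_congr rfl fun i _ => ?_
          have hpi : P i.1 := i.2
          have h5 : c'' i.1 = d i := by
            simp only [hc'', dif_pos hpi]
          rw [h5, hβeq i.1 hpi]
        have e2 : ∑ i ∈ Finset.univ.filter (fun i => ¬ P i), c'' i * sMon s (β' i)
            = wA := by
          rw [hwA]
          refine Finset.sum_congr rfl fun i hi => ?_
          have hpi : ¬ P i := (Finset.mem_filter.mp hi).2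
          have h5 : c'' i = c i := by simp only [hc'', dif_neg hpi]
          rw [h5]
        rw [e1, e2, hd, hu]
        ring
      have hsum_α' : (∑ l, α' l) + 1 = ∑ l, α l := by
        have h3 : ∑ l, α l = ∑ l, (ej l + α' l) :=
          Finset.sum_congr rfl fun l _ => hαsplit l
        rw [h3, Finset.sum_add_distrib, hsum_ej]
        omega
      have hSS : ∑ i, ∑ l, β' i l ≤ ∑ i, ∑ l, β i l :=
        Finset.sum_le_sum fun i _ => Finset.sum_le_sum fun l _ => Nat.sub_le _ _
      have hb2 : (∑ l, α' l) + ∑ i, ∑ l, β' i l ≤ N - 1 := by omega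
      have h2 := IH (N - 1) (by omega) ι α' β' a c'' hb2 heq2
      have hfun2 : (fun i => sMon s fun l => β' i l - min (β' i l) (α' l))
          = fun i => sMon s fun l => β i l - min (β i l) (α l) := by
        funext i; congr 1; funext l
        by_cases hl : l = j
        · rw [hl]; simp [hβ', hα', hej]; omega
        · simp only [hβ', hα', hej, if_neg hl]; omega
      rw [hfun2] at h2
      exact h2
    · push_neg at hA
      have hB : ∀ i, β i j = 0 := fun i => by have := hA i; omega
      by_cases hα2 : 2 ≤ ∑ l, α l
      · -- CASE 3
        have heq : (a * sMon s α') * sMon s ej = ∑ i, c i * sMon s (β i) := by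
          rw [hsMon_ej]
          calc a * sMon s α' * s j = a * (s j * sMon s α') := by ring
            _ = ∑ i, c i * sMon s (β i) := by rw [← hsplitMon, h]
        have hb1 : (∑ l, ej l) + ∑ i, ∑ l, β i l ≤ N - 1 := by rw [hsum_ej]; omega
        have h1 := IH (N - 1) (by omega) ι ej β (a * sMon s α') c hb1 heq
        have hfun1 : (fun i => sMon s fun l => β i l - min (β i l) (ej l))
            = fun i => sMon s (β i) := by
          funext i; congr 1; funext l
          by_cases hl : l = j
          · rw [hl, hB i]; simp
          · simp only [hej, if_neg hl]; omega
        rw [hfun1] at h1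
        obtain ⟨c', hc'⟩ := (Submodule.mem_span_range_iff_exists_fun R).mp h1
        simp only [smul_eq_mul] at hc'
        have heq2 : a * sMon s α' = ∑ i, c' i * sMon s (β i) := hc'.symm
        have hsum_α' : (∑ l, α' l) + 1 = ∑ l, α l := by
          have h3 : ∑ l, α l = ∑ l, (ej l + α' l) :=
            Finset.sum_congr rfl fun l _ => hαsplit l
          rw [h3, Finset.sum_add_distrib, hsum_ej]
          omega
        have hb2 : (∑ l, α' l) + ∑ i, ∑ l, β i l ≤ N - 1 := by omega
        have h2 := IH (N - 1) (by omega) ι α' β a c' hb2 heq2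
        have hfun2 : (fun i => sMon s fun l => β i l - min (β i l) (α' l))
            = fun i => sMon s fun l => β i l - min (β i l) (α l) := by
          funext i; congr 1; funext l
          by_cases hl : l = j
          · rw [hl, hB i]; simp
          · have h4 : α' l = α l := by simp [hα', hej, hl]
            rw [h4]
        rw [hfun2] at h2
        exact h2
      · -- CASE 4: α = ej
        push_neg at hα2
        have hα1 : ∑ l, α l = 1 := by omega
        have hαej : ∀ l, α l = ej l := by
          intro l
          by_cases hl : l = j
          · rw [hl]; simp only [hej, if_pos rfl]
            have h2 : α j ≤ ∑ l, α l :=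
              Finset.single_le_sum (fun _ _ => Nat.zero_le _) (Finset.mem_univ j)
            omega
          · simp only [hej, if_neg hl]
            have h2 : α j + ∑ l ∈ Finset.univ.erase j, α l = ∑ l, α l :=
              Finset.add_sum_erase _ α (Finset.mem_univ j)
            have h3 : α l ≤ ∑ l ∈ Finset.univ.erase j, α l :=
              Finset.single_le_sum (fun _ _ => Nat.zero_le _)
                (Finset.mem_erase.mpr ⟨hl, Finset.mem_univ l⟩)
            omega
        have hsj : sMon s α = s j := by
          have : α = ej := funext hαej
          rw [this, hsMon_ej]
        have hgoal : (fun i => sMon s fun l => β i l - min (β i l) (α l))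
            = fun i => sMon s (β i) := by
          funext i; congr 1; funext l
          by_cases hl : l = j
          · rw [hl, hB i]; omega
          · rw [hαej l]; simp only [hej, if_neg hl]; omega
        rw [hgoal]
        by_cases h4a : ∃ i₀, ∑ l, β i₀ l = 0
        · -- CASE 4a
          obtain ⟨i₀, h0⟩ := h4a
          have hone : sMon s (β i₀) = 1 := by
            apply Finset.prod_eq_one
            intro l _
            have : β i₀ l = 0 := by
              have := Finset.single_le_sum (f := β i₀) (fun _ _ => Nat.zero_le _)
                (Finset.mem_univ l)
              omega
            rw [this, pow_zero]
          have h1 : (1 : R) ∈ Ideal.span (Set.range fun i => sMon s (β i)) :=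
            hone ▸ Ideal.subset_span ⟨i₀, rfl⟩
          have htop := (Ideal.eq_top_iff_one _).mpr h1
          rw [htop]; exact Submodule.mem_top
        · push_neg at h4a
          have hβ1 : ∀ i, 1 ≤ ∑ l, β i l := fun i => Nat.one_le_iff_ne_zero.mpr (h4a i)
          by_cases h4b : ∃ i₀, 2 ≤ ∑ l, β i₀ l
          · -- CASE 4b
            obtain ⟨i₀, hi₀2⟩ := h4b
            have hl₀ex : ∃ l₀, 1 ≤ β i₀ l₀ := by
              by_contra hh
              push_neg at hh
              have h0 : ∑ l, β i₀ l = 0 := Finset.sum_eq_zero fun l _ => by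
                have := hh l; omega
              omega
            obtain ⟨l₀, hl₀⟩ := hl₀ex
            have hl₀j : l₀ ≠ j := by
              intro hh
              rw [hh] at hl₀
              rw [hB i₀] at hl₀
              omega
            set el : Fin k → ℕ := fun l => if l = l₀ then 1 else 0 with hel
            have hsMon_el : sMon s el = s l₀ := sMon_single s l₀
            have hsum_el : ∑ l, el l = 1 := by simp [hel]
            have helj : el j = 0 := by
              simp only [hel]
              rw [if_neg (fun hh => hl₀j hh.symm)]
            set Q : ι → Prop := fun i => β i l₀ = 0 with hQ
            set β'' : ι → Fin k → ℕ := fun i l => β i l - el l with hβ''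
            have hQsplit : ∀ i, 1 ≤ β i l₀ → ∀ l, β i l = el l + β'' i l := by
              intro i hi l
              by_cases hl : l = l₀
              · rw [hl]; simp [hel, hβ'']; omega
              · simp [hel, hβ'', hl]
            have hQeq : ∀ i, Q i → β'' i = β i := by
              intro i hi
              funext l
              by_cases hl : l = l₀
              · simp only [hQ] at hi
                rw [hl]; simp [hβ'', hel, hi]
              · simp [hβ'', hel, hl]
            set wA : R := ∑ i ∈ Finset.univ.filter (fun i => ¬ Q i), c i * sMon s (β'' i)
              with hwA
            have hwAmul : ∑ i ∈ Finset.univ.filter (fun i => ¬ Q i), c i * sMon s (β i)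
                = wA * s l₀ := by
              rw [hwA, Finset.sum_mul]
              refine Finset.sum_congr rfl fun i hi => ?_
              have hqi : ¬ Q i := (Finset.mem_filter.mp hi).2
              have hb : 1 ≤ β i l₀ := by simp only [hQ] at hqi; omega
              rw [sMon_eq_mul s (hQsplit i hb), hsMon_el]; ring
            have hsplitsum : ∑ i : ι, c i * sMon s (β i)
                = wA * s l₀ + ∑ i : {i : ι // Q i}, c i.1 * sMon s (β i.1) := by
              rw [← Finset.sum_filter_add_sum_filter_not Finset.univ Q
                (fun i => c i * sMon s (β i)), hwAmul]
              rw [Finset.sum_subtype (p := Q) (Finset.univ.filter Q) (fun x => by simp)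
                (fun i => c i * sMon s (β i))]
              ring
            have heq1 : a * sMon s α = ∑ o : Option {i : ι // Q i},
                (Option.elim o wA fun i => c i.1) * sMon s (Option.elim o el fun i => β i.1) := by
              rw [h, hsplitsum, optSum (fun o : Option {i : ι // Q i} =>
                (Option.elim o wA fun i => c i.1) * sMon s (Option.elim o el fun i => β i.1))]
              simp only [Option.elim]
              rw [hsMon_el]
            have hSQsplit : (∑ i ∈ Finset.univ.filter Q, ∑ l, β i l)
                + (∑ i ∈ Finset.univ.filter (fun i => ¬ Q i), ∑ l, β i l)
                = ∑ i : ι, ∑ l, β i l :=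
              Finset.sum_filter_add_sum_filter_not Finset.univ Q _
            have hi₀mem : i₀ ∈ Finset.univ.filter (fun i => ¬ Q i) := by
              simp only [Finset.mem_filter, Finset.mem_univ, true_and, hQ]
              omega
            have hSA2 : 2 ≤ ∑ i ∈ Finset.univ.filter (fun i => ¬ Q i), ∑ l, β i l :=
              le_trans hi₀2
                (Finset.single_le_sum (f := fun i => ∑ l, β i l)
                  (fun _ _ => Nat.zero_le _) hi₀mem)
            have hSBval : ∑ i : {i : ι // Q i}, ∑ l, β i.1 l
                = ∑ i ∈ Finset.univ.filter Q, ∑ l, β i l :=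
              (Finset.sum_subtype (p := Q) (Finset.univ.filter Q) (fun x => by simp)
                (fun i => ∑ l, β i l)).symm
            have hsumδ : ∑ o : Option {i : ι // Q i}, ∑ l, (Option.elim o el fun i => β i.1) l
                = 1 + ∑ i : {i : ι // Q i}, ∑ l, β i.1 l := by
              rw [optSum (fun o : Option {i : ι // Q i} =>
                ∑ l, (Option.elim o el fun i => β i.1) l)]
              simp only [Option.elim]
              rw [hsum_el]
            have hb1 : (∑ l, α l)
                + ∑ o : Option {i : ι // Q i}, ∑ l, (Option.elim o el fun i => β i.1) l
                ≤ N - 1 := by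
              rw [hsumδ, hα1, hSBval]; omega
            have h1 := IH (N - 1) (by omega) (Option {i : ι // Q i}) α
              (fun o => Option.elim o el fun i => β i.1) a
              (fun o => Option.elim o wA fun i => c i.1) hb1 heq1
            have hfun1 : (fun o : Option {i : ι // Q i} => sMon s fun l =>
                  (Option.elim o el fun i => β i.1) l
                    - min ((Option.elim o el fun i => β i.1) l) (α l))
                = fun o => sMon s (Option.elim o el fun i => β i.1) := by
              funext o
              congr 1
              funext l
              have hz : (Option.elim o el fun i => β i.1) j = 0 := by
                cases o
                · exact helj
                · exact hB _
              by_cases hl : l = j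
              · rw [hl, hz]; simp
              · rw [hαej l]; simp only [hej, if_neg hl]; omega
            rw [hfun1] at h1
            obtain ⟨D, hD⟩ := (Submodule.mem_span_range_iff_exists_fun R).mp h1
            simp only [smul_eq_mul] at hD
            have ha : a = D none * sMon s el
                + ∑ i : {i : ι // Q i}, D (some i) * sMon s (β i.1) := by
              rw [← hD, optSum (fun o : Option {i : ι // Q i} =>
                D o * sMon s (Option.elim o el fun i => β i.1))]
              simp only [Option.elim]
            have heq2 : (D none * s j - wA) * sMon s el
                = ∑ i : {i : ι // Q i}, (c i.1 - D (some i) * s j) * sMon s (β i.1) := by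
              have h6 : a * s j
                  = wA * s l₀ + ∑ i : {i : ι // Q i}, c i.1 * sMon s (β i.1) := by
                calc a * s j = a * sMon s α := by rw [hsj]
                  _ = _ := by rw [h, hsplitsum]
              have h7 : a * s j = D none * s l₀ * s j
                  + ∑ i : {i : ι // Q i}, D (some i) * sMon s (β i.1) * s j := by
                rw [ha, hsMon_el, add_mul, Finset.sum_mul]
              have h8 : ∑ i : {i : ι // Q i}, (c i.1 - D (some i) * s j) * sMon s (β i.1)
                  = (∑ i : {i : ι // Q i}, c i.1 * sMon s (β i.1))
                    - ∑ i : {i : ι // Q i}, D (some i) * sMon s (β i.1) * s j := by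
                rw [← Finset.sum_sub_distrib]
                exact Finset.sum_congr rfl fun i _ => by ring
              rw [hsMon_el, h8]
              linear_combination h6 - h7
            have hb2 : (∑ l, el l) + ∑ i : {i : ι // Q i}, ∑ l, β i.1 l ≤ N - 1 := by
              rw [hsum_el, hSBval]; omega
            have h2 := IH (N - 1) (by omega) {i : ι // Q i} el (fun i => β i.1)
              (D none * s j - wA) (fun i => c i.1 - D (some i) * s j) hb2 heq2
            have hfun2 : (fun i : {i : ι // Q i} => sMon s fun l =>
                  β i.1 l - min (β i.1 l) (el l)) = fun i => sMon s (β i.1) := by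
              funext i; congr 1; funext l
              by_cases hl : l = l₀
              · have hqi : β i.1 l₀ = 0 := i.2
                rw [hl, hqi]; simp
              · simp only [hel, if_neg hl]; omega
            rw [hfun2] at h2
            obtain ⟨ec, hec⟩ := (Submodule.mem_span_range_iff_exists_fun R).mp h2
            simp only [smul_eq_mul] at hec
            set C' : ι → R := fun i => if hq : Q i then ec ⟨i, hq⟩ else c i with hC'
            have heq3 : (D none) * sMon s ej = ∑ i : ι, C' i * sMon s (β'' i) := by
              rw [hsMon_ej]
              rw [← Finset.sum_filter_add_sum_filter_not Finset.univ Q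
                (fun i => C' i * sMon s (β'' i))]
              have e1 : ∑ i ∈ Finset.univ.filter Q, C' i * sMon s (β'' i)
                  = ∑ i : {i : ι // Q i}, ec i * sMon s (β i.1) := by
                rw [Finset.sum_subtype (p := Q) (Finset.univ.filter Q) (fun x => by simp)
                  (fun i => C' i * sMon s (β'' i))]
                refine Finset.sum_congr rfl fun i _ => ?_
                have hqi : Q i.1 := i.2
                have h5 : C' i.1 = ec i := by simp only [hC', dif_pos hqi]
                rw [h5, hQeq i.1 hqi]
              have e2 : ∑ i ∈ Finset.univ.filter (fun i => ¬ Q i), C' i * sMon s (β'' i)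
                  = wA := by
                rw [hwA]
                refine Finset.sum_congr rfl fun i hi => ?_
                have hqi : ¬ Q i := (Finset.mem_filter.mp hi).2
                have h5 : C' i = c i := by simp only [hC', dif_neg hqi]
                rw [h5]
              rw [e1, e2, hec]
              ring
            have hlt : ∑ l, β'' i₀ l < ∑ l, β i₀ l := by
              refine Finset.sum_lt_sum (fun l _ => Nat.sub_le _ _) ⟨l₀, Finset.mem_univ _, ?_⟩
              simp [hβ'', hel]
              omega
            have hSSlt : ∑ i, ∑ l, β'' i l < ∑ i, ∑ l, β i l :=
              Finset.sum_lt_sum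
                (fun i _ => Finset.sum_le_sum fun l _ => Nat.sub_le _ _)
                ⟨i₀, Finset.mem_univ _, hlt⟩
            have hb3 : (∑ l, ej l) + ∑ i, ∑ l, β'' i l ≤ N - 1 := by
              rw [hsum_ej]; omega
            have h3 := IH (N - 1) (by omega) ι ej β'' (D none) C' hb3 heq3
            have hfun3 : (fun i => sMon s fun l => β'' i l - min (β'' i l) (ej l))
                = fun i => sMon s (β'' i) := by
              funext i; congr 1; funext l
              have hb0 : β'' i j = 0 := by
                simp only [hβ'']
                rw [hB i, helj]
              by_cases hl : l = j
              · rw [hl, hb0]; simp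
              · simp only [hej, if_neg hl]; omega
            rw [hfun3] at h3
            obtain ⟨f, hf⟩ := (Submodule.mem_span_range_iff_exists_fun R).mp h3
            simp only [smul_eq_mul] at hf
            rw [ha]
            apply Ideal.add_mem
            · rw [← hf, Finset.sum_mul]
              apply Ideal.sum_mem
              intro i _
              have hmem : sMon s (β i) ∈ Ideal.span (Set.range fun i => sMon s (β i)) :=
                Ideal.subset_span ⟨i, rfl⟩
              by_cases hq : Q i
              · have h9 : f i * sMon s (β'' i) * sMon s el
                    = f i * sMon s el * sMon s (β i) := by
                  rw [hQeq i hq]; ring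
                rw [h9]; exact Ideal.mul_mem_left _ _ hmem
              · have hbq : 1 ≤ β i l₀ := by simp only [hQ] at hq; omega
                have h9 : f i * sMon s (β'' i) * sMon s el = f i * sMon s (β i) := by
                  rw [sMon_eq_mul s (hQsplit i hbq)]; ring
                rw [h9]; exact Ideal.mul_mem_left _ _ hmem
            · exact Ideal.sum_mem _ fun i _ =>
                Ideal.mul_mem_left _ _ (Ideal.subset_span ⟨i.1, rfl⟩)
          · -- CASE 4c
            push_neg at h4b
            have hβe : ∀ i, ∑ l, β i l = 1 := fun i => by
              have := h4b i; have := hβ1 i; omega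
            have hchoice : ∀ i, ∃ li : Fin k, β i li = 1 ∧ ∀ l', l' ≠ li → β i l' = 0 := by
              intro i
              have h1 : ∃ li, 1 ≤ β i li := by
                by_contra hh
                push_neg at hh
                have h0 : ∑ l, β i l = 0 := Finset.sum_eq_zero fun l _ => by
                  have := hh l; omega
                have := hβ1 i; omega
              obtain ⟨li, hli⟩ := h1
              have h2 : β i li + ∑ l ∈ Finset.univ.erase li, β i l = ∑ l, β i l :=
                Finset.add_sum_erase _ (β i) (Finset.mem_univ li)
              have hse := hβe i
              refine ⟨li, by omega, ?_⟩
              intro l' hl'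
              have h4 : β i l' ≤ ∑ l ∈ Finset.univ.erase li, β i l :=
                Finset.single_le_sum (fun _ _ => Nat.zero_le _)
                  (Finset.mem_erase.mpr ⟨hl', Finset.mem_univ _⟩)
              omega
            choose lv hlv1 hlv0 using hchoice
            have hmon : ∀ i, sMon s (β i) = s (lv i) := by
              intro i
              unfold sMon
              rw [Finset.prod_eq_single (lv i) (fun b _ hb => by rw [hlv0 i b hb, pow_zero])
                (fun hh => absurd (Finset.mem_univ _) hh)]
              rw [hlv1 i, pow_one]
            have hlj : ∀ i, lv i ≠ j := by
              intro i hh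
              have h1 := hlv1 i
              rw [hh, hB i] at h1
              omega
            set T : Finset (Fin k) := Finset.image lv Finset.univ with hT
            have hjT : j ∉ T := by
              rw [hT]
              simp only [Finset.mem_image, Finset.mem_univ, true_and, not_exists]
              exact fun i hh => hlj i hh
            have hseteq : (Set.range fun i => sMon s (β i)) = s '' ↑T := by
              ext x
              constructor
              · rintro ⟨i, rfl⟩
                exact ⟨lv i, by simp [hT], (hmon i).symm⟩
              · rintro ⟨y, hy, rfl⟩
                rw [hT] at hy
                simp only [Finset.coe_image, Finset.coe_univ, Set.image_univ,
                  Set.mem_range] at hy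
                obtain ⟨i, rfl⟩ := hy
                exact ⟨i, hmon i⟩
            rw [hseteq]
            apply span_prefix_reg hs T j hjT a
            rw [← hseteq, ← hsj, h]
            exact Ideal.sum_mem _ fun i _ =>
              Ideal.mul_mem_left _ _ (Ideal.subset_span ⟨i, rfl⟩)

/-- If `a·f = a₁·f₁ + … + a_m·f_m` for `s`-monomials `f = s^α`, `f_i = s^{β i}`, then `a` lies
in the ideal generated by the `g_i = f_i / gcd(f_i, f) = s^{β i - min (β i) α}`. -/
theorem stmt1 {R : Type*} [CommRing R] {k m : ℕ} (s : Fin k → R)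
    (hs : IsPermWeakRegSeq s) (α : Fin k → ℕ) (β : Fin m → Fin k → ℕ)
    (a : R) (c : Fin m → R)
    (h : a * sMon s α = ∑ i, c i * sMon s (β i)) :
    a ∈ Ideal.span (Set.range fun i => sMon s fun j => β i j - min (β i j) (α j)) := by
  exact main_aux hs ((∑ l, α l) + ∑ i, ∑ l, β i l) (Fin m) α β a c le_rfl h
end

section
/- Let R be a commutative ring with a fixed permutable weak regular sequence s_1,...,s_k, and let a_1,...,a_n ∈ R be monomials in the s_i. Then the syzygy module {(c_1,...,c_n) ∈ R^n : c_1 a_1 + ... + c_n a_n = 0} is generated as an R-module by the elements (lcm(a_i,a_j)/a_i)·e_i − (lcm(a_i,a_j)/a_j)·e_j for 1 ≤ i < j ≤ n, where e_i denotes the i-th standard basis vector. -/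
lemma sMon_mul {R : Type*} [CommRing R] {k : ℕ} (s : Fin k → R) (α γ : Fin k → ℕ) :
    sMon s α * sMon s γ = sMon s (fun t => α t + γ t) := by
  simp [sMon, ← Finset.prod_mul_distrib, pow_add]

lemma sMon_single_s2 {R : Type*} [CommRing R] {k : ℕ} (s : Fin k → R) (q : Fin k) :
    sMon s (Pi.single q 1) = s q := by
  rw [sMon, Finset.prod_eq_single q] <;> simp +contextual [Pi.single_apply]

lemma mem_span_quot {R : Type*} [CommRing R] (a y : R) (S : Set R) :
    Ideal.Quotient.mk (Ideal.span {a}) y ∈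
      Ideal.span ((Ideal.Quotient.mk (Ideal.span {a})) '' S) ↔
    y ∈ Ideal.span (insert a S) := by
  rw [← Ideal.map_span, Ideal.mem_map_iff_of_surjective _ Ideal.Quotient.mk_surjective,
    Ideal.span_insert]
  constructor
  · rintro ⟨x, hx, hxy⟩
    have : y - x ∈ Ideal.span {a} := by
      have h2 : Ideal.Quotient.mk (Ideal.span {a}) (y - x) = 0 := by
        simp [map_sub, hxy]
      exact Ideal.Quotient.eq_zero_iff_mem.mp h2
    exact Submodule.mem_sup.mpr ⟨y - x, this, x, hx, by ring⟩
  · intro hy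
    obtain ⟨z, hz, x, hx, rfl⟩ := Submodule.mem_sup.mp hy
    refine ⟨x, hx, ?_⟩
    have : Ideal.Quotient.mk (Ideal.span {a}) z = 0 := Ideal.Quotient.eq_zero_iff_mem.mpr hz
    simp [this]

lemma quotPerm {R : Type*} [CommRing R] {m : ℕ} (s : Fin (m+1) → R)
    (hs : IsPermWeakRegSeq s) (q : Fin (m+1)) :
    IsPermWeakRegSeq
      (fun t : Fin m => Ideal.Quotient.mk (Ideal.span {s q}) (s (q.succAbove t))) := by
  intro τ i t ht
  set π := Ideal.Quotient.mk (Ideal.span {s q}) with hπ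
  obtain ⟨t₀, rfl⟩ := Ideal.Quotient.mk_surjective t
  let f : Fin (m+1) → Fin (m+1) := Fin.cons q (fun i => q.succAbove (τ i))
  have hfinj : Function.Injective f := by
    intro a b hab
    induction a using Fin.cases with
    | zero =>
      induction b using Fin.cases with
      | zero => rfl
      | succ b =>
        simp only [f, Fin.cons_zero, Fin.cons_succ] at hab
        exact absurd hab.symm (Fin.succAbove_ne q (τ b))
    | succ a =>
      induction b using Fin.cases with
      | zero =>
        simp only [f, Fin.cons_zero, Fin.cons_succ] at hab
        exact absurd hab (Fin.succAbove_ne q (τ a))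
      | succ b =>
        simp only [f, Fin.cons_succ] at hab
        have := τ.injective (Fin.succAbove_right_injective hab)
        rw [this]
  let σ : Equiv.Perm (Fin (m+1)) :=
    Equiv.ofBijective f (Finite.injective_iff_bijective.mp hfinj)
  set A : Set R := (s ∘ q.succAbove ∘ τ) '' {j : Fin m | j < i} with hA
  have hset : ((s ∘ σ) '' {j : Fin (m+1) | j < i.succ}) = insert (s q) A := by
    have h1 : {j : Fin (m+1) | j < i.succ} = insert 0 (Fin.succ '' {j : Fin m | j < i}) := by
      ext j
      induction j using Fin.cases with
      | zero => simp [Fin.succ_pos]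
      | succ j => simp [Fin.succ_lt_succ_iff, (Fin.succ_ne_zero j)]
    rw [h1, Set.image_insert_eq]
    have h2 : (s ∘ σ) 0 = s q := by
      simp only [σ, Function.comp_apply, Equiv.ofBijective_apply, f, Fin.cons_zero]
    rw [h2, hA, ← Set.image_comp]
    congr 1
  have himg : (fun t : Fin m => π (s (q.succAbove t))) ∘ τ '' {j : Fin m | j < i}
      = π '' A := by
    rw [hA, ← Set.image_comp]; rfl
  rw [himg] at ht ⊢
  have hmem : t₀ * s (q.succAbove (τ i)) ∈ Ideal.span (insert (s q) A) := by
    rw [← mem_span_quot]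
    have : π (t₀ * s (q.succAbove (τ i)))
        = π t₀ * ((fun t : Fin m => π (s (q.succAbove t))) ∘ τ) i := by
      simp [map_mul]
    rw [this]
    exact ht
  rw [← hset] at hmem
  have hres := hs σ i.succ t₀ (by
    have : (s ∘ σ) i.succ = s (q.succAbove (τ i)) := by
      simp only [σ, Function.comp_apply, Equiv.ofBijective_apply, f, Fin.cons_succ]
    rw [this]; exact hmem)
  rw [hset] at hres
  exact (mem_span_quot _ _ _).mpr hres

lemma sMon_factor {R : Type*} [CommRing R] {k : ℕ} (s : Fin k → R) (β : Fin k → ℕ)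
    (q : Fin k) (h : 0 < β q) :
    sMon s β = sMon s (fun t => β t - (Pi.single q 1 : Fin k → ℕ) t) * s q := by
  rw [← sMon_single_s2 s q, sMon_mul]
  congr 1
  funext t
  by_cases ht : t = q
  · subst ht; simp; omega
  · simp [Pi.single_apply, ht]

lemma sMon_quot {R : Type*} [CommRing R] {m : ℕ} (s : Fin (m+1) → R) (β : Fin (m+1) → ℕ)
    (q : Fin (m+1)) (h : β q = 0) (I : Ideal R) :
    Ideal.Quotient.mk I (sMon s β)
      = sMon (fun t : Fin m => Ideal.Quotient.mk I (s (q.succAbove t)))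
          (fun t => β (q.succAbove t)) := by
  rw [sMon, Fin.prod_univ_succAbove (fun t => s t ^ β t) q, h, pow_zero, one_mul,
    map_prod, sMon]
  simp

universe u v w

lemma sum_split {ι : Type v} [Fintype ι] (P : ι → Prop) [DecidablePred P]
    {M : Type w} [AddCommMonoid M] (F : ι → M) :
    ∑ j, F j = (∑ j : {j // P j}, F j.1) + ∑ j : {j // ¬ P j}, F j.1 := by
  rw [← Finset.sum_filter_add_sum_filter_not Finset.univ P F,
    Finset.sum_subtype (p := P) _ (by simp) F,
    Finset.sum_subtype (p := fun j => ¬ P j) _ (by simp) F]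

lemma lemD : ∀ (μ : ℕ) {R : Type u} [CommRing R] {k : ℕ} (s : Fin k → R),
    IsPermWeakRegSeq s → ∀ (p : Fin k) {ι : Type v} [Fintype ι] (β : ι → Fin k → ℕ),
    (∑ j, ∑ t, β j t) ≤ μ → (∀ j, β j p = 0) → ∀ u : R,
    u * s p ∈ Ideal.span (Set.range fun j => sMon s (β j)) →
    u ∈ Ideal.span (Set.range fun j => sMon s (β j)) := by
  intro μ
  induction μ using Nat.strong_induction_on with
  | _ μ IH =>
  intro R _ k s hs p ι _ β hμ hβ u hu
  by_cases h1 : ∃ j₀, ∀ t, β j₀ t = 0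
  · -- some generator is 1
    obtain ⟨j₀, hj₀⟩ := h1
    have h1m : (1 : R) ∈ Ideal.span (Set.range fun j => sMon s (β j)) :=
      Ideal.subset_span ⟨j₀, by simp [sMon, hj₀]⟩
    have := (Ideal.eq_top_iff_one _).mpr h1m
    rw [this]; trivial
  by_cases h2 : Nonempty ι
  case neg =>
    -- no generators : u * s p = 0, use that s p is a nonzerodivisor
    rw [not_nonempty_iff] at h2
    have hrange : (Set.range fun j : ι => sMon s (β j)) = ∅ := Set.range_eq_empty _
    rw [hrange, Ideal.span_empty] at hu ⊢
    have hk : 0 < k := p.pos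
    let z : Fin k := ⟨0, hk⟩
    have hz : ∀ j : Fin k, ¬ j < z := by intro j h; exact absurd h (Nat.not_lt_zero _)
    have hset : ((s ∘ (Equiv.swap z p)) '' {j | j < z}) = ∅ := by
      rw [Set.eq_empty_iff_forall_notMem]
      rintro x ⟨j, hj, rfl⟩
      exact hz j hj
    have hreg := hs (Equiv.swap z p) z u
    rw [hset, Ideal.span_empty] at hreg
    have : (s ∘ (Equiv.swap z p)) z = s p := by simp [Equiv.swap_apply_left]
    rw [this] at hreg
    exact hreg hu
  case pos =>
  push_neg at h1
  obtain ⟨j₀⟩ := h2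
  obtain ⟨q, hq0⟩ := h1 j₀
  have hqp : p ≠ q := by rintro rfl; exact hq0 (hβ j₀)
  have hk : k ≠ 0 := by rintro rfl; exact q.elim0
  obtain ⟨m, rfl⟩ := Nat.exists_eq_succ_of_ne_zero hk
  obtain ⟨p', hp'⟩ := Fin.exists_succAbove_eq hqp
  classical
  set π : R →+* R ⧸ Ideal.span {s q} := Ideal.Quotient.mk (Ideal.span {s q}) with hπdef
  set s' : Fin m → R ⧸ Ideal.span {s q} := fun t => π (s (q.succAbove t)) with hs'def
  have hs' : IsPermWeakRegSeq s' := quotPerm s hs q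
  set δ : Fin (m+1) → ℕ := Pi.single q 1 with hδdef
  set P : ι → Prop := fun j => β j q = 0 with hPdef
  obtain ⟨c, hc⟩ := (Submodule.mem_span_range_iff_exists_fun R).mp hu
  have hc' : ∑ j, c j * sMon s (β j) = u * s p := by simpa [smul_eq_mul] using hc
  -- π kills the generators divisible by s q
  have hkill : ∀ j : ι, ¬ P j → π (sMon s (β j)) = 0 := by
    intro j hj
    have h0 : π (s q) = 0 :=
      Ideal.Quotient.eq_zero_iff_mem.mpr (Ideal.mem_span_singleton_self _)
    rw [sMon_factor s (β j) q (Nat.pos_of_ne_zero hj), map_mul, h0, mul_zero]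
  -- Step A : pass to the quotient
  have hπu : π u * s' p' ∈ Ideal.span (Set.range fun j : {j // P j} =>
      sMon s' (fun t => β j.1 (q.succAbove t))) := by
    refine (Submodule.mem_span_range_iff_exists_fun _).mpr ⟨fun j => π (c j.1), ?_⟩
    have e1 : π u * s' p' = π (u * s p) := by rw [map_mul, hs'def]; simp [hp']
    rw [← hc'] at e1
    rw [e1, map_sum, sum_split P (fun j => π (c j * sMon s (β j)))]
    have e2 : ∑ j : {j // ¬ P j}, π (c j.1 * sMon s (β j.1)) = 0 := by
      apply Finset.sum_eq_zero
      intro j _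
      rw [map_mul, hkill j.1 j.2, mul_zero]
    rw [e2, add_zero]
    apply Finset.sum_congr rfl
    intro j _
    rw [smul_eq_mul, map_mul, sMon_quot s (β j.1) q j.2]
  -- degree bookkeeping
  have hdegsplit := sum_split P (fun j => ∑ t, β j t)
  have hP0 : ¬ P j₀ := hq0
  have hd2 : 1 ≤ ∑ j : {j // ¬ P j}, ∑ t, β j.1 t := by
    have hA : 1 ≤ β j₀ q := Nat.pos_of_ne_zero hq0
    have hB : β j₀ q ≤ ∑ t, β j₀ t :=
      Finset.single_le_sum (fun t _ => Nat.zero_le _) (Finset.mem_univ q)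
    have hC : (∑ t, β j₀ t) ≤ ∑ j : {j // ¬ P j}, ∑ t, β j.1 t :=
      Finset.single_le_sum (f := fun j : {j // ¬ P j} => ∑ t, β j.1 t)
        (fun _ _ => Nat.zero_le _) (Finset.mem_univ ⟨j₀, hP0⟩)
    omega
  have hbound : (∑ j : {j // P j}, ∑ t, β j.1 t) + 1 ≤ μ := by omega
  have hμ' : ∑ j : {j // P j}, ∑ t : Fin m, β j.1 (q.succAbove t) ≤ μ - 1 := by
    have e : ∀ j : {j // P j}, ∑ t : Fin m, β j.1 (q.succAbove t) = ∑ t, β j.1 t := by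
      intro j
      rw [Fin.sum_univ_succAbove (β j.1) q, j.2, zero_add]
    rw [Finset.sum_congr rfl (fun j _ => e j)]
    omega
  have hμpos : 0 < μ := by omega
  have hu1 := IH (μ-1) (by omega) s' hs' p'
    (fun (j : {j // P j}) t => β j.1 (q.succAbove t)) hμ'
    (fun j => by show β j.1 (q.succAbove p') = 0; rw [hp']; exact hβ j.1) (π u) hπu
  -- back to R
  have himg : (Set.range fun j : {j // P j} => sMon s' (fun t => β j.1 (q.succAbove t)))
      = π '' (Set.range fun j : {j // P j} => sMon s (β j.1)) := by
    have e : (fun j : {j // P j} => sMon s' (fun t => β j.1 (q.succAbove t)))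
        = π ∘ (fun j : {j // P j} => sMon s (β j.1)) :=
      funext fun j => (sMon_quot s (β j.1) q j.2 _).symm
    rw [e, Set.range_comp]
  rw [himg] at hu1
  have hu2 : u ∈ Ideal.span (insert (s q)
      (Set.range fun j : {j // P j} => sMon s (β j.1))) :=
    (mem_span_quot _ _ _).mp hu1
  rw [Ideal.span_insert] at hu2
  obtain ⟨w₀, hw₀, x, hx, hux⟩ := Submodule.mem_sup.mp hu2
  obtain ⟨w, rfl⟩ := Ideal.mem_span_singleton'.mp hw₀
  -- Step B : the colon by s q
  set S₁ : Ideal R := Ideal.span (Set.range fun j : {j // P j} => sMon s (β j.1)) with hS₁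
  set v : R := w * s p - ∑ j : {j // ¬ P j}, c j.1 * sMon s (fun t => β j.1 t - δ t) with hv
  have hvq : v * s q ∈ S₁ := by
    have huxe : w * s q = u - x := eq_sub_of_add_eq hux
    have e1 : ∀ j : {j // ¬ P j},
        sMon s (fun t => β j.1 t - δ t) * s q = sMon s (β j.1) :=
      fun j => (sMon_factor s (β j.1) q (Nat.pos_of_ne_zero j.2)).symm
    have hs2 := sum_split P (fun j => c j * sMon s (β j))
    have hexp : v * s q = (∑ j : {j // P j}, c j.1 * sMon s (β j.1)) - x * s p := by
      rw [hv, sub_mul, Finset.sum_mul]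
      simp_rw [mul_assoc, e1]
      linear_combination (s p) * huxe + hs2 - hc'
    rw [hexp]
    refine Submodule.sub_mem _ ?_ (Ideal.mul_mem_right _ _ hx)
    exact Ideal.sum_mem _ fun j _ => Ideal.mul_mem_left _ _ (Ideal.subset_span ⟨j, rfl⟩)
  have hμP : ∑ j : {j // P j}, ∑ t, β j.1 t ≤ μ - 1 := by omega
  have hvmem : v ∈ S₁ :=
    IH (μ-1) (by omega) s hs q (fun (j : {j // P j}) => β j.1) hμP
      (fun j => j.2) v hvq
  -- Step C : divide w
  set β' : ι → Fin (m+1) → ℕ := fun j t => β j t - δ t with hβ'def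
  have hβ'P : ∀ j : ι, P j → β' j = β j := by
    intro j hj
    funext t
    by_cases ht : t = q
    · subst ht; simp [hβ'def, hδdef, show β j t = 0 from hj]
    · simp [hβ'def, hδdef, Pi.single_apply, ht]
  set J'' : Ideal R := Ideal.span (Set.range fun j => sMon s (β' j)) with hJ''
  have hS₁J'' : S₁ ≤ J'' := by
    rw [hS₁, Ideal.span_le]
    rintro _ ⟨j, rfl⟩
    exact Ideal.subset_span ⟨j.1, by
      show sMon s (β' j.1) = sMon s (β j.1); rw [hβ'P j.1 j.2]⟩
  have hwsp : w * s p ∈ J'' := by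
    have e : w * s p = v + ∑ j : {j // ¬ P j}, c j.1 * sMon s (β' j.1) := by
      rw [hv]; ring
    rw [e]
    exact Submodule.add_mem _ (hS₁J'' hvmem)
      (Ideal.sum_mem _ fun j _ => Ideal.mul_mem_left _ _ (Ideal.subset_span ⟨j.1, rfl⟩))
  have hβ'p : ∀ j, β' j p = 0 := by
    intro j
    have := hβ j
    simp [hβ'def, this]
  have hμ'' : ∑ j, ∑ t, β' j t ≤ μ - 1 := by
    have hlt : ∑ j, ∑ t, β' j t < ∑ j, ∑ t, β j t := by
      apply Finset.sum_lt_sum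
      · intro j _
        exact Finset.sum_le_sum fun t _ => Nat.sub_le _ _
      · refine ⟨j₀, Finset.mem_univ _, ?_⟩
        apply Finset.sum_lt_sum
        · intro t _; exact Nat.sub_le _ _
        · refine ⟨q, Finset.mem_univ _, ?_⟩
          have : δ q = 1 := by simp [hδdef]
          rw [hβ'def]
          simp only [this]
          omega
    omega
  have hwmem : w ∈ J'' := IH (μ-1) (by omega) s hs p β' hμ'' hβ'p w hwsp
  -- conclusion
  have hwq : w * s q ∈ Ideal.span (Set.range fun j => sMon s (β j)) := by
    have hgen : ∀ y ∈ Set.range (fun j => sMon s (β' j)),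
        y * s q ∈ Ideal.span (Set.range fun j => sMon s (β j)) := by
      rintro _ ⟨j, rfl⟩
      show sMon s (β' j) * s q ∈ _
      by_cases hj : P j
      · rw [hβ'P j hj]
        exact Ideal.mul_mem_right _ _ (Ideal.subset_span ⟨j, rfl⟩)
      · rw [show sMon s (β' j) * s q = sMon s (β j) from
          (sMon_factor s (β j) q (Nat.pos_of_ne_zero hj)).symm]
        exact Ideal.subset_span ⟨j, rfl⟩
    refine Submodule.span_induction hgen ?_ ?_ ?_ hwmem
    · rw [zero_mul]; exact Submodule.zero_mem _
    · intro a b _ _ ha hb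
      rw [add_mul]; exact Submodule.add_mem _ ha hb
    · intro r a _ ha
      rw [smul_mul_assoc]; exact Submodule.smul_mem _ r ha
  have hS₁J : S₁ ≤ Ideal.span (Set.range fun j => sMon s (β j)) := by
    rw [hS₁, Ideal.span_le]
    rintro _ ⟨j, rfl⟩
    exact Ideal.subset_span ⟨j.1, rfl⟩
  rw [← hux]
  exact Submodule.add_mem _ hwq (hS₁J hx)

lemma lemE {R : Type u} [CommRing R] {k : ℕ} (s : Fin k → R) (hs : IsPermWeakRegSeq s)
    (p : Fin k) {ι : Type v} [Fintype ι] (β : ι → Fin k → ℕ) (u : R)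
    (hu : u * s p ∈ Ideal.span (Set.range fun j => sMon s (β j))) :
    u ∈ Ideal.span (Set.range fun j =>
      sMon s (fun x => β j x - (Pi.single p 1 : Fin k → ℕ) x)) := by
  classical
  set δ : Fin k → ℕ := Pi.single p 1 with hδ
  set P : ι → Prop := fun j => β j p = 0 with hP
  set β' : ι → Fin k → ℕ := fun j x => β j x - δ x with hβ'
  have hβ'P : ∀ j : ι, P j → β' j = β j := by
    intro j hj
    funext t
    by_cases ht : t = p
    · subst ht; simp [hβ', hδ, show β j t = 0 from hj]
    · simp [hβ', hδ, Pi.single_apply, ht]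
  obtain ⟨c, hc⟩ := (Submodule.mem_span_range_iff_exists_fun R).mp hu
  have hc' : ∑ j, c j * sMon s (β j) = u * s p := by simpa [smul_eq_mul] using hc
  set u' : R := u - ∑ j : {j // ¬ P j}, c j.1 * sMon s (β' j.1) with hu'
  have hu's : u' * s p ∈ Ideal.span (Set.range fun j : {j // P j} => sMon s (β j.1)) := by
    have e1 : ∀ j : {j // ¬ P j}, sMon s (β' j.1) * s p = sMon s (β j.1) :=
      fun j => (sMon_factor s (β j.1) p (Nat.pos_of_ne_zero j.2)).symm
    have hs2 := sum_split P (fun j => c j * sMon s (β j))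
    have hexp : u' * s p = ∑ j : {j // P j}, c j.1 * sMon s (β j.1) := by
      rw [hu', sub_mul, Finset.sum_mul]
      simp_rw [mul_assoc, e1]
      linear_combination hs2 - hc'
    rw [hexp]
    exact Ideal.sum_mem _ fun j _ => Ideal.mul_mem_left _ _ (Ideal.subset_span ⟨j, rfl⟩)
  have hu'm := lemD (∑ j : {j // P j}, ∑ t, β j.1 t) s hs p
    (fun (j : {j // P j}) => β j.1) le_rfl (fun j => j.2) u' hu's
  have hle : Ideal.span (Set.range fun j : {j // P j} => sMon s (β j.1))
      ≤ Ideal.span (Set.range fun j : ι => sMon s (β' j)) := by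
    rw [Ideal.span_le]
    rintro _ ⟨j, rfl⟩
    exact Ideal.subset_span ⟨j.1, by
      show sMon s (β' j.1) = sMon s (β j.1); rw [hβ'P j.1 j.2]⟩
  have : u = u' + ∑ j : {j // ¬ P j}, c j.1 * sMon s (β' j.1) := by rw [hu']; ring
  rw [this]
  exact Submodule.add_mem _ (hle hu'm)
    (Ideal.sum_mem _ fun j _ => Ideal.mul_mem_left _ _ (Ideal.subset_span ⟨j.1, rfl⟩))

lemma lemCL : ∀ (ν : ℕ) {R : Type u} [CommRing R] {k : ℕ} (s : Fin k → R),
    IsPermWeakRegSeq s → ∀ {ι : Type v} [Fintype ι] (β : ι → Fin k → ℕ) (γ : Fin k → ℕ),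
    (∑ t, γ t) ≤ ν → ∀ u : R,
    u * sMon s γ ∈ Ideal.span (Set.range fun j => sMon s (β j)) →
    u ∈ Ideal.span (Set.range fun j =>
        sMon s (fun x => max (β j x) (γ x) - γ x)) := by
  intro ν
  induction ν using Nat.strong_induction_on with
  | _ ν IH =>
  intro R _ k s hs ι _ β γ hν u hu
  by_cases hγ : ∀ t, γ t = 0
  · have e : (fun j : ι => sMon s fun x => max (β j x) (γ x) - γ x)
        = fun j => sMon s (β j) := by
      funext j; congr 1; funext x; rw [hγ x]; simp
    rw [e]
    have e2 : sMon s γ = 1 := by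
      rw [sMon]; apply Finset.prod_eq_one; intro t _; rw [hγ t, pow_zero]
    rw [e2, mul_one] at hu
    exact hu
  · push_neg at hγ
    obtain ⟨p, hp⟩ := hγ
    set δ : Fin k → ℕ := Pi.single p 1 with hδ
    set γ' : Fin k → ℕ := fun x => γ x - δ x with hγ'
    have hfac : sMon s γ = sMon s γ' * s p := sMon_factor s γ p (Nat.pos_of_ne_zero hp)
    have hu2 : (u * sMon s γ') * s p ∈ Ideal.span (Set.range fun j => sMon s (β j)) := by
      rw [mul_assoc, ← hfac]; exact hu
    have hu3 := lemE s hs p β _ hu2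
    have hνp : 0 < ν := by
      have h1 : 1 ≤ γ p := Nat.pos_of_ne_zero hp
      have h2 : γ p ≤ ∑ t, γ t :=
        Finset.single_le_sum (fun t _ => Nat.zero_le _) (Finset.mem_univ p)
      omega
    have hν' : ∑ t, γ' t ≤ ν - 1 := by
      have hlt : ∑ t, γ' t < ∑ t, γ t := by
        apply Finset.sum_lt_sum
        · intro t _; exact Nat.sub_le _ _
        · refine ⟨p, Finset.mem_univ _, ?_⟩
          have : δ p = 1 := by simp [hδ]
          rw [hγ']; simp only [this]
          have := Nat.pos_of_ne_zero hp
          omega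
      omega
    have hu4 := IH (ν-1) (by omega) s hs
      (fun j x => β j x - δ x) γ' hν' u hu3
    have e : (fun j : ι => sMon s fun x => max (β j x - δ x) (γ' x) - γ' x)
        = fun j => sMon s fun x => max (β j x) (γ x) - γ x := by
      funext j; congr 1; funext x
      by_cases hx : x = p
      · subst hx
        have h1 : δ x = 1 := by simp [hδ]
        simp only [hγ', h1]
        have := Nat.pos_of_ne_zero hp
        omega
      · have h1 : δ x = 0 := by simp [hδ, Pi.single_apply, hx]
        simp only [hγ', h1]
        omega
    rw [e] at hu4
    exact hu4


/-- The syzygy module of `s`-monomials `a_i = s^{β i}` is generated by the Koszul-type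
relations `(lcm(a_i,a_j)/a_i)·e_i − (lcm(a_i,a_j)/a_j)·e_j` for `i < j`. -/
theorem stmt2 {R : Type*} [CommRing R] {k n : ℕ} (s : Fin k → R)
    (hs : IsPermWeakRegSeq s) (β : Fin n → Fin k → ℕ)
    (c : Fin n → R) (hc : ∑ i, c i * sMon s (β i) = 0) :
    c ∈ Submodule.span R
      {v : Fin n → R | ∃ i j : Fin n, i < j ∧
        v = Pi.single i (sMon s fun t => max (β i t) (β j t) - β i t)
          - Pi.single j (sMon s fun t => max (β i t) (β j t) - β j t)} := by
  induction n with
  | zero =>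
    have : c = 0 := Subsingleton.elim c 0
    rw [this]
    exact Submodule.zero_mem _
  | succ n IH =>
    classical
    -- the last coefficient lies in the colon ideal
    have hlast : c (Fin.last n) * sMon s (β (Fin.last n))
        ∈ Ideal.span (Set.range fun i : Fin n => sMon s (β i.castSucc)) := by
      rw [Fin.sum_univ_castSucc] at hc
      have e := eq_neg_of_add_eq_zero_right hc
      rw [e]
      exact Submodule.neg_mem _ (Ideal.sum_mem _ fun i _ =>
        Ideal.mul_mem_left _ _ (Ideal.subset_span ⟨i, rfl⟩))
    have hcl := lemCL (∑ t, β (Fin.last n) t) s hs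
      (fun i : Fin n => β i.castSucc) (β (Fin.last n)) le_rfl _ hlast
    obtain ⟨r, hr⟩ := (Submodule.mem_span_range_iff_exists_fun R).mp hcl
    have hr' : ∑ i : Fin n, r i *
        sMon s (fun x => max (β i.castSucc x) (β (Fin.last n) x) - β (Fin.last n) x)
        = c (Fin.last n) := by simpa [smul_eq_mul] using hr
    -- the Koszul generators involving the last index
    set g : Fin n → (Fin (n+1) → R) := fun i =>
      Pi.single i.castSucc
          (sMon s fun t => max (β i.castSucc t) (β (Fin.last n) t) - β i.castSucc t)
        - Pi.single (Fin.last n)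
          (sMon s fun t => max (β i.castSucc t) (β (Fin.last n) t) - β (Fin.last n) t)
      with hg
    have hgS : ∀ i : Fin n, g i ∈
        {v : Fin (n+1) → R | ∃ i j : Fin (n+1), i < j ∧
          v = Pi.single i (sMon s fun t => max (β i t) (β j t) - β i t)
            - Pi.single j (sMon s fun t => max (β i t) (β j t) - β j t)} :=
      fun i => ⟨i.castSucc, Fin.last n, Fin.castSucc_lt_last i, rfl⟩
    set c' : Fin (n+1) → R := fun i => c i + ∑ j : Fin n, r j * g j i with hc'def
    have hsingle : ∀ (a : Fin (n+1)) (X : R) (f : Fin (n+1) → R),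
        ∑ i, (Pi.single a X : Fin (n+1) → R) i * f i = X * f a := by
      intro a X f
      rw [Finset.sum_eq_single a]
      · rw [Pi.single_eq_same]
      · intro b _ hb
        rw [Pi.single_eq_of_ne hb, zero_mul]
      · intro h; exact absurd (Finset.mem_univ a) h
    have hglast : ∀ j : Fin n, g j (Fin.last n)
        = -sMon s (fun t => max (β j.castSucc t) (β (Fin.last n) t) - β (Fin.last n) t) := by
      intro j
      rw [hg]
      simp [Pi.single_eq_of_ne (Fin.ne_last_of_lt (Fin.castSucc_lt_last j)).symm]
    have hc'last : c' (Fin.last n) = 0 := by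
      have e1 : ∑ j : Fin n, r j * g j (Fin.last n) = - c (Fin.last n) := by
        have e0 : ∀ j : Fin n, r j * g j (Fin.last n)
            = -(r j * sMon s (fun t =>
                max (β j.castSucc t) (β (Fin.last n) t) - β (Fin.last n) t)) :=
          fun j => by rw [hglast j]; ring
        rw [Finset.sum_congr rfl (fun j _ => e0 j), Finset.sum_neg_distrib, hr']
      show c (Fin.last n) + ∑ j : Fin n, r j * g j (Fin.last n) = 0
      rw [e1]; ring
    have key : ∀ j : Fin n, ∑ i : Fin (n+1), g j i * sMon s (β i) = 0 := by
      intro j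
      rw [hg]
      simp only [Pi.sub_apply]
      rw [Finset.sum_congr rfl (fun i _ => sub_mul _ _ _), Finset.sum_sub_distrib,
        hsingle, hsingle, sMon_mul, sMon_mul]
      rw [show (fun t => max (β j.castSucc t) (β (Fin.last n) t) - β j.castSucc t
            + β j.castSucc t)
          = (fun t => max (β j.castSucc t) (β (Fin.last n) t) - β (Fin.last n) t
            + β (Fin.last n) t) from funext fun t => by omega]
      ring
    have hsyz : ∑ i, c' i * sMon s (β i) = 0 := by
      have e : ∑ i, c' i * sMon s (β i)
          = ∑ i, c i * sMon s (β i)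
            + ∑ j : Fin n, r j * (∑ i, g j i * sMon s (β i)) := by
        simp only [hc'def, add_mul, Finset.sum_add_distrib, Finset.sum_mul,
          Finset.mul_sum]
        congr 1
        rw [Finset.sum_comm]
        exact Finset.sum_congr rfl fun i _ => Finset.sum_congr rfl fun j _ => by ring
      rw [e, hc]
      simp [key]
    have hres : ∑ i : Fin n, c' i.castSucc * sMon s (β i.castSucc) = 0 := by
      rw [Fin.sum_univ_castSucc, hc'last, zero_mul, add_zero] at hsyz
      exact hsyz
    have hIH := IH (fun i => β i.castSucc) (fun i => c' i.castSucc) hres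
    let φ : (Fin n → R) →ₗ[R] (Fin (n+1) → R) :=
      LinearMap.pi (fun i : Fin (n+1) =>
        Fin.lastCases 0 (fun j => LinearMap.proj j) i)
    have hφsingle : ∀ (i : Fin n) (X : R), φ (Pi.single i X) = Pi.single i.castSucc X := by
      intro i X
      funext a
      rw [LinearMap.pi_apply]
      induction a using Fin.lastCases with
      | last =>
        rw [Fin.lastCases_last]
        rw [Pi.single_eq_of_ne (Fin.ne_last_of_lt (Fin.castSucc_lt_last i)).symm]
        rfl
      | cast b =>
        rw [Fin.lastCases_castSucc]
        simp [LinearMap.proj_apply, Pi.single_apply, Fin.castSucc_inj]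
    have hφc' : φ (fun i => c' i.castSucc) = c' := by
      funext a
      rw [LinearMap.pi_apply]
      induction a using Fin.lastCases with
      | last => rw [Fin.lastCases_last, hc'last]; rfl
      | cast b => rw [Fin.lastCases_castSucc]; rfl
    have hmap : c' ∈ Submodule.span R
        {v : Fin (n+1) → R | ∃ i j : Fin (n+1), i < j ∧
          v = Pi.single i (sMon s fun t => max (β i t) (β j t) - β i t)
            - Pi.single j (sMon s fun t => max (β i t) (β j t) - β j t)} := by
      rw [← hφc']
      have h1 : φ (fun i => c' i.castSucc) ∈ Submodule.map φ
          (Submodule.span R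
            {v : Fin n → R | ∃ i j : Fin n, i < j ∧
              v = Pi.single i (sMon s fun t =>
                  max (β i.castSucc t) (β j.castSucc t) - β i.castSucc t)
                - Pi.single j (sMon s fun t =>
                  max (β i.castSucc t) (β j.castSucc t) - β j.castSucc t)}) :=
        ⟨_, hIH, rfl⟩
      rw [Submodule.map_span] at h1
      refine Submodule.span_mono ?_ h1
      rintro _ ⟨w, ⟨i, j, hij, rfl⟩, rfl⟩
      exact ⟨i.castSucc, j.castSucc, Fin.castSucc_lt_castSucc_iff.mpr hij, by
        rw [map_sub, hφsingle, hφsingle]⟩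
    have hcc : c = c' - ∑ j : Fin n, r j • g j := by
      funext i
      simp [hc'def, Finset.sum_apply, smul_eq_mul]
    rw [hcc]
    exact Submodule.sub_mem _ hmap (Submodule.sum_mem _ fun j _ =>
      Submodule.smul_mem _ _ (Submodule.subset_span (hgS j)))
end

section
/- Let S = R[x_1,...,x_n] with a monomial order, and let f_1,...,f_m ∈ S be polynomials whose leading coefficients are s-terms (unit times a monomial in a fixed permutable weak regular sequence of R), all having the same leading monomial x^δ. If the leading monomial of Σ c_i f_i (with c_i ∈ R) is strictly smaller than x^δ, then Σ c_i f_i is an R-linear combination of the S'-polynomials S'(f_i,f_j) = lcm(lc(f_i),lc(f_j))·S(f_i,f_j), and each S'(f_i,f_j) has leading monomial strictly smaller than x^δ. -/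
open MvPolynomial

/-- A monomial order on the monomials (exponent vectors) of `MvPolynomial σ R`:
a linear order on `σ →₀ ℕ`, compatible with addition, for which `0` is least. -/
structure MonomialOrd (σ : Type*) where
  le : (σ →₀ ℕ) → (σ →₀ ℕ) → Prop
  refl : ∀ a, le a a
  antisymm : ∀ a b, le a b → le b a → a = b
  trans : ∀ a b c, le a b → le b c → le a c
  total : ∀ a b, le a b ∨ le b a
  add_right : ∀ a b c, le a b → le (a + c) (b + c)
  zero_le : ∀ a, le 0 a

/-- `δ` is the leading monomial of `f` with respect to the monomial order `m`
(by convention the leading monomial of `0` is `0`). -/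
def IsLM {R : Type*} [CommRing R] {σ : Type*} (m : MonomialOrd σ)
    (f : MvPolynomial σ R) (δ : σ →₀ ℕ) : Prop :=
  (f = 0 ∧ δ = 0) ∨ (MvPolynomial.coeff δ f ≠ 0 ∧ ∀ e ∈ f.support, m.le e δ)

/-- The set of leading terms of the members of `G`. -/
def ltSet {R : Type*} [CommRing R] {σ : Type*} (m : MonomialOrd σ)
    (G : Set (MvPolynomial σ R)) : Set (MvPolynomial σ R) :=
  {g | ∃ f ∈ G, f ≠ 0 ∧ ∃ δ, IsLM m f δ ∧
    g = MvPolynomial.monomial δ (MvPolynomial.coeff δ f)}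

/-- `G` is a Gröbner basis of the ideal `I` w.r.t. the monomial order `m`: `G ⊆ I` and the
leading terms of the members of `G` generate the ideal of leading terms of `I`. -/
def IsGroebnerBasis {R : Type*} [CommRing R] {σ : Type*} (m : MonomialOrd σ)
    (G : Set (MvPolynomial σ R)) (I : Ideal (MvPolynomial σ R)) : Prop :=
  G ⊆ (I : Set (MvPolynomial σ R)) ∧
    Ideal.span (ltSet m G) = Ideal.span (ltSet m (I : Set (MvPolynomial σ R)))

/-- `f` reduces to zero modulo `G`: `f = ∑ pᵢ gᵢ` with `gᵢ ∈ G` and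
`lm(pᵢ)·lm(gᵢ) ≤ lm(f)` whenever `pᵢ ≠ 0`. -/
def RedZero {R : Type*} [CommRing R] {σ : Type*} (m : MonomialOrd σ)
    (G : Set (MvPolynomial σ R)) (f : MvPolynomial σ R) : Prop :=
  ∃ (N : ℕ) (g p : Fin N → MvPolynomial σ R) (δ : σ →₀ ℕ),
    IsLM m f δ ∧ (∀ i, g i ∈ G) ∧ f = ∑ i, p i * g i ∧
    ∀ i, p i ≠ 0 → ∀ δp δg, IsLM m (p i) δp → IsLM m (g i) δg → m.le (δp + δg) δ

namespace SyzAux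

variable {R : Type*} [CommRing R] {k : ℕ} (s : Fin k → R)


variable {R : Type*} [CommRing R] {k : ℕ} (s : Fin k → R)

lemma sMon_congr {α β : Fin k → ℕ} (h : ∀ x, α x = β x) : sMon s α = sMon s β := by
  unfold sMon; exact Finset.prod_congr rfl (fun x _ => by rw [h])

lemma sMon_one {α : Fin k → ℕ} (h : ∀ x, α x = 0) : sMon s α = 1 := by
  unfold sMon; simp [h]

lemma sMon_mul_of_le {α β : Fin k → ℕ} (h : ∀ x, α x ≤ β x) :
    sMon s (fun x => β x - α x) * sMon s α = sMon s β := by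
  unfold sMon
  rw [← Finset.prod_mul_distrib]
  exact Finset.prod_congr rfl (fun x _ => by rw [← pow_add, Nat.sub_add_cancel (h x)])

lemma sMon_step (t0 : Fin k) {α β : Fin k → ℕ} (h0 : α t0 = β t0 + 1)
    (h : ∀ x, x ≠ t0 → α x = β x) : sMon s α = s t0 * sMon s β := by
  unfold sMon
  rw [← Finset.mul_prod_erase Finset.univ _ (Finset.mem_univ t0),
      ← Finset.mul_prod_erase Finset.univ (fun j => s j ^ β j) (Finset.mem_univ t0)]
  have hP : (∏ x ∈ Finset.univ.erase t0, s x ^ α x) = ∏ x ∈ Finset.univ.erase t0, s x ^ β x :=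
    Finset.prod_congr rfl (fun x hx => by rw [h x (Finset.ne_of_mem_erase hx)])
  rw [hP, h0, pow_succ]
  ring

/-- The linear combination of elementary syzygy vectors with coefficient matrix `t`. -/
def comb {ι : Type*} [Fintype ι] (a : ι → Fin k → ℕ) (t : ι → ι → R) (i : ι) : R :=
  (∑ q, t i q * sMon s (fun x => max (a i x) (a q x) - a i x)) -
  (∑ p, t p i * sMon s (fun x => max (a p x) (a i x) - a i x))

lemma comb_syz {ι : Type*} [Fintype ι] (a : ι → Fin k → ℕ) (t : ι → ι → R) :
    ∑ i, comb s a t i * sMon s (a i) = 0 := by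
  unfold comb
  have key : ∀ i q : ι, t i q * sMon s (fun x => max (a i x) (a q x) - a i x) * sMon s (a i)
      = t i q * sMon s (fun x => max (a i x) (a q x)) := by
    intro i q
    rw [mul_assoc, sMon_mul_of_le s (fun x => le_max_left _ _)]
  have key2 : ∀ p i : ι, t p i * sMon s (fun x => max (a p x) (a i x) - a i x) * sMon s (a i)
      = t p i * sMon s (fun x => max (a p x) (a i x)) := by
    intro p i
    rw [mul_assoc, sMon_mul_of_le s (fun x => le_max_right _ _)]
  simp only [sub_mul, Finset.sum_mul, key, key2, Finset.sum_sub_distrib]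
  rw [Finset.sum_comm (f := fun p i => t p i * sMon s (fun x => max (a p x) (a i x)))]
  exact sub_self _

lemma key_base {ι : Type*} [Fintype ι] [DecidableEq ι]
    (a : ι → Fin k → ℕ) (ha : ∀ i x, a i x = 0) (c : ι → R) (J : Ideal R)
    (hc : (∑ i, c i * sMon s (a i)) ∈ J) :
    ∃ t : ι → ι → R, ∀ i, c i - comb s a t i ∈ J := by
  classical
  have hone : ∀ i, sMon s (a i) = 1 := fun i => sMon_one s (ha i)
  have hc' : (∑ i, c i) ∈ J := by
    have : (∑ i, c i * sMon s (a i)) = ∑ i, c i := by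
      exact Finset.sum_congr rfl (fun i _ => by rw [hone, mul_one])
    rwa [this] at hc
  cases isEmpty_or_nonempty ι with
  | inl h => exact ⟨fun _ _ => 0, fun i => absurd (IsEmpty.false i) (by simp)⟩
  | inr h =>
    obtain ⟨i0⟩ := h
    refine ⟨fun i q => if q = i0 then c i else 0, fun i => ?_⟩
    have hm : ∀ (i q : ι), sMon s (fun x => max (a i x) (a q x) - a i x) = 1 :=
      fun i q => sMon_one s (fun x => by simp [ha])
    have hm2 : ∀ (p i : ι), sMon s (fun x => max (a p x) (a i x) - a i x) = 1 :=
      fun p i => sMon_one s (fun x => by simp [ha])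
    unfold comb
    simp only [hm, hm2, mul_one]
    have h1 : (∑ q, if q = i0 then c i else 0) = c i := by simp
    have h2 : (∑ p, if i = i0 then c p else 0) = if i = i0 then ∑ p, c p else 0 := by
      split <;> simp
    rw [h1, h2]
    split
    · simpa using hc'
    · simpa using Ideal.zero_mem J

lemma sum_dite {M : Type*} [AddCommMonoid M] {ι : Type*} [Fintype ι]
    (p : ι → Prop) [DecidablePred p] (F : ∀ i, p i → M) :
    (∑ i, if h : p i then F i h else 0) = ∑ i : {x // p x}, F i.1 i.2 := by
  classical
  rw [← Finset.sum_filter_add_sum_filter_not Finset.univ p]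
  have h2 : (∑ i ∈ Finset.univ.filter (fun i => ¬ p i), if h : p i then F i h else 0) = 0 :=
    Finset.sum_eq_zero (fun i hi => dif_neg (Finset.mem_filter.mp hi).2)
  rw [h2, add_zero]
  rw [Finset.sum_subtype (p := p) (Finset.univ.filter p) (fun x => by simp)
    (fun i => if h : p i then F i h else 0)]
  exact Finset.sum_congr rfl (fun i _ => dif_pos i.2)

lemma key
    (H : ∀ (E : Finset (Fin k)) (t : Fin k), t ∉ E → ∀ r : R,
      r * s t ∈ Ideal.span (s '' ↑E) → r ∈ Ideal.span (s '' ↑E)) :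
    ∀ (b D : ℕ) (E : Finset (Fin k)) (ι : Type) [Fintype ι] [DecidableEq ι]
      (a : ι → Fin k → ℕ) (c : ι → R),
      Eᶜ.card ≤ b → (∀ i x, x ∈ E → a i x = 0) → (∑ i, ∑ x, a i x) ≤ D →
      (∑ i, c i * sMon s (a i)) ∈ Ideal.span (s '' ↑E) →
      ∃ t : ι → ι → R, ∀ i, c i - comb s a t i ∈ Ideal.span (s '' ↑E) := by
  intro b
  induction b with
  | zero =>
    intro D E ι inst1 inst2 a c hb hsupp hD hc
    have hE : E = Finset.univ := by
      have h0 : Eᶜ = ∅ := Finset.card_eq_zero.mp (Nat.le_zero.mp hb)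
      rwa [Finset.compl_eq_empty_iff] at h0
    exact key_base s a (fun i x => hsupp i x (hE ▸ Finset.mem_univ x)) c _ hc
  | succ b ihb =>
    intro D
    induction D with
    | zero =>
      intro E ι inst1 inst2 a c hb hsupp hD hc
      have hz : ∀ i x, a i x = 0 := by
        intro i x
        have h1 : (∑ i, ∑ x, a i x) = 0 := Nat.le_zero.mp hD
        have h2 := Finset.sum_eq_zero_iff.mp h1 i (Finset.mem_univ i)
        exact Finset.sum_eq_zero_iff.mp h2 x (Finset.mem_univ x)
      exact key_base s a hz c _ hc
    | succ D ihD =>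
      intro E ι inst1 inst2 a c hb hsupp hD hc
      classical
      by_cases hz : ∀ i x, a i x = 0
      · exact key_base s a hz c _ hc
      push_neg at hz
      obtain ⟨i1, t0, ht0⟩ := hz
      set J := Ideal.span (s '' (E : Set (Fin k))) with hJdef
      have ht0E : t0 ∉ E := fun h => ht0 (hsupp i1 t0 h)
      set E' := insert t0 E with hE'def
      have hJle : J ≤ Ideal.span (s '' (E' : Set (Fin k))) := by
        apply Ideal.span_mono
        apply Set.image_mono
        rw [hE'def, Finset.coe_insert]
        exact Set.subset_insert _ _
      have hst0 : s t0 ∈ Ideal.span (s '' (E' : Set (Fin k))) := by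
        apply Ideal.subset_span
        exact ⟨t0, by simp [hE'def], rfl⟩
      set a' : ι → Fin k → ℕ := fun i x => if x = t0 then a i x - 1 else a i x with ha'def
      have hsplit : ∀ i : ι, a i t0 ≠ 0 → sMon s (a i) = s t0 * sMon s (a' i) := by
        intro i hi
        refine sMon_step s t0 ?_ ?_
        · simp only [ha'def, if_pos rfl]
          omega
        · intro x hx; simp [ha'def, hx]
      have haB : ∀ i : ι, a i t0 = 0 → ∀ x, a' i x = a i x := by
        intro i hi x
        by_cases hx : x = t0
        · subst hx; simp [ha'def, hi]
        · simp [ha'def, hx]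
      have hb' : E'ᶜ.card ≤ b := by
        have h1 : t0 ∈ Eᶜ := Finset.mem_compl.mpr ht0E
        have h2 : 0 < Eᶜ.card := Finset.card_pos.mpr ⟨t0, h1⟩
        rw [hE'def, Finset.compl_insert, Finset.card_erase_of_mem h1]
        omega
      have hsupp' : ∀ (i : {x : ι // a x t0 = 0}) (x : Fin k), x ∈ E' → a i.1 x = 0 := by
        intro i x hx
        rcases Finset.mem_insert.mp hx with h | h
        · subst h; exact i.2
        · exact hsupp i.1 x h
      have hcB : (∑ i : {x : ι // a x t0 = 0}, c i.1 * sMon s (a i.1))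
          ∈ Ideal.span (s '' (E' : Set (Fin k))) := by
        have hsum : (∑ i : {x : ι // a x t0 = 0}, c i.1 * sMon s (a i.1))
            = ∑ i, if h : a i t0 = 0 then c i * sMon s (a i) else 0 :=
          (sum_dite (fun i : ι => a i t0 = 0) (fun i _ => c i * sMon s (a i))).symm
        rw [hsum]
        have hdiff : (∑ i, if h : a i t0 = 0 then c i * sMon s (a i) else 0)
            = (∑ i, c i * sMon s (a i))
              - (∑ i, if h : a i t0 = 0 then 0 else c i * sMon s (a i)) := by
          rw [eq_sub_iff_add_eq, ← Finset.sum_add_distrib]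
          exact Finset.sum_congr rfl (fun i _ => by split <;> simp)
        rw [hdiff]
        apply Submodule.sub_mem
        · exact hJle hc
        · apply Ideal.sum_mem
          intro i _
          split
          · exact Ideal.zero_mem _
          · next h =>
            rw [hsplit i h]
            exact Ideal.mul_mem_left _ _ (Ideal.mul_mem_right _ _ hst0)
      obtain ⟨tB, htB⟩ := ihb (∑ i : {x : ι // a x t0 = 0}, ∑ x, a i.1 x) E'
        {x : ι // a x t0 = 0} (fun i => a i.1) (fun i => c i.1) hb' hsupp' le_rfl hcB
      have hspan' : Ideal.span (s '' (E' : Set (Fin k))) = Ideal.span {s t0} ⊔ J := by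
        rw [hE'def, Finset.coe_insert, Set.image_insert_eq, Ideal.span_insert]
      have hdecomp : ∀ i : {x : ι // a x t0 = 0}, ∃ dz : R × R, dz.2 ∈ J ∧
          c i.1 - comb s (fun j => a j.1) tB i = dz.2 + s t0 * dz.1 := by
        intro i
        have hm := htB i
        rw [hspan', Submodule.mem_sup] at hm
        obtain ⟨y, hy, z, hz, hyz⟩ := hm
        obtain ⟨d0, hd0⟩ := Ideal.mem_span_singleton.mp hy
        exact ⟨(d0, z), hz, by rw [← hyz, hd0]; ring⟩
      choose dz hdzJ hdzeq using hdecomp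
      set c' : ι → R := fun i => if h : a i t0 = 0 then (dz ⟨i, h⟩).1 else c i with hc'def
      set TB : ι → ι → R := fun p q =>
        if h : a p t0 = 0 ∧ a q t0 = 0 then tB ⟨p, h.1⟩ ⟨q, h.2⟩ else 0 with hTBdef
      -- the division step
      have hXmem : (∑ i, c' i * sMon s (a' i)) ∈ J := by
        apply H E t0 ht0E
        have hsyz : (∑ i : {x : ι // a x t0 = 0},
            comb s (fun j => a j.1) tB i * sMon s (a i.1)) = 0 := by
          simpa using comb_syz s (fun j : {x : ι // a x t0 = 0} => a j.1) tB
        have hpt : ∀ i : ι, c' i * sMon s (a' i) * s t0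
            = c i * sMon s (a i)
              - (if h : a i t0 = 0 then
                  (comb s (fun j => a j.1) tB ⟨i, h⟩ + (dz ⟨i, h⟩).2) * sMon s (a i)
                else 0) := by
          intro i
          by_cases h : a i t0 = 0
          · rw [dif_pos h]
            have h1 : sMon s (a' i) = sMon s (a i) := sMon_congr s (haB i h)
            have h2 : c' i = (dz ⟨i, h⟩).1 := by rw [hc'def]; exact dif_pos h
            rw [h1, h2]
            have heq := hdzeq ⟨i, h⟩
            linear_combination (-(sMon s (a i))) * heq
          · rw [dif_neg h]
            have h2 : c' i = c i := by rw [hc'def]; exact dif_neg h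
            rw [h2, hsplit i h]
            ring
        have hmain : (∑ i, c' i * sMon s (a' i)) * s t0
            = (∑ i, c i * sMon s (a i))
              - ((∑ i : {x : ι // a x t0 = 0},
                    comb s (fun j => a j.1) tB i * sMon s (a i.1))
                 + (∑ i : {x : ι // a x t0 = 0}, (dz i).2 * sMon s (a i.1))) := by
          rw [Finset.sum_mul]
          rw [Finset.sum_congr rfl (fun i _ => hpt i), Finset.sum_sub_distrib]
          congr 1
          rw [sum_dite (fun i : ι => a i t0 = 0)
            (fun i h => (comb s (fun j => a j.1) tB ⟨i, h⟩ + (dz ⟨i, h⟩).2) * sMon s (a i))]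
          rw [← Finset.sum_add_distrib]
          exact Finset.sum_congr rfl (fun i _ => by ring)
        rw [hmain, hsyz, zero_add]
        exact Submodule.sub_mem _ hc
          (Ideal.sum_mem _ (fun i _ => Ideal.mul_mem_right _ _ (hdzJ i)))
      -- apply the degree induction hypothesis
      have hdeg : (∑ i, ∑ x, a' i x) ≤ D := by
        have hlt : (∑ i, ∑ x, a' i x) < ∑ i, ∑ x, a i x := by
          apply Finset.sum_lt_sum
          · intro i _
            apply Finset.sum_le_sum
            intro x _
            by_cases hx : x = t0 <;> simp [ha'def, hx]
          · refine ⟨i1, Finset.mem_univ i1, ?_⟩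
            apply Finset.sum_lt_sum
            · intro x _
              by_cases hx : x = t0 <;> simp [ha'def, hx]
            · refine ⟨t0, Finset.mem_univ t0, ?_⟩
              simp only [ha'def, if_pos rfl]
              omega
        omega
      have hsupp'' : ∀ i x, x ∈ E → a' i x = 0 := by
        intro i x hx
        have hxne : x ≠ t0 := fun h => ht0E (h ▸ hx)
        simp [ha'def, hxne, hsupp i x hx]
      obtain ⟨tC, htC⟩ := ihD E ι a' c' hb hsupp'' hdeg hXmem
      -- assemble the final syzygy matrix
      set μ : ι → ι → R := fun p q => if a p t0 = 0 ∧ a q t0 = 0 then s t0 else 1 with hμdef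
      refine ⟨fun p q => μ p q * tC p q + TB p q, fun i => ?_⟩
      have hcombsplit : comb s a (fun p q => μ p q * tC p q + TB p q) i
          = comb s a (fun p q => μ p q * tC p q) i + comb s a TB i := by
        unfold comb
        simp only [add_mul, Finset.sum_add_distrib]
        ring
      by_cases hi : a i t0 = 0
      · have hTBi : comb s a TB i
            = comb s (fun j : {x : ι // a x t0 = 0} => a j.1) tB ⟨i, hi⟩ := by
          unfold comb
          congr 1
          · have hh : ∀ q : ι, TB i q * sMon s (fun x => max (a i x) (a q x) - a i x)
                = if h : a q t0 = 0 then
                    tB ⟨i, hi⟩ ⟨q, h⟩ * sMon s (fun x => max (a i x) (a q x) - a i x)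
                  else 0 := by
              intro q
              by_cases h : a q t0 = 0
              · rw [dif_pos h, hTBdef]
                simp only
                rw [dif_pos ⟨hi, h⟩]
              · rw [dif_neg h, hTBdef]
                simp only
                rw [dif_neg (fun hh => h hh.2), zero_mul]
            rw [Finset.sum_congr rfl (fun q _ => hh q),
              sum_dite (fun q : ι => a q t0 = 0)
                (fun q h => tB ⟨i, hi⟩ ⟨q, h⟩ * sMon s (fun x => max (a i x) (a q x) - a i x))]
          · have hh : ∀ p : ι, TB p i * sMon s (fun x => max (a p x) (a i x) - a i x)
                = if h : a p t0 = 0 then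
                    tB ⟨p, h⟩ ⟨i, hi⟩ * sMon s (fun x => max (a p x) (a i x) - a i x)
                  else 0 := by
              intro p
              by_cases h : a p t0 = 0
              · rw [dif_pos h, hTBdef]
                simp only
                rw [dif_pos ⟨h, hi⟩]
              · rw [dif_neg h, hTBdef]
                simp only
                rw [dif_neg (fun hh => h hh.1), zero_mul]
            rw [Finset.sum_congr rfl (fun p _ => hh p),
              sum_dite (fun p : ι => a p t0 = 0)
                (fun p h => tB ⟨p, h⟩ ⟨i, hi⟩ * sMon s (fun x => max (a p x) (a i x) - a i x))]
        have hμi : comb s a (fun p q => μ p q * tC p q) i = s t0 * comb s a' tC i := by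
          unfold comb
          rw [mul_sub, Finset.mul_sum, Finset.mul_sum]
          congr 1
          · apply Finset.sum_congr rfl
            intro q _
            by_cases hq : a q t0 = 0
            · have hμ : μ i q = s t0 := if_pos ⟨hi, hq⟩
              have hmon : sMon s (fun x => max (a i x) (a q x) - a i x)
                  = sMon s (fun x => max (a' i x) (a' q x) - a' i x) := by
                apply sMon_congr
                intro x
                rw [haB i hi x, haB q hq x]
              beta_reduce
              rw [hμ, hmon]; ring
            · have hμ : μ i q = 1 := if_neg (fun hh => hq hh.2)
              have hmon : sMon s (fun x => max (a i x) (a q x) - a i x)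
                  = s t0 * sMon s (fun x => max (a' i x) (a' q x) - a' i x) := by
                apply sMon_step s t0
                · simp only [ha'def, if_pos rfl]
                  omega
                · intro x hx; simp only [ha'def, if_neg hx]
              beta_reduce
              rw [hμ, hmon]; ring
          · apply Finset.sum_congr rfl
            intro p _
            by_cases hp : a p t0 = 0
            · have hμ : μ p i = s t0 := if_pos ⟨hp, hi⟩
              have hmon : sMon s (fun x => max (a p x) (a i x) - a i x)
                  = sMon s (fun x => max (a' p x) (a' i x) - a' i x) := by
                apply sMon_congr
                intro x
                rw [haB p hp x, haB i hi x]
              beta_reduce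
              rw [hμ, hmon]; ring
            · have hμ : μ p i = 1 := if_neg (fun hh => hp hh.1)
              have hmon : sMon s (fun x => max (a p x) (a i x) - a i x)
                  = s t0 * sMon s (fun x => max (a' p x) (a' i x) - a' i x) := by
                apply sMon_step s t0
                · simp only [ha'def, if_pos rfl]
                  omega
                · intro x hx; simp only [ha'def, if_neg hx]
              beta_reduce
              rw [hμ, hmon]; ring
        rw [hcombsplit, hTBi, hμi]
        have heq := hdzeq ⟨i, hi⟩
        have hc'i : c' i = (dz ⟨i, hi⟩).1 := by rw [hc'def]; exact dif_pos hi
        have hrw : c i - (s t0 * comb s a' tC i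
              + comb s (fun j : {x : ι // a x t0 = 0} => a j.1) tB ⟨i, hi⟩)
            = (dz ⟨i, hi⟩).2 + s t0 * (c' i - comb s a' tC i) := by
          rw [hc'i]
          linear_combination heq
        rw [hrw]
        exact Submodule.add_mem _ (hdzJ ⟨i, hi⟩) (Ideal.mul_mem_left _ _ (htC i))
      · have hTBi : comb s a TB i = 0 := by
          unfold comb
          have z1 : ∀ q : ι, TB i q = 0 := by
            intro q; rw [hTBdef]; simp only; exact dif_neg (fun hh => hi hh.1)
          have z2 : ∀ p : ι, TB p i = 0 := by
            intro p; rw [hTBdef]; simp only; exact dif_neg (fun hh => hi hh.2)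
          simp [z1, z2]
        have hμi : comb s a (fun p q => μ p q * tC p q) i = comb s a' tC i := by
          unfold comb
          congr 1
          · apply Finset.sum_congr rfl
            intro q _
            have hμ : μ i q = 1 := if_neg (fun hh => hi hh.1)
            have hmon : sMon s (fun x => max (a i x) (a q x) - a i x)
                = sMon s (fun x => max (a' i x) (a' q x) - a' i x) := by
              apply sMon_congr
              intro x
              by_cases hx : x = t0
              · subst hx
                simp only [ha'def, if_pos rfl]
                omega
              · simp only [ha'def, if_neg hx]
            beta_reduce
            rw [hμ, hmon]; ring
          · apply Finset.sum_congr rfl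
            intro p _
            have hμ : μ p i = 1 := if_neg (fun hh => hi hh.2)
            have hmon : sMon s (fun x => max (a p x) (a i x) - a i x)
                = sMon s (fun x => max (a' p x) (a' i x) - a' i x) := by
              apply sMon_congr
              intro x
              by_cases hx : x = t0
              · subst hx
                simp only [ha'def, if_pos rfl]
                omega
              · simp only [ha'def, if_neg hx]
            beta_reduce
            rw [hμ, hmon]; ring
        rw [hcombsplit, hTBi, hμi, add_zero]
        have hc'i : c' i = c i := by rw [hc'def]; exact dif_neg hi
        have hfin := htC i
        rwa [hc'i] at hfin


lemma exists_perm {k : ℕ} (E : Finset (Fin k)) (t : Fin k) (ht : t ∉ E) :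
    ∃ (σ : Equiv.Perm (Fin k)) (i : Fin k), σ i = t ∧ σ '' {j | j < i} = ↑E := by
  classical
  set l := E.card with hl
  set m := Eᶜ.card with hm
  have hk : l + m = k := by
    rw [hl, hm]
    simpa using Finset.card_add_card_compl E
  have ht' : t ∈ Eᶜ := Finset.mem_compl.mpr ht
  have hmpos : 0 < m := Finset.card_pos.mpr ⟨t, ht'⟩
  let e1 : Fin l ≃o {x // x ∈ E} := E.orderIsoOfFin rfl
  let e2 : Fin m ≃o {x // x ∈ Eᶜ} := Eᶜ.orderIsoOfFin rfl
  let j0 : Fin m := e2.symm ⟨t, ht'⟩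
  let e2' : Fin m ≃ {x // x ∈ Eᶜ} := (Equiv.swap (⟨0, hmpos⟩ : Fin m) j0).trans e2.toEquiv
  let eC : {x // x ∈ Eᶜ} ≃ {x // ¬ x ∈ E} := Equiv.subtypeEquivRight (by intro x; simp)
  let σ : Equiv.Perm (Fin k) :=
    ((finCongr hk.symm).trans (finSumFinEquiv.symm)).trans
      (((e1.toEquiv.sumCongr (e2'.trans eC))).trans (Equiv.sumCompl (· ∈ E)))
  have hlk : l < k := by omega
  have key : ∀ j : Fin k, σ j ∈ E ↔ (j : ℕ) < l := by
    intro j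
    rcases (finSumFinEquiv (n := m)).surjective (finCongr hk.symm j) with ⟨w, hw⟩
    have hj : finSumFinEquiv.symm (finCongr hk.symm j) = w := by rw [← hw]; simp
    cases w with
    | inl p =>
        have hσ : σ j = ((e1.toEquiv p : {x // x ∈ E}) : Fin k) := by
          simp only [σ, Equiv.trans_apply, hj, Equiv.sumCongr_apply, Sum.map_inl,
            Equiv.sumCompl_apply_inl]
        have hval : (j : ℕ) = (p : ℕ) := by
          have := congrArg Fin.val hw
          simpa [Fin.coe_castAdd] using this.symm
        constructor
        · intro _; omega
        · intro _; rw [hσ]; exact (e1.toEquiv p).2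
    | inr q =>
        have hσ : σ j = ((eC (e2' q)) : Fin k) := by
          simp only [σ, Equiv.trans_apply, hj, Equiv.sumCongr_apply, Sum.map_inr,
            Equiv.sumCompl_apply_inr]
        have hval : (j : ℕ) = l + (q : ℕ) := by
          have := congrArg Fin.val hw
          simpa [Fin.coe_natAdd] using this.symm
        constructor
        · intro hmem
          exfalso
          have : ¬ ((eC (e2' q)) : Fin k) ∈ E := (eC (e2' q)).2
          rw [hσ] at hmem; exact this hmem
        · intro h; omega
  refine ⟨σ, ⟨l, hlk⟩, ?_, ?_⟩
  · have hj : finSumFinEquiv.symm (finCongr hk.symm (⟨l, hlk⟩ : Fin k))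
        = Sum.inr (⟨0, hmpos⟩ : Fin m) := by
      have : (finCongr hk.symm (⟨l, hlk⟩ : Fin k)) = Fin.natAdd l (⟨0, hmpos⟩ : Fin m) := by
        ext; simp
      rw [this, finSumFinEquiv_symm_apply_natAdd]
    simp only [σ, Equiv.trans_apply, hj, Equiv.sumCongr_apply, Sum.map_inr,
      Equiv.sumCompl_apply_inr]
    have : e2' (⟨0, hmpos⟩ : Fin m) = ⟨t, ht'⟩ := by
      simp [e2', j0, Equiv.swap_apply_left]
    rw [this]
    rfl
  · ext x
    constructor
    · rintro ⟨j, hj, rfl⟩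
      have : (j : ℕ) < l := hj
      exact (key j).mpr this
    · intro hx
      refine ⟨σ.symm x, ?_, by simp⟩
      have : σ (σ.symm x) ∈ E := by simpa using hx
      have := (key (σ.symm x)).mp this
      exact this

lemma regSeq_prop {R : Type*} [CommRing R] {k : ℕ} {s : Fin k → R}
    (hs : IsPermWeakRegSeq s) (E : Finset (Fin k)) (t : Fin k) (ht : t ∉ E) :
    ∀ r : R, r * s t ∈ Ideal.span (s '' ↑E) → r ∈ Ideal.span (s '' ↑E) := by
  obtain ⟨σ, i, hσt, hσE⟩ := exists_perm E t ht
  intro r hr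
  have himg : (s ∘ σ) '' {j | j < i} = s '' ↑E := by
    rw [Set.image_comp, hσE]
  have := hs σ i r
  rw [himg, Function.comp_apply, hσt] at this
  exact this hr


end SyzAux

/-- If `f 0, …, f (M−1)` are of `s`-monomial type with common leading monomial `δ`
(leading coefficient `u i · s^{a i}`), and all monomials of `∑ cᵢ fᵢ` are strictly smaller
than `δ`, then `∑ cᵢ fᵢ` is an `R`-linear combination of the `S'`-polynomials
`S'(fᵢ,fⱼ) = (uᵢ⁻¹ s^{(aᵢ ∨ aⱼ) − aᵢ}) fᵢ − (uⱼ⁻¹ s^{(aᵢ ∨ aⱼ) − aⱼ}) fⱼ`, each of which has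
all monomials strictly smaller than `δ`. -/
theorem stmt4 {R : Type*} [CommRing R] {k n M : ℕ} (s : Fin k → R)
    (hs : IsPermWeakRegSeq s) (hnu : ∀ j, ¬ IsUnit (s j))
    (m : MonomialOrd (Fin n)) (f : Fin M → MvPolynomial (Fin n) R)
    (u : Fin M → Rˣ) (a : Fin M → Fin k → ℕ) (δ : Fin n →₀ ℕ)
    (hne : ∀ i, f i ≠ 0) (hlm : ∀ i, IsLM m (f i) δ)
    (hlc : ∀ i, MvPolynomial.coeff δ (f i) = (u i : R) * sMon s (a i))
    (c : Fin M → R)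
    (hsmall : ∀ e ∈ (∑ i, MvPolynomial.C (c i) * f i).support, m.le e δ ∧ e ≠ δ) :
    let SP : Fin M → Fin M → MvPolynomial (Fin n) R := fun i j =>
      MvPolynomial.C (((u i)⁻¹ : Rˣ) * sMon s fun t => max (a i t) (a j t) - a i t) * f i -
      MvPolynomial.C (((u j)⁻¹ : Rˣ) * sMon s fun t => max (a i t) (a j t) - a j t) * f j
    (∃ r : Fin M → Fin M → R,
        ∑ i, MvPolynomial.C (c i) * f i = ∑ i, ∑ j, MvPolynomial.C (r i j) * SP i j) ∧
    ∀ i j, ∀ e ∈ (SP i j).support, m.le e δ ∧ e ≠ δ := by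
  intro SP
  classical
  have H : ∀ (E : Finset (Fin k)) (t : Fin k), t ∉ E → ∀ r : R,
      r * s t ∈ Ideal.span (s '' ↑E) → r ∈ Ideal.span (s '' ↑E) :=
    fun E t ht => SyzAux.regSeq_prop hs E t ht
  -- the coefficient of δ in the sum vanishes
  have hδ : MvPolynomial.coeff δ (∑ i, MvPolynomial.C (c i) * f i) = 0 := by
    by_contra h
    exact (hsmall δ (MvPolynomial.mem_support_iff.mpr h)).2 rfl
  have hrel : (∑ i, (c i * (u i : R)) * sMon s (a i)) = 0 := by
    have h1 : MvPolynomial.coeff δ (∑ i, MvPolynomial.C (c i) * f i)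
        = ∑ i, (c i * (u i : R)) * sMon s (a i) := by
      rw [MvPolynomial.coeff_sum]
      apply Finset.sum_congr rfl
      intro i _
      rw [MvPolynomial.coeff_C_mul, hlc i]
      ring
    rw [← h1, hδ]
  obtain ⟨t, ht⟩ := SyzAux.key s H k (∑ i, ∑ x, a i x) ∅ (Fin M) a
    (fun i => c i * (u i : R)) (by simp) (by simp) le_rfl
    (by rw [hrel]; exact Ideal.zero_mem _)
  have hteq : ∀ i, c i * (u i : R) = SyzAux.comb s a t i := by
    intro i
    have h2 := ht i
    simp only [Finset.coe_empty, Set.image_empty, Ideal.span_empty,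
      Ideal.mem_bot, sub_eq_zero] at h2
    exact h2
  have hscal : ∀ i, (((u i)⁻¹ : Rˣ) : R) * SyzAux.comb s a t i = c i := by
    intro i
    rw [← hteq i, mul_comm (c i), ← mul_assoc, Units.inv_mul, one_mul]
  constructor
  · refine ⟨t, ?_⟩
    have expand : (∑ i, ∑ j, MvPolynomial.C (t i j) * SP i j)
        = (∑ i, ∑ j, MvPolynomial.C (t i j * (((u i)⁻¹ : Rˣ) : R)
              * sMon s (fun x => max (a i x) (a j x) - a i x)) * f i)
          - (∑ i, ∑ j, MvPolynomial.C (t i j * (((u j)⁻¹ : Rˣ) : R)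
              * sMon s (fun x => max (a i x) (a j x) - a j x)) * f j) := by
      rw [← Finset.sum_sub_distrib]
      apply Finset.sum_congr rfl
      intro i _
      rw [← Finset.sum_sub_distrib]
      apply Finset.sum_congr rfl
      intro j _
      show MvPolynomial.C (t i j) * SP i j = _
      simp only [SP, map_mul]
      ring
    rw [expand, Finset.sum_comm (f := fun i j => MvPolynomial.C (t i j
        * (((u j)⁻¹ : Rˣ) : R) * sMon s (fun x => max (a i x) (a j x) - a j x)) * f j)]
    rw [← Finset.sum_sub_distrib]
    apply Finset.sum_congr rfl
    intro i _
    rw [← Finset.sum_mul, ← Finset.sum_mul, ← sub_mul]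
    have hC : ((∑ j : Fin M, MvPolynomial.C (t i j * (((u i)⁻¹ : Rˣ) : R)
            * sMon s (fun x => max (a i x) (a j x) - a i x)))
          - (∑ p : Fin M, MvPolynomial.C (t p i * (((u i)⁻¹ : Rˣ) : R)
            * sMon s (fun x => max (a p x) (a i x) - a i x)))
        : MvPolynomial (Fin n) R) = MvPolynomial.C (c i) := by
      rw [← map_sum, ← map_sum, ← map_sub]
      congr 1
      rw [← hscal i]
      unfold SyzAux.comb
      rw [mul_sub, Finset.mul_sum, Finset.mul_sum]
      congr 1 <;> exact Finset.sum_congr rfl (fun j _ => by ring)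
    rw [hC]
  · intro i j e he
    have hsupSP : (SP i j).support ⊆
        (MvPolynomial.C ((((u i)⁻¹ : Rˣ) : R)
            * sMon s (fun x => max (a i x) (a j x) - a i x)) * f i).support ∪
        (MvPolynomial.C ((((u j)⁻¹ : Rˣ) : R)
            * sMon s (fun x => max (a i x) (a j x) - a j x)) * f j).support :=
      MvPolynomial.support_sub _ _ _
    have hle : m.le e δ := by
      rcases Finset.mem_union.mp (hsupSP he) with h | h
      · have hfi : e ∈ (f i).support := by
          rw [MvPolynomial.mem_support_iff] at h ⊢
          intro hz
          rw [MvPolynomial.coeff_C_mul, hz, mul_zero] at h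
          exact h rfl
        rcases hlm i with ⟨h0, _⟩ | ⟨_, hall⟩
        · exact absurd h0 (hne i)
        · exact hall e hfi
      · have hfj : e ∈ (f j).support := by
          rw [MvPolynomial.mem_support_iff] at h ⊢
          intro hz
          rw [MvPolynomial.coeff_C_mul, hz, mul_zero] at h
          exact h rfl
        rcases hlm j with ⟨h0, _⟩ | ⟨_, hall⟩
        · exact absurd h0 (hne j)
        · exact hall e hfj
    refine ⟨hle, ?_⟩
    intro heδ
    subst heδ
    have hcoeff : MvPolynomial.coeff e (SP i j) = 0 := by
      show MvPolynomial.coeff e (_ - _) = 0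
      rw [MvPolynomial.coeff_sub, MvPolynomial.coeff_C_mul, MvPolynomial.coeff_C_mul,
        hlc i, hlc j]
      have hi' : (((u i)⁻¹ : Rˣ) : R) * sMon s (fun x => max (a i x) (a j x) - a i x)
          * ((u i : R) * sMon s (a i)) = sMon s (fun x => max (a i x) (a j x)) := by
        have := SyzAux.sMon_mul_of_le s (α := a i)
          (β := fun x => max (a i x) (a j x)) (fun x => le_max_left _ _)
        calc (((u i)⁻¹ : Rˣ) : R) * sMon s (fun x => max (a i x) (a j x) - a i x)
            * ((u i : R) * sMon s (a i))
            = ((((u i)⁻¹ : Rˣ) : R) * (u i : R))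
              * (sMon s (fun x => max (a i x) (a j x) - a i x) * sMon s (a i)) := by ring
          _ = sMon s (fun x => max (a i x) (a j x)) := by
              rw [Units.inv_mul, one_mul, this]
      have hj' : (((u j)⁻¹ : Rˣ) : R) * sMon s (fun x => max (a i x) (a j x) - a j x)
          * ((u j : R) * sMon s (a j)) = sMon s (fun x => max (a i x) (a j x)) := by
        have := SyzAux.sMon_mul_of_le s (α := a j)
          (β := fun x => max (a i x) (a j x)) (fun x => le_max_right _ _)
        calc (((u j)⁻¹ : Rˣ) : R) * sMon s (fun x => max (a i x) (a j x) - a j x)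
            * ((u j : R) * sMon s (a j))
            = ((((u j)⁻¹ : Rˣ) : R) * (u j : R))
              * (sMon s (fun x => max (a i x) (a j x) - a j x) * sMon s (a j)) := by ring
          _ = sMon s (fun x => max (a i x) (a j x)) := by
              rw [Units.inv_mul, one_mul, this]
      rw [hi', hj', sub_self]
    rw [MvPolynomial.mem_support_iff] at he
    exact he hcoeff
end

section
/- Let A be an ordinary matrix over a commutative ring R. Then the ideal I_bin(A) generated by all binary quasi-minors of A equals the ideal I_2(A) generated by the 2×2 minors of A. -/
/-- `x` is a binary quasi-minor of the matrix `A`: there are `n` distinct rows, `n` distinct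
columns, and permutations `σ, τ` of `Fin n` with `σ l ≠ τ l` for all `l`, such that
`x = ∏ l, A (ρ l) (γ (σ l)) − ∏ l, A (ρ l) (γ (τ l))` (the chosen entries form a binary
subquasi-matrix: exactly two per occupied row and column). -/
def IsBinaryQuasiMinor {R : Type*} [CommRing R] {p q : ℕ}
    (A : Matrix (Fin p) (Fin q) R) (x : R) : Prop :=
  ∃ (n : ℕ) (ρ : Fin n ↪ Fin p) (γ : Fin n ↪ Fin q) (σ τ : Equiv.Perm (Fin n)),
    (∀ l, σ l ≠ τ l) ∧
    x = ∏ l, A (ρ l) (γ (σ l)) - ∏ l, A (ρ l) (γ (τ l))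

private lemma prod_perm_sub_mem {R : Type*} [CommRing R] {n : ℕ} (B : Fin n → Fin n → R)
    (I : Ideal R)
    (hI : ∀ i j k l : Fin n, i ≠ j → k ≠ l → B i k * B j l - B i l * B j k ∈ I)
    (g : Equiv.Perm (Fin n)) :
    ∀ σ : Equiv.Perm (Fin n),
      (∏ l, B l ((g * σ) l)) - ∏ l, B l (σ l) ∈ I := by
  refine Equiv.Perm.swap_induction_on g (by simp) ?_
  intro f x y hxy ih σ
  set ν : Equiv.Perm (Fin n) := f * σ with hν
  have h1 : (∏ l, B l ((Equiv.swap x y * f * σ) l)) - ∏ l, B l (σ l)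
      = ((∏ l, B l (Equiv.swap x y (ν l))) - ∏ l, B l (ν l))
        + ((∏ l, B l (ν l)) - ∏ l, B l (σ l)) := by
    have h2 : ∀ l, (Equiv.swap x y * f * σ) l = Equiv.swap x y (ν l) := by
      intro l; simp [hν, Equiv.Perm.mul_apply]
    simp only [h2]; ring
  rw [h1]
  refine I.add_mem ?_ (ih σ)
  set i := ν⁻¹ x with hi
  set j := ν⁻¹ y with hj
  have hνi : ν i = x := ν.apply_symm_apply x
  have hνj : ν j = y := ν.apply_symm_apply y
  have hij : i ≠ j := by
    intro h
    exact hxy (by rw [← hνi, ← hνj, h])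
  have hjmem : j ∈ Finset.univ.erase i := Finset.mem_erase.2 ⟨fun h => hij h.symm, Finset.mem_univ j⟩
  have split : ∀ h : Fin n → R,
      ∏ l, h l = h i * (h j * ∏ l ∈ (Finset.univ.erase i).erase j, h l) := by
    intro h
    rw [Finset.mul_prod_erase _ _ hjmem, Finset.mul_prod_erase _ _ (Finset.mem_univ i)]
  have hrest : ∀ l ∈ (Finset.univ.erase i).erase j,
      B l (Equiv.swap x y (ν l)) = B l (ν l) := by
    intro l hl
    have hl' := Finset.mem_erase.1 hl
    have hl'' := Finset.mem_erase.1 hl'.2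
    have hx : ν l ≠ x := fun h => hl''.1 (by rw [hi, ← h, Equiv.Perm.inv_def, Equiv.symm_apply_apply])
    have hy : ν l ≠ y := fun h => hl'.1 (by rw [hj, ← h, Equiv.Perm.inv_def, Equiv.symm_apply_apply])
    rw [Equiv.swap_apply_of_ne_of_ne hx hy]
  have e1 : (∏ l, B l (Equiv.swap x y (ν l))) - ∏ l, B l (ν l)
      = (B i y * B j x - B i x * B j y) *
          ∏ l ∈ (Finset.univ.erase i).erase j, B l (ν l) := by
    rw [split (fun l => B l (Equiv.swap x y (ν l))), split (fun l => B l (ν l))]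
    rw [Finset.prod_congr rfl hrest]
    simp only [hνi, hνj, Equiv.swap_apply_left, Equiv.swap_apply_right]
    ring
  rw [e1]
  exact Ideal.mul_mem_right _ _ (hI i j y x hij (Ne.symm hxy))

/-- For an ordinary matrix `A`, the ideal of binary quasi-minors equals the ideal of
`2 × 2` minors. -/
theorem stmt6 {R : Type*} [CommRing R] {p q : ℕ} (A : Matrix (Fin p) (Fin q) R) :
    Ideal.span {x | IsBinaryQuasiMinor A x} =
      Ideal.span {x | ∃ i j : Fin p, ∃ k l : Fin q, i ≠ j ∧ k ≠ l ∧
        x = A i k * A j l - A i l * A j k} := by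
  apply le_antisymm
  · rw [Ideal.span_le]
    rintro x ⟨n, ρ, γ, σ, τ, -, rfl⟩
    set I := Ideal.span {x | ∃ i j : Fin p, ∃ k l : Fin q, i ≠ j ∧ k ≠ l ∧
        x = A i k * A j l - A i l * A j k} with hIdef
    set B : Fin n → Fin n → R := fun l m => A (ρ l) (γ m) with hB
    have hIB : ∀ i j k l : Fin n, i ≠ j → k ≠ l → B i k * B j l - B i l * B j k ∈ I := by
      intro i j k l hij hkl
      exact Ideal.subset_span ⟨ρ i, ρ j, γ k, γ l, ρ.injective.ne hij, γ.injective.ne hkl, rfl⟩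
    have := prod_perm_sub_mem B I hIB (σ * τ⁻¹) τ
    simpa [mul_assoc] using this
  · rw [Ideal.span_le]
    rintro x ⟨i, j, k, l, hij, hkl, rfl⟩
    refine Ideal.subset_span ?_
    refine ⟨2, ⟨![i, j], ?_⟩, ⟨![k, l], ?_⟩, 1, Equiv.swap 0 1, by decide, ?_⟩
    · intro a b hab
      fin_cases a <;> fin_cases b <;> simp_all
    · intro a b hab
      fin_cases a <;> fin_cases b <;> simp_all
    · simp [Fin.prod_univ_two]; rfl
end

section
/- Every binary quasi-minor of an ordinary matrix A of size n (i.e., of the form V_1···V_n − W_1···W_n with the V's and W's entries of A forming a binary subquasi-matrix) is an R-linear combination of 2×2 minors of A. -/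
private lemma aux_span {R : Type*} [CommRing R] {p q n : ℕ} (A : Matrix (Fin p) (Fin q) R)
    (r : Fin n → Fin p) (c : Fin n → Fin q)
    (hr : Function.Injective r) (hc : Function.Injective c) (π : Equiv.Perm (Fin n)) :
    (∏ m, A (r m) (c (π m))) - ∏ m, A (r m) (c m) ∈
      Submodule.span R {y : R | ∃ i j : Fin p, ∃ k l : Fin q, i ≠ j ∧ k ≠ l ∧
        y = A i k * A j l - A i l * A j k} := by
  induction π using Equiv.Perm.swap_induction_on
  case _ => simp
  case _ f x y hxy ih =>
    set a := f⁻¹ x with ha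
    set b := f⁻¹ y with hb
    have hab : a ≠ b := f⁻¹.injective.ne hxy
    have hfa : f a = x := f.apply_symm_apply x
    have hfb : f b = y := f.apply_symm_apply y
    have e1 : ∀ g : Fin n → R,
        ∏ m, g m = g a * (g b * ∏ m ∈ (Finset.univ.erase a).erase b, g m) := by
      intro g
      rw [← Finset.mul_prod_erase _ _ (Finset.mem_univ a),
        ← Finset.mul_prod_erase _ _ (Finset.mem_erase.mpr ⟨hab.symm, Finset.mem_univ b⟩)]
    have hP : ∏ m ∈ (Finset.univ.erase a).erase b, A (r m) (c ((Equiv.swap x y * f) m))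
        = ∏ m ∈ (Finset.univ.erase a).erase b, A (r m) (c (f m)) := by
      refine Finset.prod_congr rfl fun m hm => ?_
      have hmb : m ≠ b := (Finset.mem_erase.mp hm).1
      have hma : m ≠ a := (Finset.mem_erase.mp (Finset.mem_erase.mp hm).2).1
      have h1 : f m ≠ x := fun h => hma (by rw [ha, ← h]; exact (f.symm_apply_apply m).symm)
      have h2 : f m ≠ y := fun h => hmb (by rw [hb, ← h]; exact (f.symm_apply_apply m).symm)
      simp [Equiv.swap_apply_of_ne_of_ne h1 h2]
    have key : (∏ m, A (r m) (c ((Equiv.swap x y * f) m))) - ∏ m, A (r m) (c (f m))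
        = (∏ m ∈ (Finset.univ.erase a).erase b, A (r m) (c (f m))) *
          (A (r a) (c y) * A (r b) (c x) - A (r a) (c x) * A (r b) (c y)) := by
      rw [e1 (fun m => A (r m) (c ((Equiv.swap x y * f) m))),
        e1 (fun m => A (r m) (c (f m))), hP]
      simp only [Equiv.Perm.mul_apply, hfa, hfb, Equiv.swap_apply_left,
        Equiv.swap_apply_right]
      ring
    have hmem : (A (r a) (c y) * A (r b) (c x) - A (r a) (c x) * A (r b) (c y)) ∈
        Submodule.span R {y : R | ∃ i j : Fin p, ∃ k l : Fin q, i ≠ j ∧ k ≠ l ∧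
          y = A i k * A j l - A i l * A j k} :=
      Submodule.subset_span ⟨r a, r b, c y, c x, hr.ne hab, hc.ne hxy.symm, rfl⟩
    have hsplit : (∏ m, A (r m) (c ((Equiv.swap x y * f) m))) - ∏ m, A (r m) (c m)
        = ((∏ m, A (r m) (c ((Equiv.swap x y * f) m))) - ∏ m, A (r m) (c (f m)))
          + ((∏ m, A (r m) (c (f m))) - ∏ m, A (r m) (c m)) := by ring
    rw [hsplit, key]
    exact Submodule.add_mem _
      (Submodule.smul_mem _ (∏ m ∈ (Finset.univ.erase a).erase b, A (r m) (c (f m))) hmem) ih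

/-- Every binary quasi-minor of an ordinary matrix `A` is an `R`-linear combination of the
`2 × 2` minors of `A`. -/
theorem stmt7 {R : Type*} [CommRing R] {p q : ℕ} (A : Matrix (Fin p) (Fin q) R)
    (x : R) (hx : IsBinaryQuasiMinor A x) :
    x ∈ Submodule.span R {y : R | ∃ i j : Fin p, ∃ k l : Fin q, i ≠ j ∧ k ≠ l ∧
      y = A i k * A j l - A i l * A j k} := by
  obtain ⟨n, ρ, γ, σ, τ, -, hx⟩ := hx
  have h := aux_span A (fun m => ρ (τ⁻¹ m)) (fun m => γ m)
    (ρ.injective.comp τ⁻¹.injective) γ.injective (σ * τ⁻¹)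
  have e1 : ∏ m, A (ρ (τ⁻¹ m)) (γ ((σ * τ⁻¹) m)) = ∏ l, A (ρ l) (γ (σ l)) :=
    Equiv.prod_comp τ⁻¹ (fun l => A (ρ l) (γ (σ l)))
  have e2 : ∏ m, A (ρ (τ⁻¹ m)) (γ m) = ∏ l, A (ρ l) (γ (τ l)) := by
    rw [← Equiv.prod_comp τ (fun m => A (ρ (τ⁻¹ m)) (γ m))]
    simp
  rw [hx, ← e1, ← e2]
  exact h
end

section
/- Let n ≥ 2 and let f = V_1···V_n − W_1···W_n and g = Y_1···Y_m − Z_1···Z_m be binary quasi-minors of a generic quasi-matrix with distinct-variable entries, with leading terms V_1···V_n and Y_1···Y_m. Then the S-polynomial S(f,g) reduces to zero modulo the set of all binary quasi-minors of the quasi-matrix, for any monomial order. -/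
open MvPolynomial

/-- `x` is a binary quasi-minor of the quasi-matrix with entry function `e`. -/
def IsBinQM {S : Type*} [CommRing S] {ι κ : Type*} (e : ι → κ → Option S) (x : S) : Prop :=
  ∃ (nn : ℕ) (ρ : Fin nn ↪ ι) (γ : Fin nn ↪ κ) (σ τ : Equiv.Perm (Fin nn))
    (v w : Fin nn → S),
    (∀ l, σ l ≠ τ l) ∧ (∀ l, e (ρ l) (γ (σ l)) = some (v l)) ∧
    (∀ l, e (ρ l) (γ (τ l)) = some (w l)) ∧
    x = ∏ l, v l - ∏ l, w l

open Classical in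
/-- The generic quasi-matrix with occupied positions `P`, whose entries are the distinct
indeterminates `X ⟨(i,j), _⟩`. -/
noncomputable def genEntries (R : Type*) [CommRing R] {p q : ℕ}
    (P : Set (Fin p × Fin q)) : Fin p → Fin q → Option (MvPolynomial P R) :=
  fun i j => if h : (i, j) ∈ P then some (MvPolynomial.X ⟨(i, j), h⟩) else none



section Aux
variable {R : Type*} [CommRing R] {p q : ℕ} {P : Set (Fin p × Fin q)}

/-- row-count of an exponent vector -/
noncomputable def rowC (d : ↥P →₀ ℕ) : Fin p →₀ ℕ :=
  Finsupp.mapDomain (fun (x : ↥P) => (x : Fin p × Fin q).1) d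

noncomputable def colC (d : ↥P →₀ ℕ) : Fin q →₀ ℕ :=
  Finsupp.mapDomain (fun (x : ↥P) => (x : Fin p × Fin q).2) d

lemma rowC_add (a b : ↥P →₀ ℕ) : rowC (a + b) = rowC a + rowC b := Finsupp.mapDomain_add
lemma colC_add (a b : ↥P →₀ ℕ) : colC (a + b) = colC a + colC b := Finsupp.mapDomain_add

lemma le_mapDomain_apply {ι κ : Type*} [DecidableEq κ] (f : ι → κ) (d : ι →₀ ℕ) (x : ι) :
    d x ≤ Finsupp.mapDomain f d (f x) := by
  classical
  rw [Finsupp.mapDomain, Finsupp.sum, Finsupp.finset_sum_apply]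
  by_cases hx : x ∈ d.support
  · refine Finset.single_le_sum (f := fun a => (Finsupp.single (f a) (d a)) (f x))
      (fun i _ => Nat.zero_le _) hx |>.trans_eq' ?_
    simp [Finsupp.single_apply]
  · simp only [Finsupp.notMem_support_iff] at hx
    simp [hx]

lemma exists_row_of_rowC_ne {d : ↥P →₀ ℕ} {i : Fin p} (h : rowC d i ≠ 0) :
    ∃ x ∈ d.support, (↑x : Fin p × Fin q).1 = i := by
  classical
  have : i ∈ (rowC d).support := Finsupp.mem_support_iff.2 h
  have := Finsupp.mapDomain_support this
  simpa using Finset.mem_image.1 this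

lemma exists_col_of_colC_ne {d : ↥P →₀ ℕ} {j : Fin q} (h : colC d j ≠ 0) :
    ∃ x ∈ d.support, (↑x : Fin p × Fin q).2 = j := by
  classical
  have : j ∈ (colC d).support := Finsupp.mem_support_iff.2 h
  have := Finsupp.mapDomain_support this
  simpa using Finset.mem_image.1 this

lemma rowC_ne_of_mem {d : ↥P →₀ ℕ} {x : ↥P} (h : x ∈ d.support) :
    rowC d (↑x : Fin p × Fin q).1 ≠ 0 := by
  classical
  have h1 := le_mapDomain_apply (fun (x : ↥P) => (x : Fin p × Fin q).1) d x
  have h2 : d x ≠ 0 := Finsupp.mem_support_iff.1 h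
  exact fun h0 => h2 (Nat.le_zero.1 (h1.trans_eq h0))

lemma colC_ne_of_mem {d : ↥P →₀ ℕ} {x : ↥P} (h : x ∈ d.support) :
    colC d (↑x : Fin p × Fin q).2 ≠ 0 := by
  classical
  have h1 := le_mapDomain_apply (fun (x : ↥P) => (x : Fin p × Fin q).2) d x
  have h2 : d x ≠ 0 := Finsupp.mem_support_iff.1 h
  exact fun h0 => h2 (Nat.le_zero.1 (h1.trans_eq h0))

lemma prod_monomial_one {ι : Type*} (s : Finset ι) (d : ι → (↥P →₀ ℕ)) :
    (∏ k ∈ s, monomial (d k) (1 : R)) = monomial (∑ k ∈ s, d k) 1 := by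
  classical
  induction s using Finset.cons_induction with
  | empty => simp
  | cons a s ha ih => rw [Finset.prod_cons, Finset.sum_cons, ih, monomial_mul, one_mul]

end Aux

section Ord
variable {σ : Type*} (m : MonomialOrd σ)

lemma mle_of_le {a b : σ →₀ ℕ} (h : a ≤ b) : m.le a b := by
  have h0 : m.le 0 (b - a) := m.zero_le _
  have := m.add_right _ _ a h0
  rwa [zero_add, tsub_add_cancel_of_le h] at this

lemma mlt_wf [Finite σ] : WellFounded (fun a b : σ →₀ ℕ => m.le a b ∧ a ≠ b) := by
  have h1 : (Set.univ : Set (σ →₀ ℕ)).IsPWO :=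
    Set.partiallyWellOrderedOn_univ_iff.2 wellQuasiOrdered_le
  have h2 : (Set.univ : Set (σ →₀ ℕ)).PartiallyWellOrderedOn m.le := by
    rw [Set.partiallyWellOrderedOn_iff_exists_lt]
    intro f hf
    obtain ⟨i, j, hij, hle⟩ := Set.partiallyWellOrderedOn_iff_exists_lt.1 h1 f hf
    exact ⟨i, j, hij, mle_of_le m hle⟩
  haveI : IsPreorder (σ →₀ ℕ) m.le := { refl := m.refl, trans := m.trans }
  have h3 := h2.wellFoundedOn
  rw [Set.wellFoundedOn_univ] at h3
  refine Subrelation.wf (fun {a b} hab => ?_) h3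
  exact ⟨hab.1, fun hba => hab.2 (m.antisymm _ _ hab.1 hba)⟩

variable {R : Type*} [CommRing R] [Nontrivial R]

lemma isLM_monomial_one {c δ : σ →₀ ℕ} (h : IsLM m (monomial c (1:R)) δ) : δ = c := by
  classical
  rcases h with ⟨h0, _⟩ | ⟨hc, _⟩
  · exfalso
    have := congrArg (coeff c) h0
    simp [coeff_monomial] at this
  · rw [coeff_monomial] at hc
    by_contra hne
    exact hc (if_neg (fun h => hne h.symm))

lemma isLM_neg_monomial_one {c δ : σ →₀ ℕ} (h : IsLM m (-(monomial c (1:R))) δ) : δ = c := by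
  classical
  rcases h with ⟨h0, _⟩ | ⟨hc, _⟩
  · exfalso
    have := congrArg (coeff c) h0
    simp [coeff_monomial] at this
  · rw [coeff_neg, coeff_monomial] at hc
    by_contra hne
    exact hc (by rw [if_neg (fun h => hne h.symm), neg_zero])

lemma isLM_binomial {A B δ : σ →₀ ℕ} (hAB : A ≠ B) (hle : m.le B A)
    (h : IsLM m ((monomial A (1:R)) - monomial B 1) δ) : δ = A := by
  classical
  have hcA : coeff A ((monomial A (1:R)) - monomial B 1) = 1 := by
    simp [coeff_monomial, hAB, Ne.symm hAB]
  have hcB : coeff B ((monomial A (1:R)) - monomial B 1) = -1 := by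
    simp [coeff_monomial, hAB, Ne.symm hAB]
  rcases h with ⟨h0, _⟩ | ⟨hc, hmax⟩
  · exfalso; rw [h0] at hcA; simp at hcA
  · have hδ : δ = A ∨ δ = B := by
      by_contra hn
      push_neg at hn
      rw [coeff_sub, coeff_monomial, coeff_monomial,
        if_neg (fun h => hn.1 h.symm), if_neg (fun h => hn.2 h.symm)] at hc
      simp at hc
    rcases hδ with h | h
    · exact h
    · exfalso
      have hA : A ∈ ((monomial A (1:R)) - monomial B 1).support := by
        rw [mem_support_iff, hcA]; exact one_ne_zero
      have := hmax A hA
      rw [h] at this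
      exact hAB (m.antisymm _ _ this hle)

end Ord

section BQM
variable {R : Type*} [CommRing R] {p q : ℕ} {P : Set (Fin p × Fin q)}

lemma bqm_of_cycle {t : ℕ} (r : Fin t → Fin p) (hr : Function.Injective r)
    (c : Fin t → Fin q) (hc : Function.Injective c)
    (σ τ : Equiv.Perm (Fin t)) (hστ : ∀ k, σ k ≠ τ k)
    (A B : Fin t → ↥P)
    (hA : ∀ k, (↑(A k) : Fin p × Fin q) = (r k, c (σ k)))
    (hB : ∀ k, (↑(B k) : Fin p × Fin q) = (r k, c (τ k))) :
    IsBinQM (genEntries R P)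
      ((monomial (∑ k, Finsupp.single (A k) 1) (1:R)) -
        monomial (∑ k, Finsupp.single (B k) 1) 1) := by
  classical
  refine ⟨t, ⟨r, hr⟩, ⟨c, hc⟩, σ, τ, fun k => X (A k), fun k => X (B k), hστ, ?_, ?_, ?_⟩
  · intro l
    have hmem : (r l, c (σ l)) ∈ P := by rw [← hA l]; exact (A l).2
    rw [genEntries]
    simp only [Function.Embedding.coeFn_mk]
    rw [dif_pos hmem]
    congr 1
    congr 1
    exact Subtype.ext (hA l).symm
  · intro l
    have hmem : (r l, c (τ l)) ∈ P := by rw [← hB l]; exact (B l).2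
    rw [genEntries]
    simp only [Function.Embedding.coeFn_mk]
    rw [dif_pos hmem]
    congr 1
    congr 1
    exact Subtype.ext (hB l).symm
  · have h1 : (∏ l, (X (A l) : MvPolynomial ↥P R)) = monomial (∑ k, Finsupp.single (A k) 1) 1 := by
      rw [← prod_monomial_one]
      rfl
    have h2 : (∏ l, (X (B l) : MvPolynomial ↥P R)) = monomial (∑ k, Finsupp.single (B k) 1) 1 := by
      rw [← prod_monomial_one]
      rfl
    rw [h1, h2]

lemma sum_single_le {t : ℕ} {A : Fin t → ↥P} (hA : Function.Injective A)
    {d : ↥P →₀ ℕ} (hmem : ∀ k, A k ∈ d.support) :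
    (∑ k, Finsupp.single (A k) 1) ≤ d := by
  classical
  rw [Finsupp.le_def]
  intro x
  rw [Finsupp.finset_sum_apply]
  by_cases hx : ∃ k, A k = x
  · obtain ⟨k₀, hk₀⟩ := hx
    have hsum : (∑ k, (Finsupp.single (A k) 1) x) = 1 := by
      rw [Finset.sum_eq_single_of_mem k₀ (Finset.mem_univ _)]
      · rw [hk₀, Finsupp.single_apply, if_pos rfl]
      · intro k _ hk
        rw [Finsupp.single_apply, if_neg]
        intro h
        exact hk (hA (by rw [hk₀, h]))
    rw [hsum]
    have := Finsupp.mem_support_iff.1 (hmem k₀)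
    rw [hk₀] at this
    omega
  · push_neg at hx
    rw [Finset.sum_eq_zero]
    · exact Nat.zero_le _
    intro k _
    rw [Finsupp.single_apply, if_neg (hx k)]

lemma sum_single_apply_pos {t : ℕ} (A : Fin t → ↥P) (k₀ : Fin t) :
    (∑ k, Finsupp.single (A k) 1) (A k₀) ≠ 0 := by
  classical
  rw [Finsupp.finset_sum_apply]
  intro h
  have := Finset.sum_eq_zero_iff.1 h k₀ (Finset.mem_univ _)
  rw [Finsupp.single_apply, if_pos rfl] at this
  omega

lemma sum_single_apply_zero {t : ℕ} (A : Fin t → ↥P) (x : ↥P) (hx : ∀ k, A k ≠ x) :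
    (∑ k, Finsupp.single (A k) 1) x = 0 := by
  classical
  rw [Finsupp.finset_sum_apply]
  exact Finset.sum_eq_zero fun k _ => by rw [Finsupp.single_apply, if_neg (hx k)]

end BQM

section Cycle
variable {R : Type*} [CommRing R] {p q : ℕ} {P : Set (Fin p × Fin q)}

lemma fin_rotate_ne {t : ℕ} (ht : 2 ≤ t) (k : Fin t) : finRotate t k ≠ k := by
  obtain ⟨t', rfl⟩ : ∃ t', t = t' + 1 := ⟨t - 1, by omega⟩
  rw [finRotate_succ_apply]
  intro h
  have h1 : (1 : Fin (t' + 1)) = 0 := by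
    have := congrArg (fun z => z - k) h
    simpa using this
  have := congrArg Fin.val h1
  rw [Fin.val_one', Fin.val_zero, Nat.mod_eq_of_lt (by omega)] at this
  omega

lemma finRotate_val {t : ℕ} (ht : 0 < t) (k : Fin t) :
    ((finRotate t k : Fin t) : ℕ) = if (k:ℕ) + 1 = t then 0 else (k:ℕ) + 1 := by
  obtain ⟨t', rfl⟩ : ∃ t', t = t' + 1 := ⟨t - 1, by omega⟩
  rw [finRotate_succ_apply, Fin.val_add_one]
  by_cases hl : k = Fin.last t'
  · rw [if_pos hl, if_pos]
    rw [hl]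
    simp [Fin.last]
  · rw [if_neg hl, if_neg]
    intro hh
    apply hl
    apply Fin.ext
    simp only [Fin.val_last]
    omega

lemma rowC_eq_of_maps {t : ℕ} (A B : Fin t → ↥P) (r : Fin t → Fin p)
    (hA : ∀ k, (↑(A k) : Fin p × Fin q).1 = r k) (hB : ∀ k, (↑(B k) : Fin p × Fin q).1 = r k) :
    rowC (∑ k, Finsupp.single (A k) 1) = rowC (∑ k, Finsupp.single (B k) 1) := by
  rw [rowC, rowC, Finsupp.mapDomain_finset_sum, Finsupp.mapDomain_finset_sum]
  refine Finset.sum_congr rfl fun k _ => ?_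
  rw [Finsupp.mapDomain_single, Finsupp.mapDomain_single, hA, hB]

lemma colC_eq_of_maps {t : ℕ} (A B : Fin t → ↥P) (c : Fin t → Fin q) (τ : Equiv.Perm (Fin t))
    (hA : ∀ k, (↑(A k) : Fin p × Fin q).2 = c k) (hB : ∀ k, (↑(B k) : Fin p × Fin q).2 = c (τ k)) :
    colC (∑ k, Finsupp.single (A k) 1) = colC (∑ k, Finsupp.single (B k) 1) := by
  rw [colC, colC, Finsupp.mapDomain_finset_sum, Finsupp.mapDomain_finset_sum]
  have h1 : ∀ k, Finsupp.mapDomain (fun (x : ↥P) => (x : Fin p × Fin q).2)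
      (Finsupp.single (A k) 1) = Finsupp.single (c k) (1:ℕ) := by
    intro k; rw [Finsupp.mapDomain_single, hA]
  have h2 : ∀ k, Finsupp.mapDomain (fun (x : ↥P) => (x : Fin p × Fin q).2)
      (Finsupp.single (B k) 1) = Finsupp.single (c (τ k)) (1:ℕ) := by
    intro k; rw [Finsupp.mapDomain_single, hB]
  simp_rw [h1, h2]
  exact (Equiv.sum_comp τ (fun j => Finsupp.single (c j) (1:ℕ))).symm

lemma exists_cycle {α β : ↥P →₀ ℕ} (hne : α ≠ β)
    (hrow : rowC α = rowC β) (hcol : colC α = colC β) :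
    ∃ Mα Mβ : ↥P →₀ ℕ, Mα ≤ α ∧ Mβ ≤ β ∧ Mα ≠ Mβ ∧
      rowC Mα = rowC Mβ ∧ colC Mα = colC Mβ ∧
      IsBinQM (genEntries R P) ((monomial Mα (1:R)) - monomial Mβ 1) := by
  classical
  set α' := α - α ⊓ β with hα'def
  set β' := β - α ⊓ β with hβ'def
  have hα'le : α' ≤ α := tsub_le_self
  have hβ'le : β' ≤ β := tsub_le_self
  have hdisj : ∀ x : ↥P, x ∈ α'.support → x ∉ β'.support := by
    intro x hx hy
    have h1 : α' x ≠ 0 := Finsupp.mem_support_iff.1 hx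
    have h2 : β' x ≠ 0 := Finsupp.mem_support_iff.1 hy
    have hmin : (α ⊓ β) x = min (α x) (β x) := by rw [Finsupp.inf_apply]
    rw [hα'def, Finsupp.tsub_apply, hmin] at h1
    rw [hβ'def, Finsupp.tsub_apply, hmin] at h2
    omega
  have hsplitα : α' + α ⊓ β = α := tsub_add_cancel_of_le inf_le_left
  have hsplitβ : β' + α ⊓ β = β := tsub_add_cancel_of_le inf_le_right
  have hrow' : rowC α' = rowC β' := by
    have h1 : rowC α' + rowC (α ⊓ β) = rowC β' + rowC (α ⊓ β) := by
      rw [← rowC_add, ← rowC_add, hsplitα, hsplitβ, hrow]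
    ext i
    have := congrArg (fun d => d i) h1
    simp only [Finsupp.add_apply] at this
    omega
  have hcol' : colC α' = colC β' := by
    have h1 : colC α' + colC (α ⊓ β) = colC β' + colC (α ⊓ β) := by
      rw [← colC_add, ← colC_add, hsplitα, hsplitβ, hcol]
    ext i
    have := congrArg (fun d => d i) h1
    simp only [Finsupp.add_apply] at this
    omega
  have hane : α' ≠ 0 := by
    intro h0
    have hβ0 : β' = 0 := by
      by_contra hb
      obtain ⟨x, hx⟩ := Finsupp.support_nonempty_iff.2 hb
      have := rowC_ne_of_mem hx
      rw [← hrow', h0] at this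
      simp [rowC] at this
    apply hne
    have ha : α = α ⊓ β := by
      conv_lhs => rw [← hsplitα, h0, zero_add]
    have hb : β = α ⊓ β := by
      conv_lhs => rw [← hsplitβ, hβ0, zero_add]
    exact ha.trans hb.symm
  obtain ⟨x₀, hx₀⟩ := Finsupp.support_nonempty_iff.2 hane
  -- step functions
  have stepB : ∀ x : ↥P, x ∈ α'.support →
      ∃ y : ↥P, y ∈ β'.support ∧ (↑y : Fin p × Fin q).2 = (↑x : Fin p × Fin q).2 := by
    intro x hx
    have h1 := colC_ne_of_mem hx
    rw [hcol'] at h1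
    obtain ⟨y, hy, hyc⟩ := exists_col_of_colC_ne h1
    exact ⟨y, hy, hyc⟩
  have stepA : ∀ y : ↥P, y ∈ β'.support →
      ∃ x : ↥P, x ∈ α'.support ∧ (↑x : Fin p × Fin q).1 = (↑y : Fin p × Fin q).1 := by
    intro y hy
    have h1 := rowC_ne_of_mem hy
    rw [← hrow'] at h1
    obtain ⟨x, hx, hxc⟩ := exists_row_of_rowC_ne h1
    exact ⟨x, hx, hxc⟩
  let FB : ↥P → ↥P := fun x =>
    if h : ∃ y : ↥P, y ∈ β'.support ∧ (↑y : Fin p × Fin q).2 = (↑x : Fin p × Fin q).2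
    then h.choose else x
  let FA : ↥P → ↥P := fun y =>
    if h : ∃ x : ↥P, x ∈ α'.support ∧ (↑x : Fin p × Fin q).1 = (↑y : Fin p × Fin q).1
    then h.choose else y
  have hFB : ∀ x, x ∈ α'.support →
      FB x ∈ β'.support ∧ (↑(FB x) : Fin p × Fin q).2 = (↑x : Fin p × Fin q).2 := by
    intro x hx
    have h := stepB x hx
    simp only [FB, dif_pos h]
    exact h.choose_spec
  have hFA : ∀ y, y ∈ β'.support →
      FA y ∈ α'.support ∧ (↑(FA y) : Fin p × Fin q).1 = (↑y : Fin p × Fin q).1 := by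
    intro y hy
    have h := stepA y hy
    simp only [FA, dif_pos h]
    exact h.choose_spec
  let a : ℕ → ↥P := fun n => Nat.rec x₀ (fun _ prev => FA (FB prev)) n
  let b : ℕ → ↥P := fun n => FB (a n)
  have hamem : ∀ n, a n ∈ α'.support := by
    intro n
    induction n with
    | zero => exact hx₀
    | succ n ih => exact (hFA _ ((hFB _ ih).1)).1
  have hbmem : ∀ n, b n ∈ β'.support := by
    intro n
    show FB (a n) ∈ β'.support
    exact (hFB _ (hamem n)).1
  have hbcol : ∀ n, (b n).val.2 = (a n).val.2 := by
    intro n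
    exact (hFB _ (hamem n)).2
  have harow : ∀ n, (a (n+1)).val.1 = (b n).val.1 := by
    intro n
    exact (hFA _ (hbmem n)).2
  -- pigeonhole
  have hexR : ∃ N, ∃ k, k < N ∧ (a N).val.1 = (a k).val.1 := by
    obtain ⟨x, y, hxy, hfe⟩ :=
      Finite.exists_ne_map_eq_of_infinite (fun n => (a n).val.1)
    rcases Nat.lt_or_ge x y with h | h
    · exact ⟨y, x, h, hfe.symm⟩
    · exact ⟨x, y, lt_of_le_of_ne h (Ne.symm hxy), hfe⟩
  have hexC : ∃ N, ∃ k, k < N ∧ (a N).val.2 = (a k).val.2 := by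
    obtain ⟨x, y, hxy, hfe⟩ :=
      Finite.exists_ne_map_eq_of_infinite (fun n => (a n).val.2)
    rcases Nat.lt_or_ge x y with h | h
    · exact ⟨y, x, h, hfe.symm⟩
    · exact ⟨x, y, lt_of_le_of_ne h (Ne.symm hxy), hfe⟩
  set nr := Nat.find hexR with hnrdef
  set nc := Nat.find hexC with hncdef
  have hrowinj : ∀ i j, i < j → j < nr →
      (a i).val.1 ≠ (a j).val.1 := by
    intro i j hij hj h
    exact Nat.find_min hexR hj ⟨i, hij, h.symm⟩
  have hcolinj : ∀ i j, i < j → j < nc →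
      (a i).val.2 ≠ (a j).val.2 := by
    intro i j hij hj h
    exact Nat.find_min hexC hj ⟨i, hij, h.symm⟩
  rcases Nat.lt_or_ge nc nr with hcase | hcase
  · -- column-repeat case
    obtain ⟨A0, hA0lt, hA0eq⟩ := Nat.find_spec hexC
    rw [← hncdef] at hA0lt hA0eq
    set t := nc - A0 with htdef
    have ht2 : 2 ≤ t := by
      rcases Nat.lt_or_ge (A0 + 1) nc with h | h
      · omega
      · exfalso
        have hnc : nc = A0 + 1 := by omega
        have hb1 : (b A0).val.1 = (a (A0+1)).val.1 := (harow A0).symm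
        have hb2 : (b A0).val.2 = (a (A0+1)).val.2 := by
          rw [hbcol A0, ← hnc, hA0eq]
        have hba : b A0 = a (A0+1) := Subtype.ext (Prod.ext hb1 hb2)
        exact hdisj _ (hamem (A0+1)) (hba ▸ hbmem A0)
    have htpos : 0 < t := by omega
    let r : Fin t → Fin p := fun k => (a (A0 + 1 + (k:ℕ))).val.1
    let c : Fin t → Fin q := fun k => (a (A0 + (k:ℕ))).val.2
    have hrinj : Function.Injective r := by
      intro k k' h
      by_contra hkk
      have hne2 : (k:ℕ) ≠ (k':ℕ) := fun hh => hkk (Fin.ext hh)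
      have h1 : A0 + 1 + (k:ℕ) < nr := by have := k.isLt; omega
      have h2 : A0 + 1 + (k':ℕ) < nr := by have := k'.isLt; omega
      rcases hne2.lt_or_gt with hlt | hlt
      · exact hrowinj _ _ (by omega) h2 h
      · exact hrowinj _ _ (by omega) h1 h.symm
    have hcinj : Function.Injective c := by
      intro k k' h
      by_contra hkk
      have hne2 : (k:ℕ) ≠ (k':ℕ) := fun hh => hkk (Fin.ext hh)
      have h1 : A0 + (k:ℕ) < nc := by have := k.isLt; omega
      have h2 : A0 + (k':ℕ) < nc := by have := k'.isLt; omega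
      rcases hne2.lt_or_gt with hlt | hlt
      · exact hcolinj _ _ (by omega) h2 h
      · exact hcolinj _ _ (by omega) h1 h.symm
    let Af : Fin t → ↥P := fun k => a (A0 + 1 + (k:ℕ))
    let Bf : Fin t → ↥P := fun k => b (A0 + (k:ℕ))
    have hfr : ∀ k : Fin t, ((finRotate t k : Fin t) : ℕ) =
        if (k:ℕ) + 1 = t then 0 else (k:ℕ) + 1 := fun k => finRotate_val htpos k
    have hAcoe : ∀ k, (Af k).val = (r k, c (finRotate t k)) := by
      intro k
      refine Prod.ext rfl ?_
      show (a (A0 + 1 + (k:ℕ))).val.2 = (a (A0 + ((finRotate t k : Fin t):ℕ))).val.2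
      rw [hfr k]
      by_cases hkt : (k:ℕ) + 1 = t
      · rw [if_pos hkt]
        have hkt2 : (k:ℕ) + 1 = nc - A0 := by rw [← htdef]; exact hkt
        have e1 : A0 + 1 + (k:ℕ) = nc := by
          rw [Nat.add_assoc, Nat.add_comm 1 (k:ℕ), hkt2]
          exact Nat.add_sub_cancel' (le_of_lt hA0lt)
        rw [e1, Nat.add_zero]
        exact hA0eq
      · rw [if_neg hkt]
        have e1 : A0 + 1 + (k:ℕ) = A0 + ((k:ℕ) + 1) := by
          rw [Nat.add_assoc, Nat.add_comm 1 (k:ℕ)]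
        rw [e1]
    have hBcoe : ∀ k, (Bf k).val = (r k, c k) := by
      intro k
      refine Prod.ext ?_ (hbcol _)
      show (b (A0 + (k:ℕ))).val.1 = (a (A0 + 1 + (k:ℕ))).val.1
      rw [← harow (A0 + (k:ℕ))]
      congr 1
      rw [Nat.add_assoc, Nat.add_comm (k:ℕ) 1, ← Nat.add_assoc]
    have hAfinj : Function.Injective Af := by
      intro k k' h
      exact hrinj (congrArg (fun z : ↥P => z.val.1) h)
    have hBfinj : Function.Injective Bf := by
      intro k k' h
      apply hrinj
      have e := (hBcoe k).symm.trans ((congrArg Subtype.val h).trans (hBcoe k'))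
      exact (Prod.ext_iff.1 e).1
    have hστ : ∀ k : Fin t, (finRotate t) k ≠ (1 : Equiv.Perm (Fin t)) k := by
      intro k h
      rw [Equiv.Perm.one_apply] at h
      exact fin_rotate_ne ht2 k h
    refine ⟨∑ k, Finsupp.single (Af k) 1, ∑ k, Finsupp.single (Bf k) 1, ?_, ?_, ?_, ?_, ?_, ?_⟩
    · exact le_trans (sum_single_le hAfinj (fun k => hamem _)) hα'le
    · exact le_trans (sum_single_le hBfinj (fun k => hbmem _)) hβ'le
    · intro hMeq
      have h1 := sum_single_apply_pos Af ⟨0, htpos⟩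
      rw [hMeq] at h1
      apply h1
      apply sum_single_apply_zero
      intro k hk
      have hmem2 : Bf k ∈ β'.support := hbmem _
      rw [hk] at hmem2
      have hmem1 : Af ⟨0, htpos⟩ ∈ α'.support := hamem (A0 + 1 + ((⟨0, htpos⟩ : Fin t) : ℕ))
      exact hdisj _ hmem1 hmem2
    · exact rowC_eq_of_maps Af Bf r (fun k => rfl)
        (fun k => (Prod.ext_iff.1 (hBcoe k)).1)
    · exact (colC_eq_of_maps Bf Af c (finRotate t)
        (fun k => (Prod.ext_iff.1 (hBcoe k)).2)
        (fun k => (Prod.ext_iff.1 (hAcoe k)).2)).symm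
    · exact bqm_of_cycle r hrinj c hcinj (finRotate t) 1 hστ Af Bf hAcoe
        (fun k => hBcoe k)
  · -- row-repeat case
    obtain ⟨A0, hA0lt, hA0eq⟩ := Nat.find_spec hexR
    rw [← hnrdef] at hA0lt hA0eq
    set t := nr - A0 with htdef
    have ht2 : 2 ≤ t := by
      rcases Nat.lt_or_ge (A0 + 1) nr with h | h
      · omega
      · exfalso
        have hnr : nr = A0 + 1 := by omega
        have hb1 : (b A0).val.1 = (a A0).val.1 := by
          rw [← harow A0, ← hnr]
          exact hA0eq
        have hb2 : (b A0).val.2 = (a A0).val.2 := hbcol A0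
        have hba : b A0 = a A0 := Subtype.ext (Prod.ext hb1 hb2)
        exact hdisj _ (hamem A0) (hba ▸ hbmem A0)
    have htpos : 0 < t := by omega
    let r : Fin t → Fin p := fun k => (a (A0 + (k:ℕ))).val.1
    let c : Fin t → Fin q := fun k => (a (A0 + (k:ℕ))).val.2
    have hrinj : Function.Injective r := by
      intro k k' h
      by_contra hkk
      have hne2 : (k:ℕ) ≠ (k':ℕ) := fun hh => hkk (Fin.ext hh)
      have h1 : A0 + (k:ℕ) < nr := by have := k.isLt; omega
      have h2 : A0 + (k':ℕ) < nr := by have := k'.isLt; omega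
      rcases hne2.lt_or_gt with hlt | hlt
      · exact hrowinj _ _ (by omega) h2 h
      · exact hrowinj _ _ (by omega) h1 h.symm
    have hcinj : Function.Injective c := by
      intro k k' h
      by_contra hkk
      have hne2 : (k:ℕ) ≠ (k':ℕ) := fun hh => hkk (Fin.ext hh)
      have h1 : A0 + (k:ℕ) < nc := by have := k.isLt; omega
      have h2 : A0 + (k':ℕ) < nc := by have := k'.isLt; omega
      rcases hne2.lt_or_gt with hlt | hlt
      · exact hcolinj _ _ (by omega) h2 h
      · exact hcolinj _ _ (by omega) h1 h.symm
    let τ : Equiv.Perm (Fin t) := (finRotate t)⁻¹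
    let Af : Fin t → ↥P := fun k => a (A0 + (k:ℕ))
    let Bf : Fin t → ↥P := fun k => b (A0 + ((τ k : Fin t):ℕ))
    have hfr : ∀ k : Fin t, ((finRotate t k : Fin t) : ℕ) =
        if (k:ℕ) + 1 = t then 0 else (k:ℕ) + 1 := fun k => finRotate_val htpos k
    have hBrow : ∀ k : Fin t, (b (A0 + (k:ℕ))).val.1 = r (finRotate t k) := by
      intro k
      show (b (A0 + (k:ℕ))).val.1 = (a (A0 + ((finRotate t k : Fin t):ℕ))).val.1
      rw [← harow (A0 + (k:ℕ))]
      rw [hfr k]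
      by_cases hkt : (k:ℕ) + 1 = t
      · rw [if_pos hkt]
        have hkt2 : (k:ℕ) + 1 = nr - A0 := by rw [← htdef]; exact hkt
        have e1 : A0 + (k:ℕ) + 1 = nr := by
          rw [Nat.add_assoc, hkt2]
          exact Nat.add_sub_cancel' (le_of_lt hA0lt)
        rw [e1, Nat.add_zero]
        exact hA0eq
      · rw [if_neg hkt]
        rfl
    have hAcoe : ∀ k, (Af k).val = (r k, c ((1 : Equiv.Perm (Fin t)) k)) := by
      intro k
      rfl
    have hBcoe : ∀ k, (Bf k).val = (r k, c (τ k)) := by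
      intro k
      refine Prod.ext ?_ (hbcol _)
      show (b (A0 + ((τ k : Fin t):ℕ))).val.1 = r k
      rw [hBrow (τ k)]
      congr 1
      exact Equiv.apply_symm_apply (finRotate t) k
    have hAfinj : Function.Injective Af := by
      intro k k' h
      exact hrinj (congrArg (fun z : ↥P => z.val.1) h)
    have hBfinj : Function.Injective Bf := by
      intro k k' h
      apply hrinj
      have e := (hBcoe k).symm.trans ((congrArg Subtype.val h).trans (hBcoe k'))
      exact (Prod.ext_iff.1 e).1
    have hστ : ∀ k : Fin t, (1 : Equiv.Perm (Fin t)) k ≠ τ k := by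
      intro k h
      rw [Equiv.Perm.one_apply] at h
      have h2 : finRotate t k = k := by
        conv_lhs => rw [h]
        exact Equiv.apply_symm_apply (finRotate t) k
      exact fin_rotate_ne ht2 k h2
    refine ⟨∑ k, Finsupp.single (Af k) 1, ∑ k, Finsupp.single (Bf k) 1, ?_, ?_, ?_, ?_, ?_, ?_⟩
    · exact le_trans (sum_single_le hAfinj (fun k => hamem _)) hα'le
    · exact le_trans (sum_single_le hBfinj (fun k => hbmem _)) hβ'le
    · intro hMeq
      have h1 := sum_single_apply_pos Af ⟨0, htpos⟩
      rw [hMeq] at h1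
      apply h1
      apply sum_single_apply_zero
      intro k hk
      have hmem2 : Bf k ∈ β'.support := hbmem _
      rw [hk] at hmem2
      have hmem1 : Af ⟨0, htpos⟩ ∈ α'.support := hamem (A0 + ((⟨0, htpos⟩ : Fin t) : ℕ))
      exact hdisj _ hmem1 hmem2
    · exact rowC_eq_of_maps Af Bf r (fun k => rfl)
        (fun k => (Prod.ext_iff.1 (hBcoe k)).1)
    · exact colC_eq_of_maps Af Bf c τ (fun k => rfl)
        (fun k => (Prod.ext_iff.1 (hBcoe k)).2)
    · exact bqm_of_cycle r hrinj c hcinj 1 τ hστ Af Bf hAcoe hBcoe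

end Cycle

section Key
variable {R : Type*} [CommRing R] {p q : ℕ} {P : Set (Fin p × Fin q)}

lemma isLM_binomial' {σ : Type*} (m : MonomialOrd σ) {R : Type*} [CommRing R] [Nontrivial R]
    {A B δ : σ →₀ ℕ} (hAB : A ≠ B) (hle : m.le A B)
    (h : IsLM m ((monomial A (1:R)) - monomial B 1) δ) : δ = B := by
  classical
  have hcA : coeff A ((monomial A (1:R)) - monomial B 1) = 1 := by
    simp [coeff_monomial, hAB, Ne.symm hAB]
  have hcB : coeff B ((monomial A (1:R)) - monomial B 1) = -1 := by
    simp [coeff_monomial, hAB, Ne.symm hAB]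
  rcases h with ⟨h0, _⟩ | ⟨hc, hmax⟩
  · exfalso; rw [h0] at hcA; simp at hcA
  · have hδ : δ = A ∨ δ = B := by
      by_contra hn
      push_neg at hn
      rw [coeff_sub, coeff_monomial, coeff_monomial,
        if_neg (fun h => hn.1 h.symm), if_neg (fun h => hn.2 h.symm)] at hc
      simp at hc
    rcases hδ with h | h
    · exfalso
      have hB : B ∈ ((monomial A (1:R)) - monomial B 1).support := by
        rw [mem_support_iff, hcB]
        simp
      have := hmax B hB
      rw [h] at this
      exact hAB (m.antisymm _ _ hle this)
    · exact h

lemma key_decomp [Nontrivial R] (m : MonomialOrd ↥P) :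
    ∀ ab : (↥P →₀ ℕ) × (↥P →₀ ℕ), ∀ bound : ↥P →₀ ℕ,
      rowC ab.1 = rowC ab.2 → colC ab.1 = colC ab.2 →
      m.le ab.1 bound → m.le ab.2 bound →
      ∃ (N : ℕ) (g pc : Fin N → MvPolynomial ↥P R),
        (∀ i, IsBinQM (genEntries R P) (g i)) ∧
        ((monomial ab.1 (1:R)) - monomial ab.2 1 = ∑ i, pc i * g i) ∧
        ∀ i, pc i ≠ 0 → ∀ δp δh, IsLM m (pc i) δp → IsLM m (g i) δh →
          m.le (δp + δh) bound := by
  have hwf : WellFounded (Prod.Lex (fun a b : ↥P →₀ ℕ => m.le a b ∧ a ≠ b)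
      (fun a b : ↥P →₀ ℕ => m.le a b ∧ a ≠ b)) := (mlt_wf m).prod_lex (mlt_wf m)
  intro ab
  induction ab using hwf.induction with
  | _ ab ih =>
  obtain ⟨α, β⟩ := ab
  intro bound hrowe hcole hbα hbβ
  simp only at hrowe hcole hbα hbβ ⊢
  by_cases hab : α = β
  · subst hab
    exact ⟨0, Fin.elim0, Fin.elim0, fun i => i.elim0, by simp, fun i => i.elim0⟩
  obtain ⟨Mα, Mβ, hMαle, hMβle, hMne, hMrow, hMcol, hBQM⟩ :=
    exists_cycle (R := R) hab hrowe hcole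
  rcases m.total Mβ Mα with hcmp | hcmp
  · -- reduce α
    have hsplit : (α - Mα) + Mα = α := tsub_add_cancel_of_le hMαle
    have hprod : (monomial (α - Mα) (1:R)) * ((monomial Mα 1) - monomial Mβ 1)
        = monomial α 1 - monomial ((α - Mα) + Mβ) 1 := by
      rw [mul_sub, monomial_mul, monomial_mul, one_mul, hsplit]
    have hle1 : m.le ((α - Mα) + Mβ) α := by
      have h0 := m.add_right Mβ Mα (α - Mα) hcmp
      rw [add_comm Mβ (α - Mα), add_comm Mα (α - Mα), hsplit] at h0
      exact h0
    have hne1 : (α - Mα) + Mβ ≠ α := by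
      intro he
      exact hMne (add_left_cancel (he.trans hsplit.symm)).symm
    have hrow1 : rowC ((α - Mα) + Mβ) = rowC α := by
      calc rowC ((α - Mα) + Mβ) = rowC (α - Mα) + rowC Mβ := rowC_add _ _
        _ = rowC (α - Mα) + rowC Mα := by rw [hMrow]
        _ = rowC ((α - Mα) + Mα) := (rowC_add _ _).symm
        _ = rowC α := by rw [hsplit]
    have hcol1 : colC ((α - Mα) + Mβ) = colC α := by
      calc colC ((α - Mα) + Mβ) = colC (α - Mα) + colC Mβ := colC_add _ _
        _ = colC (α - Mα) + colC Mα := by rw [hMcol]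
        _ = colC ((α - Mα) + Mα) := (colC_add _ _).symm
        _ = colC α := by rw [hsplit]
    obtain ⟨N, g, pc, hgmem, hsum, hcond⟩ :=
      ih ((α - Mα) + Mβ, β) (Prod.Lex.left _ _ ⟨hle1, hne1⟩) bound
        (hrow1.trans hrowe) (hcol1.trans hcole)
        (m.trans _ _ _ hle1 hbα) hbβ
    refine ⟨N + 1, Fin.cons ((monomial Mα 1) - monomial Mβ 1) g,
      Fin.cons (monomial (α - Mα) 1) pc, ?_, ?_, ?_⟩
    · intro i
      refine Fin.cases ?_ ?_ i
      · exact hBQM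
      · exact hgmem
    · rw [Fin.sum_univ_succ]
      simp only [Fin.cons_zero, Fin.cons_succ]
      rw [hprod, ← hsum]
      ring
    · intro i
      refine Fin.cases ?_ ?_ i
      · intro hp0 δp δh hlp hlh
        have hδp : δp = α - Mα := isLM_monomial_one m hlp
        have hδh : δh = Mα := isLM_binomial m hMne hcmp hlh
        rw [hδp, hδh, hsplit]
        exact hbα
      · intro i hp δp δh hlp hlh
        exact hcond i hp δp δh hlp hlh
  · -- reduce β
    have hsplit : (β - Mβ) + Mβ = β := tsub_add_cancel_of_le hMβle
    have hprod : (monomial (β - Mβ) (1:R)) * ((monomial Mα 1) - monomial Mβ 1)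
        = monomial ((β - Mβ) + Mα) 1 - monomial β 1 := by
      rw [mul_sub, monomial_mul, monomial_mul, one_mul, hsplit]
    have hle1 : m.le ((β - Mβ) + Mα) β := by
      have h0 := m.add_right Mα Mβ (β - Mβ) hcmp
      rw [add_comm Mα (β - Mβ), add_comm Mβ (β - Mβ), hsplit] at h0
      exact h0
    have hne1 : (β - Mβ) + Mα ≠ β := by
      intro he
      exact hMne (add_left_cancel (he.trans hsplit.symm))
    have hrow1 : rowC ((β - Mβ) + Mα) = rowC β := by
      calc rowC ((β - Mβ) + Mα) = rowC (β - Mβ) + rowC Mα := rowC_add _ _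
        _ = rowC (β - Mβ) + rowC Mβ := by rw [hMrow]
        _ = rowC ((β - Mβ) + Mβ) := (rowC_add _ _).symm
        _ = rowC β := by rw [hsplit]
    have hcol1 : colC ((β - Mβ) + Mα) = colC β := by
      calc colC ((β - Mβ) + Mα) = colC (β - Mβ) + colC Mα := colC_add _ _
        _ = colC (β - Mβ) + colC Mβ := by rw [hMcol]
        _ = colC ((β - Mβ) + Mβ) := (colC_add _ _).symm
        _ = colC β := by rw [hsplit]
    obtain ⟨N, g, pc, hgmem, hsum, hcond⟩ :=
      ih (α, (β - Mβ) + Mα) (Prod.Lex.right _ ⟨hle1, hne1⟩) bound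
        (hrowe.trans hrow1.symm) (hcole.trans hcol1.symm)
        hbα (m.trans _ _ _ hle1 hbβ)
    refine ⟨N + 1, Fin.cons ((monomial Mα 1) - monomial Mβ 1) g,
      Fin.cons (monomial (β - Mβ) 1) pc, ?_, ?_, ?_⟩
    · intro i
      refine Fin.cases ?_ ?_ i
      · exact hBQM
      · exact hgmem
    · rw [Fin.sum_univ_succ]
      simp only [Fin.cons_zero, Fin.cons_succ]
      rw [hprod, ← hsum]
      ring
    · intro i
      refine Fin.cases ?_ ?_ i
      · intro hp0 δp δh hlp hlh
        have hδp : δp = β - Mβ := isLM_monomial_one m hlp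
        have hδh : δh = Mβ := isLM_binomial' m hMne hcmp hlh
        rw [hδp, hδh, hsplit]
        exact hbβ
      · intro i hp δp δh hlp hlh
        exact hcond i hp δp δh hlp hlh

end Key

/-- Let `f = V₁⋯V_n − W₁⋯W_n` (`n ≥ 2`) and `g = Y₁⋯Y_m − Z₁⋯Z_m` be binary quasi-minors
of a generic quasi-matrix, with leading terms `V₁⋯V_n` and `Y₁⋯Y_m`. Then for any monomial
order the `S`-polynomial `S(f,g)` reduces to zero modulo the set of all binary quasi-minors. -/
theorem stmt9 {R : Type*} [CommRing R] {p q : ℕ} (P : Set (Fin p × Fin q))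
    (m : MonomialOrd P)
    {nf ng : ℕ} (hnf : 2 ≤ nf)
    (ρf : Fin nf ↪ Fin p) (γf : Fin nf ↪ Fin q) (σf τf : Equiv.Perm (Fin nf))
    (V W : Fin nf → MvPolynomial P R)
    (hστf : ∀ l, σf l ≠ τf l)
    (hV : ∀ l, genEntries R P (ρf l) (γf (σf l)) = some (V l))
    (hW : ∀ l, genEntries R P (ρf l) (γf (τf l)) = some (W l))
    (ρg : Fin ng ↪ Fin p) (γg : Fin ng ↪ Fin q) (σg τg : Equiv.Perm (Fin ng))
    (Y Z : Fin ng → MvPolynomial P R)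
    (hστg : ∀ l, σg l ≠ τg l)
    (hY : ∀ l, genEntries R P (ρg l) (γg (σg l)) = some (Y l))
    (hZ : ∀ l, genEntries R P (ρg l) (γg (τg l)) = some (Z l))
    (f g : MvPolynomial P R)
    (hf : f = ∏ l, V l - ∏ l, W l) (hg : g = ∏ l, Y l - ∏ l, Z l)
    (δf δg : P →₀ ℕ) (hlmf : IsLM m f δf) (hlmg : IsLM m g δg)
    (hltf : MvPolynomial.monomial δf (MvPolynomial.coeff δf f) = ∏ l, V l)
    (hltg : MvPolynomial.monomial δg (MvPolynomial.coeff δg g) = ∏ l, Y l) :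
    RedZero m {x | IsBinQM (genEntries R P) x}
      (MvPolynomial.monomial ((δf ⊔ δg) - δf) 1 * f -
        MvPolynomial.monomial ((δf ⊔ δg) - δg) 1 * g) := by
  classical
  unfold RedZero
  rcases subsingleton_or_nontrivial R with hR | hR
  · exact ⟨0, Fin.elim0, Fin.elim0, 0, Or.inl ⟨Subsingleton.elim _ _, rfl⟩,
      fun i => i.elim0, Subsingleton.elim _ _, fun i => i.elim0⟩
  -- extract the variables underlying the entries
  have hV' : ∀ l, ∃ hm : (ρf l, γf (σf l)) ∈ P,
      V l = MvPolynomial.X ⟨(ρf l, γf (σf l)), hm⟩ := by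
    intro l
    have h := hV l
    rw [genEntries] at h
    split_ifs at h with hm
    exact ⟨hm, (Option.some_injective _ h).symm⟩
  choose hVmem hVX using hV'
  have hW' : ∀ l, ∃ hm : (ρf l, γf (τf l)) ∈ P,
      W l = MvPolynomial.X ⟨(ρf l, γf (τf l)), hm⟩ := by
    intro l
    have h := hW l
    rw [genEntries] at h
    split_ifs at h with hm
    exact ⟨hm, (Option.some_injective _ h).symm⟩
  choose hWmem hWX using hW'
  have hY' : ∀ l, ∃ hm : (ρg l, γg (σg l)) ∈ P,
      Y l = MvPolynomial.X ⟨(ρg l, γg (σg l)), hm⟩ := by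
    intro l
    have h := hY l
    rw [genEntries] at h
    split_ifs at h with hm
    exact ⟨hm, (Option.some_injective _ h).symm⟩
  choose hYmem hYX using hY'
  have hZ' : ∀ l, ∃ hm : (ρg l, γg (τg l)) ∈ P,
      Z l = MvPolynomial.X ⟨(ρg l, γg (τg l)), hm⟩ := by
    intro l
    have h := hZ l
    rw [genEntries] at h
    split_ifs at h with hm
    exact ⟨hm, (Option.some_injective _ h).symm⟩
  choose hZmem hZX using hZ'
  set dV := ∑ l, Finsupp.single (⟨(ρf l, γf (σf l)), hVmem l⟩ : ↥P) (1:ℕ) with hdV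
  set dW := ∑ l, Finsupp.single (⟨(ρf l, γf (τf l)), hWmem l⟩ : ↥P) (1:ℕ) with hdW
  set dY := ∑ l, Finsupp.single (⟨(ρg l, γg (σg l)), hYmem l⟩ : ↥P) (1:ℕ) with hdY
  set dZ := ∑ l, Finsupp.single (⟨(ρg l, γg (τg l)), hZmem l⟩ : ↥P) (1:ℕ) with hdZ
  have hprodV : (∏ l, V l) = monomial dV (1:R) := by
    rw [hdV, ← prod_monomial_one]
    exact Finset.prod_congr rfl fun l _ => by rw [hVX l]; rfl
  have hprodW : (∏ l, W l) = monomial dW (1:R) := by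
    rw [hdW, ← prod_monomial_one]
    exact Finset.prod_congr rfl fun l _ => by rw [hWX l]; rfl
  have hprodY : (∏ l, Y l) = monomial dY (1:R) := by
    rw [hdY, ← prod_monomial_one]
    exact Finset.prod_congr rfl fun l _ => by rw [hYX l]; rfl
  have hprodZ : (∏ l, Z l) = monomial dZ (1:R) := by
    rw [hdZ, ← prod_monomial_one]
    exact Finset.prod_congr rfl fun l _ => by rw [hZX l]; rfl
  have hδf : δf = dV := by
    by_contra hne
    have h1 := hltf
    rw [hprodV] at h1
    have h2 := congrArg (MvPolynomial.coeff dV) h1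
    rw [MvPolynomial.coeff_monomial, MvPolynomial.coeff_monomial, if_neg hne, if_pos rfl] at h2
    exact one_ne_zero h2.symm
  have hδg : δg = dY := by
    by_contra hne
    have h1 := hltg
    rw [hprodY] at h1
    have h2 := congrArg (MvPolynomial.coeff dY) h1
    rw [MvPolynomial.coeff_monomial, MvPolynomial.coeff_monomial, if_neg hne, if_pos rfl] at h2
    exact one_ne_zero h2.symm
  have hfb : f = monomial δf 1 - monomial dW 1 := by rw [hδf, hf, hprodV, hprodW]
  have hgb : g = monomial δg 1 - monomial dZ 1 := by rw [hδg, hg, hprodY, hprodZ]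
  have hSeq : monomial ((δf ⊔ δg) - δf) (1:R) * f - monomial ((δf ⊔ δg) - δg) 1 * g
      = monomial (((δf ⊔ δg) - δg) + dZ) 1 - monomial (((δf ⊔ δg) - δf) + dW) 1 := by
    rw [hfb, hgb, mul_sub, mul_sub, monomial_mul, monomial_mul, monomial_mul, monomial_mul,
      one_mul,
      tsub_add_cancel_of_le (le_sup_left : δf ≤ δf ⊔ δg),
      tsub_add_cancel_of_le (le_sup_right : δg ≤ δf ⊔ δg)]
    ring
  -- row and column counts
  have hrVW : rowC dV = rowC dW := by
    rw [hdV, hdW]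
    exact rowC_eq_of_maps _ _ ρf (fun l => rfl) (fun l => rfl)
  have hcVW : colC dV = colC dW := by
    rw [hdV, hdW]
    refine colC_eq_of_maps _ _ (fun k => γf (σf k)) (σf⁻¹ * τf) (fun l => rfl) (fun l => ?_)
    show γf (τf l) = γf (σf ((σf⁻¹ * τf) l))
    rw [Equiv.Perm.mul_apply, Equiv.Perm.inv_def, Equiv.apply_symm_apply]
  have hrZY : rowC dZ = rowC dY := by
    rw [hdZ, hdY]
    exact rowC_eq_of_maps _ _ ρg (fun l => rfl) (fun l => rfl)
  have hcZY : colC dZ = colC dY := by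
    rw [hdZ, hdY]
    refine colC_eq_of_maps _ _ (fun k => γg (τg k)) (τg⁻¹ * σg) (fun l => rfl) (fun l => ?_)
    show γg (σg l) = γg (τg ((τg⁻¹ * σg) l))
    rw [Equiv.Perm.mul_apply, Equiv.Perm.inv_def, Equiv.apply_symm_apply]
  have hcancelp : ∀ (u v w : Fin p →₀ ℕ), u + w = v + w → u = v := by
    intro u v w h
    ext i
    have := congrArg (fun d => d i) h
    simp only [Finsupp.add_apply] at this
    omega
  have hcancelq : ∀ (u v w : Fin q →₀ ℕ), u + w = v + w → u = v := by
    intro u v w h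
    ext i
    have := congrArg (fun d => d i) h
    simp only [Finsupp.add_apply] at this
    omega
  have e2 : ((δf ⊔ δg) - δg) + δg = δf ⊔ δg := tsub_add_cancel_of_le le_sup_right
  have e1 : ((δf ⊔ δg) - δf) + δf = δf ⊔ δg := tsub_add_cancel_of_le le_sup_left
  have hrowA : rowC (((δf ⊔ δg) - δg) + dZ) = rowC (δf ⊔ δg) := by
    apply hcancelp _ _ (rowC δg)
    calc rowC (((δf ⊔ δg) - δg) + dZ) + rowC δg
        = rowC ((((δf ⊔ δg) - δg) + dZ) + δg) := (rowC_add _ _).symm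
      _ = rowC ((((δf ⊔ δg) - δg) + δg) + dZ) := by rw [add_right_comm]
      _ = rowC ((δf ⊔ δg) + dZ) := by rw [e2]
      _ = rowC (δf ⊔ δg) + rowC dZ := rowC_add _ _
      _ = rowC (δf ⊔ δg) + rowC δg := by rw [hrZY, ← hδg]
  have hrowB : rowC (((δf ⊔ δg) - δf) + dW) = rowC (δf ⊔ δg) := by
    apply hcancelp _ _ (rowC δf)
    calc rowC (((δf ⊔ δg) - δf) + dW) + rowC δf
        = rowC ((((δf ⊔ δg) - δf) + dW) + δf) := (rowC_add _ _).symm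
      _ = rowC ((((δf ⊔ δg) - δf) + δf) + dW) := by rw [add_right_comm]
      _ = rowC ((δf ⊔ δg) + dW) := by rw [e1]
      _ = rowC (δf ⊔ δg) + rowC dW := rowC_add _ _
      _ = rowC (δf ⊔ δg) + rowC δf := by rw [← hrVW, ← hδf]
  have hcolA : colC (((δf ⊔ δg) - δg) + dZ) = colC (δf ⊔ δg) := by
    apply hcancelq _ _ (colC δg)
    calc colC (((δf ⊔ δg) - δg) + dZ) + colC δg
        = colC ((((δf ⊔ δg) - δg) + dZ) + δg) := (colC_add _ _).symm
      _ = colC ((((δf ⊔ δg) - δg) + δg) + dZ) := by rw [add_right_comm]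
      _ = colC ((δf ⊔ δg) + dZ) := by rw [e2]
      _ = colC (δf ⊔ δg) + colC dZ := colC_add _ _
      _ = colC (δf ⊔ δg) + colC δg := by rw [hcZY, ← hδg]
  have hcolB : colC (((δf ⊔ δg) - δf) + dW) = colC (δf ⊔ δg) := by
    apply hcancelq _ _ (colC δf)
    calc colC (((δf ⊔ δg) - δf) + dW) + colC δf
        = colC ((((δf ⊔ δg) - δf) + dW) + δf) := (colC_add _ _).symm
      _ = colC ((((δf ⊔ δg) - δf) + δf) + dW) := by rw [add_right_comm]
      _ = colC ((δf ⊔ δg) + dW) := by rw [e1]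
      _ = colC (δf ⊔ δg) + colC dW := colC_add _ _
      _ = colC (δf ⊔ δg) + colC δf := by rw [← hcVW, ← hδf]
  rw [hSeq]
  set A := ((δf ⊔ δg) - δg) + dZ with hA
  set B := ((δf ⊔ δg) - δf) + dW with hB
  have hrowAB : rowC A = rowC B := hrowA.trans hrowB.symm
  have hcolAB : colC A = colC B := hcolA.trans hcolB.symm
  by_cases hABeq : A = B
  · refine ⟨0, Fin.elim0, Fin.elim0, 0, Or.inl ⟨by rw [hABeq]; exact sub_self _, rfl⟩,
      fun i => i.elim0, by rw [hABeq]; simp, fun i => i.elim0⟩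
  have hsupp : ∀ e, MvPolynomial.coeff e ((monomial A (1:R)) - monomial B 1) ≠ 0 →
      e = A ∨ e = B := by
    intro e he
    by_contra hn
    push_neg at hn
    rw [MvPolynomial.coeff_sub, MvPolynomial.coeff_monomial, MvPolynomial.coeff_monomial,
      if_neg (fun h => hn.1 h.symm), if_neg (fun h => hn.2 h.symm)] at he
    simp at he
  rcases m.total A B with hc | hc
  · -- B is the leading monomial
    have hcoB : MvPolynomial.coeff B ((monomial A (1:R)) - monomial B 1) = -1 := by
      rw [MvPolynomial.coeff_sub, MvPolynomial.coeff_monomial, MvPolynomial.coeff_monomial,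
        if_neg hABeq, if_pos rfl]
      ring
    have hIs : IsLM m ((monomial A (1:R)) - monomial B 1) B := by
      refine Or.inr ⟨by rw [hcoB]; exact neg_ne_zero.2 one_ne_zero, fun e he => ?_⟩
      rcases hsupp e (MvPolynomial.mem_support_iff.1 he) with rfl | rfl
      · exact hc
      · exact m.refl _
    obtain ⟨N, g', pc, hgmem, hsum, hcond⟩ :=
      key_decomp (R := R) m (A, B) B hrowAB hcolAB hc (m.refl B)
    exact ⟨N, g', pc, B, hIs, hgmem, hsum, hcond⟩
  · -- A is the leading monomial
    have hcoA : MvPolynomial.coeff A ((monomial A (1:R)) - monomial B 1) = 1 := by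
      rw [MvPolynomial.coeff_sub, MvPolynomial.coeff_monomial, MvPolynomial.coeff_monomial,
        if_pos rfl, if_neg (Ne.symm hABeq)]
      ring
    have hIs : IsLM m ((monomial A (1:R)) - monomial B 1) A := by
      refine Or.inr ⟨by rw [hcoA]; exact one_ne_zero, fun e he => ?_⟩
      rcases hsupp e (MvPolynomial.mem_support_iff.1 he) with rfl | rfl
      · exact m.refl _
      · exact hc
    obtain ⟨N, g', pc, hgmem, hsum, hcond⟩ :=
      key_decomp (R := R) m (A, B) A hrowAB hcolAB (m.refl A) hc
    exact ⟨N, g', pc, A, hIs, hgmem, hsum, hcond⟩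
end

section
/- With notation as in the theorem on the multi-Rees algebra, every binary quasi-minor of E_a involving one of the elements s_i (an s-binary quasi-minor) lies in the ideal generated by the 2×2 minors of E_a involving two of the s_i and the binary quasi-minors of E_a involving only the variables T_{l,j}. -/
open MvPolynomial

open MvPolynomial

/-- `s^j = ∏ i, s i ^ (j_{i+1} − j_i)` for a weakly increasing tuple
`j = (j_0, j_1, …, j_n)`. -/
def sPow {R : Type*} [CommRing R] {n : ℕ} (s : Fin n → R) (j : Fin (n + 1) → ℕ) : R :=
  ∏ i : Fin n, s i ^ (j i.succ - j i.castSucc)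

/-- `j ∈ F^l_a`: `j` is weakly increasing with `j 0 = 0`, `j n = a`, and the monomial
`s^j` lies in `I^a`. -/
def FMem {R : Type*} [CommRing R] {n : ℕ} (s : Fin n → R) (a : ℕ) (I : Ideal R)
    (j : Fin (n + 1) → ℕ) : Prop :=
  Monotone j ∧ j 0 = 0 ∧ j (Fin.last n) = a ∧ sPow s j ∈ I ^ a

/-- `j ∈ T'_a`: `j` is weakly increasing with `j 0 = 1` and `j n = a`. -/
def TMem' {n : ℕ} (a : ℕ) (j : Fin (n + 1) → ℕ) : Prop :=
  Monotone j ∧ j 0 = 1 ∧ j (Fin.last n) = a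

/-- `j^{|k⟩}`: decrease by `1` the entries `j_0, …, j_{k−1}` of `j ∈ T'_a` (indexed so that
row `k : Fin n` corresponds to the `(k+1)`-st member of the sequence). -/
def restr {n : ℕ} (j : Fin (n + 1) → ℕ) (k : Fin n) : Fin (n + 1) → ℕ :=
  fun i => if (i : ℕ) ≤ (k : ℕ) then j i - 1 else j i

/-- The variables `T_{l,j}` of the presentation of `R[I₁^{a₁}t₁,…,I_r^{a_r}t_r]`,
indexed by `l` and the monomial generators `s^j` of `I_l^{a_l}`. -/
def ReesVars {R : Type*} [CommRing R] (n r : ℕ) (s : Fin n → R) (a : Fin r → ℕ)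
    (G : Fin r → Set (Fin n)) : Type _ :=
  (l : Fin r) × {j : Fin (n + 1) → ℕ // FMem s (a l) (Ideal.span (s '' G l)) j}

open Classical in
/-- The quasi-matrix `E_a = (s | D_{a₁} | … | D_{a_r})`: the first column holds
`s_1, …, s_n`; the column indexed by `(l, j')` with `j' ∈ T'_{a_l}` has the entry
`T_{l, j'^{|k⟩}}` in row `k` whenever `s^{j'^{|k⟩}} ∈ I_l^{a_l}`. -/
noncomputable def reesEntries {R : Type*} [CommRing R] (n r : ℕ) (s : Fin n → R)
    (a : Fin r → ℕ) (G : Fin r → Set (Fin n)) :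
    Fin n → (Unit ⊕ ((l : Fin r) × {j : Fin (n + 1) → ℕ // TMem' (a l) j})) →
      Option (MvPolynomial (ReesVars n r s a G) R) :=
  fun k c =>
    Sum.elim (fun _ => some (C (s k)))
      (fun d =>
        if h : FMem s (a d.1) (Ideal.span (s '' G d.1)) (restr d.2.1 k) then
          some (X ⟨d.1, restr d.2.1 k, h⟩)
        else none) c


/-- An `s`-binary quasi-minor of a quasi-matrix whose first (distinguished) column is the
`Unit` summand: a binary quasi-minor one of whose chosen columns is the `s`-column. -/
def IsSBinQM {S : Type*} [CommRing S] {ι κ : Type*} (e : ι → (Unit ⊕ κ) → Option S)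
    (x : S) : Prop :=
  ∃ (nn : ℕ) (ρ : Fin nn ↪ ι) (γ : Fin nn ↪ (Unit ⊕ κ)) (σ τ : Equiv.Perm (Fin nn))
    (v w : Fin nn → S),
    (∀ l, σ l ≠ τ l) ∧ (∀ l, e (ρ l) (γ (σ l)) = some (v l)) ∧
    (∀ l, e (ρ l) (γ (τ l)) = some (w l)) ∧
    (∃ l₀, γ l₀ = Sum.inl ()) ∧
    x = ∏ l, v l - ∏ l, w l

/-- A `T`-binary quasi-minor: a binary quasi-minor all of whose chosen columns avoid the
`s`-column, so it involves only the variables `T_{l,j}`. -/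
def IsTBinQM {S : Type*} [CommRing S] {ι κ : Type*} (e : ι → (Unit ⊕ κ) → Option S)
    (x : S) : Prop :=
  ∃ (nn : ℕ) (ρ : Fin nn ↪ ι) (γ : Fin nn ↪ (Unit ⊕ κ)) (σ τ : Equiv.Perm (Fin nn))
    (v w : Fin nn → S),
    (∀ l, σ l ≠ τ l) ∧ (∀ l, e (ρ l) (γ (σ l)) = some (v l)) ∧
    (∀ l, e (ρ l) (γ (τ l)) = some (w l)) ∧
    (∀ l, ∃ d, γ l = Sum.inr d) ∧
    x = ∏ l, v l - ∏ l, w l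

section AuxQM

variable {S : Type*} [CommRing S] {ι κ : Type*}

/-- `s`-binary quasi-minor with an arbitrary finite index type. -/
def IsSBinQMAux (e : ι → (Unit ⊕ κ) → Option S) (L : Type) [Fintype L] (x : S) : Prop :=
  ∃ (ρ : L ↪ ι) (γ : L ↪ (Unit ⊕ κ)) (σ τ : Equiv.Perm L) (v w : L → S),
    (∀ l, σ l ≠ τ l) ∧ (∀ l, e (ρ l) (γ (σ l)) = some (v l)) ∧
    (∀ l, e (ρ l) (γ (τ l)) = some (w l)) ∧
    (∃ l₀, γ l₀ = Sum.inl ()) ∧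
    x = ∏ l, v l - ∏ l, w l

/-- `T`-binary quasi-minor with an arbitrary finite index type. -/
def IsTBinQMAux (e : ι → (Unit ⊕ κ) → Option S) (L : Type) [Fintype L] (x : S) : Prop :=
  ∃ (ρ : L ↪ ι) (γ : L ↪ (Unit ⊕ κ)) (σ τ : Equiv.Perm L) (v w : L → S),
    (∀ l, σ l ≠ τ l) ∧ (∀ l, e (ρ l) (γ (σ l)) = some (v l)) ∧
    (∀ l, e (ρ l) (γ (τ l)) = some (w l)) ∧
    (∀ l, ∃ d, γ l = Sum.inr d) ∧
    x = ∏ l, v l - ∏ l, w l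

lemma isTBinQM_of_aux {e : ι → (Unit ⊕ κ) → Option S} {L : Type} [Fintype L] {x : S}
    (h : IsTBinQMAux e L x) : IsTBinQM e x := by
  obtain ⟨ρ, γ, σ, τ, v, w, h1, h2, h3, h4, h5⟩ := h
  let q := Fintype.equivFin L
  refine ⟨Fintype.card L, q.symm.toEmbedding.trans ρ, q.symm.toEmbedding.trans γ,
    q.permCongr σ, q.permCongr τ, v ∘ q.symm, w ∘ q.symm, ?_, ?_, ?_, ?_, ?_⟩
  · intro l hl
    simp only [Equiv.permCongr_apply] at hl
    exact h1 (q.symm l) (q.injective hl)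
  · intro l
    simpa [Equiv.permCongr_apply] using h2 (q.symm l)
  · intro l
    simpa [Equiv.permCongr_apply] using h3 (q.symm l)
  · intro l
    exact h4 (q.symm l)
  · rw [h5]
    congr 1 <;> exact (Equiv.prod_comp q.symm _).symm

lemma sbinAux_mem (e : ι → (Unit ⊕ κ) → Option S) (f : ι → S)
    (hf : ∀ i, e i (Sum.inl ()) = some (f i)) (I : Ideal S)
    (hgen1 : ∀ i i', i ≠ i' → ∀ (c : κ) (v w : S), e i (Sum.inr c) = some v →
      e i' (Sum.inr c) = some w → f i * w - f i' * v ∈ I)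
    (hgen2 : ∀ y : S, IsTBinQM e y → y ∈ I) :
    ∀ (N : ℕ) (L : Type) [Fintype L], Fintype.card L = N →
      ∀ x : S, IsSBinQMAux e L x → x ∈ I := by
  intro N
  induction N using Nat.strong_induction_on with
  | _ N ih =>
  intro L _ hcard x hx
  classical
  obtain ⟨ρ, γ, σ, τ, v, w, hστ, hv, hw, ⟨l₀, hl₀⟩, hxeq⟩ := hx
  set l₁ := σ.symm l₀ with hl₁def
  set l₂ := τ.symm l₀ with hl₂def
  have hσl₁ : σ l₁ = l₀ := σ.apply_symm_apply l₀
  have hτl₂ : τ l₂ = l₀ := τ.apply_symm_apply l₀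
  have hl₁₂ : l₁ ≠ l₂ := by
    intro h
    exact hστ l₁ (by rw [hσl₁, h, hτl₂])
  have hv₁ : v l₁ = f (ρ l₁) := by
    have h := hv l₁
    rw [hσl₁, hl₀, hf] at h
    exact (Option.some.inj h).symm
  set m₁ := τ l₁ with hm₁def
  have hm₁ : m₁ ≠ l₀ := by
    intro h
    exact hl₁₂ (by rw [hl₂def, ← h, hm₁def, Equiv.symm_apply_apply])
  obtain ⟨c, hc⟩ : ∃ c, γ m₁ = Sum.inr c := by
    cases hgc : γ m₁ with
    | inl u => cases u; exact absurd (γ.injective (hgc.trans hl₀.symm)) hm₁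
    | inr c => exact ⟨c, rfl⟩
  set l₁' := σ.symm m₁ with hl₁'def
  have hσl₁' : σ l₁' = m₁ := σ.apply_symm_apply m₁
  have hl₁'₁ : l₁' ≠ l₁ := by
    intro h
    exact hm₁ (by rw [← hσl₁', h, hσl₁])
  have hwl₁ : e (ρ l₁) (Sum.inr c) = some (w l₁) := by
    rw [← hc, hm₁def]; exact hw l₁
  have hvl₁' : e (ρ l₁') (Sum.inr c) = some (v l₁') := by
    rw [← hc, ← hσl₁']; exact hv l₁'
  have hg : f (ρ l₁') * w l₁ - f (ρ l₁) * v l₁' ∈ I :=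
    hgen1 _ _ (fun h => hl₁'₁ (ρ.injective h)) c _ _ hvl₁' hwl₁
  have hl₁'mem : l₁' ∈ Finset.univ.erase l₁ :=
    Finset.mem_erase.mpr ⟨hl₁'₁, Finset.mem_univ _⟩
  have hprodv : ∏ l, v l =
      f (ρ l₁) * (v l₁' * ∏ l ∈ (Finset.univ.erase l₁).erase l₁', v l) := by
    rw [← Finset.mul_prod_erase Finset.univ v (Finset.mem_univ l₁), hv₁,
      ← Finset.mul_prod_erase _ v hl₁'mem]
  have hprodw : ∏ l, w l = w l₁ * ∏ l ∈ Finset.univ.erase l₁, w l :=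
    (Finset.mul_prod_erase Finset.univ w (Finset.mem_univ l₁)).symm
  have key : x = w l₁ * (f (ρ l₁') * (∏ l ∈ (Finset.univ.erase l₁).erase l₁', v l)
        - ∏ l ∈ Finset.univ.erase l₁, w l)
      - (∏ l ∈ (Finset.univ.erase l₁).erase l₁', v l)
        * (f (ρ l₁') * w l₁ - f (ρ l₁) * v l₁') := by
    rw [hxeq, hprodv, hprodw]; ring
  rw [key]
  refine sub_mem (Ideal.mul_mem_left _ _ ?_) (Ideal.mul_mem_left _ _ hg)
  by_cases hB : l₁' = l₂
  · -- degenerate case: the remainder is `f (ρ l₂)` times a `T`-binary quasi-minor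
    have hσl₂ : σ l₂ = m₁ := by rw [← hB, hσl₁']
    have hw₂ : w l₂ = f (ρ l₂) := by
      have h := hw l₂
      rw [hτl₂, hl₀, hf] at h
      exact (Option.some.inj h).symm
    have hl₂mem : l₂ ∈ Finset.univ.erase l₁ :=
      Finset.mem_erase.mpr ⟨fun h => hl₁₂ h.symm, Finset.mem_univ _⟩
    have hQ : ∏ l ∈ Finset.univ.erase l₁, w l =
        f (ρ l₂) * ∏ l ∈ (Finset.univ.erase l₁).erase l₂, w l := by
      rw [← Finset.mul_prod_erase _ w hl₂mem, hw₂]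
    have hmem : ∀ l : L, l ∈ (Finset.univ.erase l₁).erase l₂ ↔ (l ≠ l₁ ∧ l ≠ l₂) := by
      intro l
      simp only [Finset.mem_erase, Finset.mem_univ, and_true]
      tauto
    have hπ1 : ∀ l : L, σ.symm (τ l) = l₁ ↔ l = l₂ := fun l => by
      rw [Equiv.symm_apply_eq, hσl₁, ← hτl₂, Equiv.apply_eq_iff_eq]
    have hπ2 : ∀ l : L, σ.symm (τ l) = l₂ ↔ l = l₁ := fun l => by
      rw [Equiv.symm_apply_eq, hσl₂, hm₁def, Equiv.apply_eq_iff_eq]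
    have hπ : ∀ l : L, (l ≠ l₁ ∧ l ≠ l₂) ↔
        ((τ.trans σ.symm) l ≠ l₁ ∧ (τ.trans σ.symm) l ≠ l₂) := by
      intro l
      simp only [Ne, Equiv.trans_apply, hπ1, hπ2]
      tauto
    have hT : IsTBinQM e ((∏ l ∈ (Finset.univ.erase l₁).erase l₂, v l)
        - ∏ l ∈ (Finset.univ.erase l₁).erase l₂, w l) := by
      apply isTBinQM_of_aux (L := {l : L // l ≠ l₁ ∧ l ≠ l₂})
      refine ⟨(Function.Embedding.subtype _).trans ρ,
        (Function.Embedding.subtype _).trans (σ.toEmbedding.trans γ),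
        Equiv.refl _, Equiv.Perm.subtypePerm (τ.trans σ.symm) (fun l => (hπ l).symm),
        fun l => v l, fun l => w l, ?_, ?_, ?_, ?_, ?_⟩
      · rintro ⟨l, hl⟩ hEq
        have h2 : l = σ.symm (τ l) := congrArg Subtype.val hEq
        have h3 : σ l = τ l := by
          conv_lhs => rw [h2]
          rw [Equiv.apply_symm_apply]
        exact hστ l h3
      · rintro ⟨l, hl⟩
        exact hv l
      · rintro ⟨l, hl⟩
        show e (ρ l) (γ (σ (σ.symm (τ l)))) = some (w l)
        rw [Equiv.apply_symm_apply]
        exact hw l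
      · rintro ⟨l, hl1, hl2⟩
        show ∃ d, γ (σ l) = Sum.inr d
        cases hgc : γ (σ l) with
        | inl u =>
          cases u
          exact absurd (by rw [hl₁def, ← γ.injective (hgc.trans hl₀.symm),
            Equiv.symm_apply_apply]) (Ne.symm hl1)
        | inr d => exact ⟨d, rfl⟩
      · show _ = (∏ l : {l : L // l ≠ l₁ ∧ l ≠ l₂}, v l) -
          ∏ l : {l : L // l ≠ l₁ ∧ l ≠ l₂}, w l
        rw [← Finset.prod_subtype _ hmem v, ← Finset.prod_subtype _ hmem w]
    rw [hB, hQ]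
    have heq : f (ρ l₂) * (∏ l ∈ (Finset.univ.erase l₁).erase l₂, v l)
        - f (ρ l₂) * ∏ l ∈ (Finset.univ.erase l₁).erase l₂, w l
        = f (ρ l₂) * ((∏ l ∈ (Finset.univ.erase l₁).erase l₂, v l)
          - ∏ l ∈ (Finset.univ.erase l₁).erase l₂, w l) := by ring
    rw [heq]
    exact Ideal.mul_mem_left _ _ (hgen2 _ hT)
  · -- main case: a smaller `s`-binary quasi-minor; use the inductive hypothesis
    have hcard' : Fintype.card {l : L // l ≠ l₁} < N := by
      rw [← hcard]
      exact Fintype.card_subtype_lt (x := l₁) (by simp)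
    set σh : Equiv.Perm L := (Equiv.swap l₁ l₁').trans σ with hσhdef
    have hσhl₁ : σh l₁ = m₁ := by
      show σ (Equiv.swap l₁ l₁' l₁) = m₁
      rw [Equiv.swap_apply_left, hσl₁']
    have hσhl₁' : σh l₁' = l₀ := by
      show σ (Equiv.swap l₁ l₁' l₁') = l₀
      rw [Equiv.swap_apply_right, hσl₁]
    have hσh : ∀ l : L, l ≠ l₁ → l ≠ l₁' → σh l = σ l := by
      intro l h1 h2
      show σ (Equiv.swap l₁ l₁' l) = σ l
      rw [Equiv.swap_apply_of_ne_of_ne h1 h2]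
    have hπ1 : ∀ l : L, σh.symm (τ l) = l₁ ↔ l = l₁ := fun l => by
      rw [Equiv.symm_apply_eq, hσhl₁, hm₁def, Equiv.apply_eq_iff_eq]
    have hπ : ∀ l : L, (l ≠ l₁) ↔ ((τ.trans σh.symm) l ≠ l₁) := by
      intro l
      simp only [Ne, Equiv.trans_apply, hπ1]
    have hmem' : ∀ l : L, l ∈ Finset.univ.erase l₁ ↔ l ≠ l₁ := by
      intro l
      simp [Finset.mem_erase]
    refine ih _ hcard' {l : L // l ≠ l₁} rfl _
      ⟨(Function.Embedding.subtype _).trans ρ,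
        (Function.Embedding.subtype _).trans (σh.toEmbedding.trans γ),
        Equiv.refl _, Equiv.Perm.subtypePerm (τ.trans σh.symm) (fun l => (hπ l).symm),
        (fun l => if (l : L) = l₁' then f (ρ l₁') else v l), fun l => w l,
        ?_, ?_, ?_, ?_, ?_⟩
    · rintro ⟨l, hl⟩ hEq
      have h2 : l = σh.symm (τ l) := congrArg Subtype.val hEq
      have h3 : σh l = τ l := by
        conv_lhs => rw [h2]
        rw [Equiv.apply_symm_apply]
      by_cases hll : l = l₁'
      · rw [hll, hσhl₁'] at h3
        exact hB (by rw [hl₂def, h3, Equiv.symm_apply_apply])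
      · rw [hσh l hl hll] at h3
        exact hστ l h3
    · rintro ⟨l, hl⟩
      show e (ρ l) (γ (σh l)) = some (if l = l₁' then f (ρ l₁') else v l)
      by_cases hll : l = l₁'
      · rw [if_pos hll, hll, hσhl₁', hl₀, hf]
      · rw [if_neg hll, hσh l hl hll]
        exact hv l
    · rintro ⟨l, hl⟩
      show e (ρ l) (γ (σh (σh.symm (τ l)))) = some (w l)
      rw [Equiv.apply_symm_apply]
      exact hw l
    · exact ⟨⟨l₁', hl₁'₁⟩, by show γ (σh l₁') = Sum.inl (); rw [hσhl₁']; exact hl₀⟩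
    · show _ = (∏ l : {l : L // l ≠ l₁}, if (l : L) = l₁' then f (ρ l₁') else v l) -
        ∏ l : {l : L // l ≠ l₁}, w l
      have hifprod : (∏ a ∈ Finset.univ.erase l₁, if a = l₁' then f (ρ l₁') else v a)
          = f (ρ l₁') * ∏ l ∈ (Finset.univ.erase l₁).erase l₁', v l := by
        rw [← Finset.mul_prod_erase _ _ hl₁'mem]
        simp only [if_pos (rfl : l₁' = l₁')]
        exact congrArg _ (Finset.prod_congr rfl fun l hl =>
          if_neg (Finset.mem_erase.mp hl).1)
      rw [← Finset.prod_subtype _ hmem' (fun l => if l = l₁' then f (ρ l₁') else v l),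
        ← Finset.prod_subtype _ hmem' w, hifprod]

end AuxQM

/-- Every `s`-binary quasi-minor of `E_a` lies in the ideal generated by the `2 × 2` minors
of `E_a` involving two of the `s_i` together with the `T`-binary quasi-minors of `E_a`. -/
theorem stmt13 {R : Type*} [CommRing R] [IsNoetherianRing R] {n r : ℕ}
    (s : Fin n → R) (hs : IsPermWeakRegSeq s) (hnu : ∀ i, ¬ IsUnit (s i))
    (a : Fin r → ℕ) (ha : ∀ l, 0 < a l) (G : Fin r → Set (Fin n))
    (x : MvPolynomial (ReesVars n r s a G) R)
    (hx : IsSBinQM (reesEntries n r s a G) x) :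
    x ∈ Ideal.span
      ({y | ∃ i i' : Fin n, i ≠ i' ∧
          ∃ (c : (l : Fin r) × {j : Fin (n + 1) → ℕ // TMem' (a l) j})
            (v w : MvPolynomial (ReesVars n r s a G) R),
            reesEntries n r s a G i (Sum.inr c) = some v ∧
            reesEntries n r s a G i' (Sum.inr c) = some w ∧
            y = C (s i) * w - C (s i') * v} ∪
        {y | IsTBinQM (reesEntries n r s a G) y}) := by
  obtain ⟨nn, ρ, γ, σ, τ, v, w, h1, h2, h3, h4, h5⟩ := hx
  refine sbinAux_mem (reesEntries n r s a G) (fun i => C (s i)) (fun i => rfl) _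
    ?_ ?_ nn (Fin nn) (Fintype.card_fin nn) x ⟨ρ, γ, σ, τ, v, w, h1, h2, h3, h4, h5⟩
  · intro i i' hii c v' w' hv' hw'
    exact Ideal.subset_span (Or.inl ⟨i, i', hii, c, v', w', hv', hw', rfl⟩)
  · intro y hy
    exact Ideal.subset_span (Or.inr hy)
end
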